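/- arXiv:math/0210354 — 5 statements merged into one kernel-verified Lean document; each statement's English description precedes it below -/
import Mathlib

section
/- Every ω-precompact, sequentially h-complete Hausdorff topological group of countable pseudocharacter is totally minimal and metrizable. -/
open Topology Pointwise

universe u

section Defs
variable (G : Type u) [Group G] [TopologicalSpace G] [IsTopologicalGroup G]

/-- Sequential completeness w.r.t. the canonical group uniformity. -/
def SeqComplete : Prop :=
  letI := IsTopologicalGroup.rightUniformSpace G
  ∀ u : ℕ → G, CauchySeq u → ∃ x, Filter.Tendsto u Filter.atTop (𝓝 x)

/-- `G` is sequentially h-complete: every continuous homomorphic image is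
sequentially complete. -/
def SeqHComplete : Prop :=
  ∀ (H : Type u) [Group H] [TopologicalSpace H] [IsTopologicalGroup H] [T2Space H]
    (f : G →* H), Continuous f → Function.Surjective f → SeqComplete H

/-- `G` is ω-precompact. -/
def OmegaPrecompact : Prop :=
  ∀ U ∈ 𝓝 (1 : G), ∃ F : Set G, F.Countable ∧ U * F = Set.univ

/-- `G` has countable pseudocharacter. -/
def CountablePseudocharacter : Prop :=
  ∃ s : ℕ → Set G, (∀ n, IsOpen (s n)) ∧ (⋂ n, s n) = ({1} : Set G)

/-- `G` is precompact. -/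
def GroupPrecompact : Prop :=
  ∀ U ∈ 𝓝 (1 : G), ∃ F : Set G, F.Finite ∧ U * F = Set.univ

/-- `G` is h-complete: every continuous homomorphic image is complete. -/
def HComplete : Prop :=
  ∀ (H : Type u) [Group H] [TopologicalSpace H] [IsTopologicalGroup H] [T2Space H]
    (f : G →* H), Continuous f → Function.Surjective f →
      letI := IsTopologicalGroup.rightUniformSpace H
      CompleteSpace H

/-- `G` is maximally almost periodic. -/
def MAP : Prop :=
  ∃ (K : Type u) (_ : Group K) (_ : TopologicalSpace K),
    ∃ (_ : IsTopologicalGroup K) (_ : T2Space K) (_ : CompactSpace K),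
      ∃ f : G →* K, Continuous f ∧ Function.Injective f

/-- `G` is minimally almost periodic. -/
def MinAP : Prop :=
  ∀ (K : Type u) [Group K] [TopologicalSpace K] [IsTopologicalGroup K] [T2Space K]
    [CompactSpace K] (f : G →* K), Continuous f → ∀ g : G, f g = 1

/-- `G` is c-compact. -/
def CCompact : Prop :=
  ∀ (H : Type u) [Group H] [TopologicalSpace H] [IsTopologicalGroup H] [T2Space H]
    (S : Subgroup (G × H)), IsClosed (S : Set (G × H)) →
      IsClosed ((S.map (MonoidHom.snd G H) : Subgroup H) : Set H)

/-- `G` is totally minimal. -/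
def TotallyMinimal : Prop :=
  ∀ (H : Type u) [Group H] [TopologicalSpace H] [IsTopologicalGroup H] [T2Space H]
    (f : G →* H), Continuous f → Function.Surjective f → IsOpenMap f

/-- `G` is minimal. -/
def MinimalGroup : Prop :=
  ∀ (H : Type u) [Group H] [TopologicalSpace H] [IsTopologicalGroup H] [T2Space H]
    (f : G →* H), Continuous f → Function.Bijective f → IsOpenMap f

end Defs

/-- `X` has a countable network. -/
def HasCountableNetwork (X : Type u) [TopologicalSpace X] : Prop :=
  ∃ N : Set (Set X), N.Countable ∧ ∀ U : Set X, IsOpen U → ∃ S ⊆ N, ⋃₀ S = U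

set_option linter.unusedSectionVars false

section AuxSection
open Filter Set
namespace Stmt5Aux

variable {G : Type u} [Group G] [TopologicalSpace G] [IsTopologicalGroup G]

/-- Definitions copied (local) to state things; real ones come from main file.  -/
def OmegaPre (G : Type u) [Group G] [TopologicalSpace G] : Prop :=
  ∀ U ∈ 𝓝 (1 : G), ∃ F : Set G, F.Countable ∧ U * F = Set.univ

lemma exists_sym_sq (U : Set G) (hU : U ∈ 𝓝 (1:G)) :
    ∃ V : Set G, IsOpen V ∧ (1:G) ∈ V ∧ V⁻¹ = V ∧ V * V ⊆ U := by
  obtain ⟨W, hWo, hW1, hWU⟩ := exists_open_nhds_one_mul_subset hU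
  refine ⟨W ∩ W⁻¹, hWo.inter hWo.inv, ⟨hW1, by simpa using hW1⟩, ?_, ?_⟩
  · simp [Set.inter_inv, Set.inter_comm]
  · exact (Set.mul_subset_mul Set.inter_subset_left Set.inter_subset_left).trans hWU

lemma sym_mem_nhds {V : Set G} (h : IsOpen V ∧ (1:G) ∈ V ∧ V⁻¹ = V) : V ∈ 𝓝 (1:G) :=
  h.1.mem_nhds h.2.1

lemma subset_of_sq {V U : Set G} (h1 : (1:G) ∈ V) (h : V * V ⊆ U) : V ⊆ U := by
  intro x hx
  exact h ⟨1, h1, x, hx, one_mul x⟩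

/-- symmetric open cube-small neighborhood avoiding conjugation by a finite set. -/
lemma exists_sym_cube_conj (U : Set G) (hU : U ∈ 𝓝 (1:G)) (S : Finset G) :
    ∃ V : Set G, IsOpen V ∧ (1:G) ∈ V ∧ V⁻¹ = V ∧ V * V * V ⊆ U ∧
      ∀ s ∈ S, (fun x => s * x * s⁻¹) '' V ⊆ U := by
  -- first a cube-small symmetric C
  obtain ⟨C1, hC1o, hC11, hC1s, hC1U⟩ := exists_sym_sq U hU
  obtain ⟨C, hCo, hC1, hCs, hCC⟩ := exists_sym_sq C1 (hC1o.mem_nhds hC11)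
  have hCsub : C ⊆ C1 := subset_of_sq hC1 hCC
  have hcube : C * C * C ⊆ U := by
    calc C * C * C ⊆ C1 * C1 := Set.mul_subset_mul hCC hCsub
    _ ⊆ U := hC1U
  -- conjugation preimages
  have hconj : ∀ s : G, (fun x => s * x * s⁻¹) ⁻¹' U ∈ 𝓝 (1:G) := by
    intro s
    have hc : Continuous (fun x : G => s * x * s⁻¹) := by continuity
    have h1 : (fun x : G => s * x * s⁻¹) 1 = 1 := by group
    have h2 : Filter.Tendsto (fun x : G => s * x * s⁻¹) (𝓝 1) (𝓝 1) := by
      have h3 : Filter.Tendsto (fun x : G => s * x * s⁻¹) (𝓝 1) (𝓝 ((fun x : G => s * x * s⁻¹) 1)) :=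
        (hc.tendsto 1)
      rwa [h1] at h3
    exact h2 hU
  have hW : (C ∩ ⋂ s ∈ S, (fun x => s * x * s⁻¹) ⁻¹' U) ∈ 𝓝 (1:G) := by
    refine Filter.inter_mem (hCo.mem_nhds hC1) ?_
    exact (Filter.biInter_finset_mem S).2 fun s _ => hconj s
  obtain ⟨V, hVo, hV1, hVs, hVsq⟩ := exists_sym_sq _ hW
  have hVsub : V ⊆ C ∩ ⋂ s ∈ S, (fun x => s * x * s⁻¹) ⁻¹' U := subset_of_sq hV1 hVsq
  refine ⟨V, hVo, hV1, hVs, ?_, ?_⟩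
  · have : V ⊆ C := fun x hx => (hVsub hx).1
    calc V * V * V ⊆ C * C * C := Set.mul_subset_mul (Set.mul_subset_mul this this) this
    _ ⊆ U := hcube
  · intro s hs
    rintro _ ⟨x, hx, rfl⟩
    have := (hVsub hx).2
    simp only [Set.mem_iInter] at this
    exact this s hs

/-- covering enumeration from ω-precompactness -/
lemma omega_cov (hω : OmegaPre G) (X : Set G) (hX : X ∈ 𝓝 (1:G)) :
    ∃ e : ℕ → G, ∀ g : G, ∃ k, g ∈ X * {e k} := by
  obtain ⟨F, hFc, hFU⟩ := hω X hX
  have hFne : F.Nonempty := by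
    rcases (Set.eq_univ_iff_forall.1 hFU (1:G)) with ⟨x, _, y, hy, _⟩
    exact ⟨y, hy⟩
  obtain ⟨e, he⟩ := Set.Countable.exists_eq_range hFc hFne
  refine ⟨e, fun g => ?_⟩
  rcases (Set.eq_univ_iff_forall.1 hFU g) with ⟨x, hx, y, hy, hxy⟩
  rw [he] at hy
  obtain ⟨k, rfl⟩ := hy
  exact ⟨k, x, hx, e k, rfl, hxy⟩

end Stmt5Aux

namespace Stmt5Aux2
open Stmt5Aux
open scoped Classical

variable {G : Type u} [Group G] [TopologicalSpace G] [IsTopologicalGroup G]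

noncomputable def cov (hω : OmegaPre G) (X : Set G) : ℕ → G :=
  if h : X ∈ 𝓝 (1:G) then (omega_cov hω X h).choose else fun _ => 1

lemma cov_spec (hω : OmegaPre G) {X : Set G} (hX : X ∈ 𝓝 (1:G)) :
    ∀ g : G, ∃ k, g ∈ X * {cov hω X k} := by
  rw [cov, dif_pos hX]; exact (omega_cov hω X hX).choose_spec

noncomputable def nextV (X : Set G) (S : Finset G) : Set G :=
  if h : X ∈ 𝓝 (1:G) then (exists_sym_cube_conj X h S).choose else Set.univ

lemma nextV_spec {X : Set G} (hX : X ∈ 𝓝 (1:G)) (S : Finset G) :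
    IsOpen (nextV X S) ∧ (1:G) ∈ nextV X S ∧ (nextV X S)⁻¹ = nextV X S ∧
      nextV X S * nextV X S * nextV X S ⊆ X ∧
      ∀ s ∈ S, (fun x => s * x * s⁻¹) '' nextV X S ⊆ X := by
  rw [nextV, dif_pos hX]; exact (exists_sym_cube_conj X hX S).choose_spec

noncomputable def bal (hω : OmegaPre G) (U : Set G) : ℕ → Set G
  | 0 => nextV U ∅
  | n+1 => nextV (bal hω U n)
      (((Finset.range (n+1)) ×ˢ (Finset.range (n+1))).image
        (fun p : ℕ × ℕ => cov hω (bal hω U (min p.1 n)) p.2))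
  termination_by n => n
  decreasing_by
  · exact Nat.lt_succ_of_le (Nat.le_refl n)
  · exact Nat.lt_succ_of_le (min_le_right _ _)

noncomputable def balS (hω : OmegaPre G) (U : Set G) (n : ℕ) : Finset G :=
  ((Finset.range (n+1)) ×ˢ (Finset.range (n+1))).image
    (fun p : ℕ × ℕ => cov hω (bal hω U (min p.1 n)) p.2)

lemma bal_zero (hω : OmegaPre G) (U : Set G) : bal hω U 0 = nextV U ∅ := by
  rw [bal]

lemma bal_succ (hω : OmegaPre G) (U : Set G) (n : ℕ) :
    bal hω U (n+1) = nextV (bal hω U n) (balS hω U n) := by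
  rw [bal, balS]

variable {U : Set G}

lemma bal_good (hω : OmegaPre G) (hU : U ∈ 𝓝 (1:G)) :
    ∀ n, (IsOpen (bal hω U n) ∧ (1:G) ∈ bal hω U n ∧ (bal hω U n)⁻¹ = bal hω U n)
      ∧ bal hω U n ∈ 𝓝 (1:G) := by
  intro n
  induction n with
  | zero =>
    have h := nextV_spec hU (∅ : Finset G)
    rw [bal_zero]
    exact ⟨⟨h.1, h.2.1, h.2.2.1⟩, h.1.mem_nhds h.2.1⟩
  | succ n ih =>
    have h := nextV_spec ih.2 (balS hω U n)
    rw [bal_succ]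
    exact ⟨⟨h.1, h.2.1, h.2.2.1⟩, h.1.mem_nhds h.2.1⟩

lemma bal_nhds (hω : OmegaPre G) (hU : U ∈ 𝓝 (1:G)) (n : ℕ) : bal hω U n ∈ 𝓝 (1:G) :=
  (bal_good hω hU n).2

lemma bal_cube0 (hω : OmegaPre G) (hU : U ∈ 𝓝 (1:G)) :
    bal hω U 0 * bal hω U 0 * bal hω U 0 ⊆ U := by
  have h := nextV_spec hU (∅ : Finset G)
  rw [bal_zero]
  exact h.2.2.2.1

lemma bal_cube (hω : OmegaPre G) (hU : U ∈ 𝓝 (1:G)) (n : ℕ) :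
    bal hω U (n+1) * bal hω U (n+1) * bal hω U (n+1) ⊆ bal hω U n := by
  have h := nextV_spec (bal_nhds hω hU n) (balS hω U n)
  rw [bal_succ]
  exact h.2.2.2.1

lemma bal_conj_elt (hω : OmegaPre G) (hU : U ∈ 𝓝 (1:G)) (n : ℕ) {i j : ℕ}
    (hi : i ≤ n) (hj : j ≤ n) :
    (fun x => (cov hω (bal hω U i) j) * x * (cov hω (bal hω U i) j)⁻¹) '' bal hω U (n+1)
      ⊆ bal hω U n := by
  have h := nextV_spec (bal_nhds hω hU n) (balS hω U n)
  have hmem : (cov hω (bal hω U i) j) ∈ balS hω U n := by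
    refine Finset.mem_image.2 ⟨⟨i, j⟩, ?_, ?_⟩
    · rw [Finset.mem_product]
      exact ⟨Finset.mem_range.2 (Nat.lt_succ_of_le hi), Finset.mem_range.2 (Nat.lt_succ_of_le hj)⟩
    · simp [min_eq_left hi]
  rw [bal_succ]
  exact h.2.2.2.2 _ hmem

lemma bal_mono_succ (hω : OmegaPre G) (hU : U ∈ 𝓝 (1:G)) (n : ℕ) :
    bal hω U (n+1) ⊆ bal hω U n := by
  intro x hx
  have h1 : (1:G) ∈ bal hω U (n+1) := (bal_good hω hU (n+1)).1.2.1
  have := bal_cube hω hU n (Set.mul_mem_mul (Set.mul_mem_mul h1 hx) h1)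
  simpa using this

lemma bal_le0 (hω : OmegaPre G) (hU : U ∈ 𝓝 (1:G)) (n : ℕ) : bal hω U n ⊆ bal hω U 0 := by
  induction n with
  | zero => exact subset_rfl
  | succ n ih => exact (bal_mono_succ hω hU n).trans ih

lemma bal_sq (hω : OmegaPre G) (hU : U ∈ 𝓝 (1:G)) (n : ℕ) : bal hω U n * bal hω U n ⊆ U := by
  intro x hx
  obtain ⟨a, ha, b, hb, rfl⟩ := hx
  have h1 : (1:G) ∈ bal hω U 0 := (bal_good hω hU 0).1.2.1
  have : a * b * 1 ∈ bal hω U 0 * bal hω U 0 * bal hω U 0 :=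
    Set.mul_mem_mul (Set.mul_mem_mul (bal_le0 hω hU n ha) (bal_le0 hω hU n hb)) h1
  simpa using bal_cube0 hω hU this

lemma bal_subset (hω : OmegaPre G) (hU : U ∈ 𝓝 (1:G)) (n : ℕ) : bal hω U n ⊆ U :=
  subset_of_sq (bal_good hω hU n).1.2.1 (bal_sq hω hU n)

lemma bal_balanced (hω : OmegaPre G) (hU : U ∈ 𝓝 (1:G)) :
    ∀ g : G, ∃ m, (fun x => g * x * g⁻¹) '' bal hω U m ⊆ U := by
  intro g
  obtain ⟨k, hk⟩ := cov_spec hω (bal_nhds hω hU 0) g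
  obtain ⟨v, hv, f, hf, hgf⟩ := hk
  rw [Set.mem_singleton_iff] at hf
  refine ⟨k+1, ?_⟩
  rintro _ ⟨x, hx, rfl⟩
  have hfx : f * x * f⁻¹ ∈ bal hω U k := by
    have := bal_conj_elt hω hU k (i := 0) (j := k) (Nat.zero_le k) (Nat.le_refl k)
    rw [← hf] at this
    exact this ⟨x, hx, rfl⟩
  have h1 : (1:G) ∈ bal hω U 0 := (bal_good hω hU 0).1.2.1
  have hvinv : v⁻¹ ∈ bal hω U 0 := by
    rw [← (bal_good hω hU 0).1.2.2]; exact Set.inv_mem_inv.2 hv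
  have hy : f * x * f⁻¹ ∈ bal hω U 0 := bal_le0 hω hU k hfx
  have hmem : v * (f * x * f⁻¹) * v⁻¹ ∈ bal hω U 0 * bal hω U 0 * bal hω U 0 :=
    Set.mul_mem_mul (Set.mul_mem_mul hv hy) hvinv
  have heq : g * x * g⁻¹ = v * (f * x * f⁻¹) * v⁻¹ := by
    have hg : g = v * f := hgf.symm
    rw [hg]; group
  show g * x * g⁻¹ ∈ U
  rw [heq]
  exact bal_cube0 hω hU hmem

/-- The packaged "ω-balanced family" result. -/
lemma balanced_family (hω : OmegaPre G) (hU : U ∈ 𝓝 (1:G)) :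
    ∃ V : ℕ → Set G,
      (∀ m, IsOpen (V m) ∧ (1:G) ∈ V m ∧ (V m)⁻¹ = V m ∧ V m * V m ⊆ U ∧ V m ⊆ U) ∧
      ∀ g : G, ∃ m, (fun x => g * x * g⁻¹) '' V m ⊆ U :=
  ⟨bal hω U, fun m => ⟨(bal_good hω hU m).1.1, (bal_good hω hU m).1.2.1,
    (bal_good hω hU m).1.2.2, bal_sq hω hU m, bal_subset hω hU m⟩, bal_balanced hω hU⟩

end Stmt5Aux2

namespace Stmt5Aux3
open Stmt5Aux Stmt5Aux2
open scoped Classical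

variable {G : Type u} [Group G] [TopologicalSpace G] [IsTopologicalGroup G]

/-- open symmetric neighborhood of 1 -/
def good (X : Set G) : Prop := IsOpen X ∧ (1:G) ∈ X ∧ X⁻¹ = X

lemma good.nhds {X : Set G} (h : good X) : X ∈ 𝓝 (1:G) := h.1.mem_nhds h.2.1

noncomputable def fam (hω : OmegaPre G) (X : Set G) : ℕ → Set G :=
  if h : X ∈ 𝓝 (1:G) then (balanced_family hω h).choose else fun _ => Set.univ

lemma fam_spec (hω : OmegaPre G) {X : Set G} (hX : X ∈ 𝓝 (1:G)) :
    (∀ m, IsOpen (fam hω X m) ∧ (1:G) ∈ fam hω X m ∧ (fam hω X m)⁻¹ = fam hω X m ∧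
      fam hω X m * fam hω X m ⊆ X ∧ fam hω X m ⊆ X) ∧
    ∀ g : G, ∃ m, (fun x => g * x * g⁻¹) '' fam hω X m ⊆ X := by
  rw [fam, dif_pos hX]; exact (balanced_family hω hX).choose_spec

lemma fam_good (hω : OmegaPre G) {X : Set G} (hX : X ∈ 𝓝 (1:G)) (m : ℕ) :
    good (fam hω X m) :=
  ⟨((fam_spec hω hX).1 m).1, ((fam_spec hω hX).1 m).2.1, ((fam_spec hω hX).1 m).2.2.1⟩

noncomputable def famT (hω : OmegaPre G) (T0 : Set (Set G)) : ℕ → Set (Set G)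
  | 0 => T0
  | n+1 => famT hω T0 n ∪ ((⋃ X ∈ famT hω T0 n, Set.range (fam hω X)) ∪
      (Set.image2 (· ∩ ·) (famT hω T0 n) (famT hω T0 n)))

def guranN (hω : OmegaPre G) (T0 : Set (Set G)) : Set (Set G) := ⋃ n, famT hω T0 n

variable {hω : OmegaPre G} {T0 : Set (Set G)}

lemma famT_mono_succ (n : ℕ) : famT hω T0 n ⊆ famT hω T0 (n+1) := by
  rw [show famT hω T0 (n+1) = _ from rfl]
  exact Set.subset_union_left

lemma famT_mono {m n : ℕ} (h : m ≤ n) : famT hω T0 m ⊆ famT hω T0 n := by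
  induction n with
  | zero => rw [Nat.le_zero] at h; subst h; exact subset_rfl
  | succ n ih =>
    rcases Nat.le_succ_iff.1 h with h' | h'
    · exact (ih h').trans (famT_mono_succ n)
    · subst h'; exact subset_rfl

lemma famT_good (hT0 : ∀ X ∈ T0, good X) : ∀ n, ∀ X ∈ famT hω T0 n, good X := by
  intro n
  induction n with
  | zero => exact hT0
  | succ n ih =>
    rintro X (hX | hX | hX)
    · exact ih X hX
    · simp only [Set.mem_iUnion] at hX
      obtain ⟨Y, hY, m, rfl⟩ := hX
      exact fam_good hω ((ih Y hY).nhds) m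
    · obtain ⟨A, hA, B, hB, rfl⟩ := hX
      exact ⟨(ih A hA).1.inter (ih B hB).1, ⟨(ih A hA).2.1, (ih B hB).2.1⟩, by
        rw [Set.inter_inv, (ih A hA).2.2, (ih B hB).2.2]⟩

lemma guranN_good (hT0 : ∀ X ∈ T0, good X) : ∀ X ∈ guranN hω T0, good X := by
  rintro X hX
  obtain ⟨n, hn⟩ := Set.mem_iUnion.1 hX
  exact famT_good hT0 n X hn

lemma famT_countable (hc : T0.Countable) : ∀ n, (famT hω T0 n).Countable := by
  intro n
  induction n with
  | zero => exact hc
  | succ n ih =>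
    refine ih.union (Set.Countable.union ?_ (Set.Countable.image2 ih ih _))
    exact (ih.biUnion fun X _ => Set.countable_range _)

lemma guranN_countable (hc : T0.Countable) : (guranN hω T0).Countable :=
  Set.countable_iUnion (famT_countable hc)

lemma guranN_mem_level {X : Set G} {n : ℕ} (h : X ∈ famT hω T0 n) : X ∈ guranN hω T0 :=
  Set.mem_iUnion.2 ⟨n, h⟩

lemma guranN_T0 : T0 ⊆ guranN hω T0 := fun X hX => guranN_mem_level (n := 0) hX

lemma guranN_fam {X : Set G} (h : X ∈ guranN hω T0) (m : ℕ) : fam hω X m ∈ guranN hω T0 := by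
  obtain ⟨n, hn⟩ := Set.mem_iUnion.1 h
  refine guranN_mem_level (n := n+1) ?_
  exact Set.mem_union_right _ (Set.mem_union_left _ (Set.mem_biUnion hn ⟨m, rfl⟩))

lemma guranN_inter {X Y : Set G} (hX : X ∈ guranN hω T0) (hY : Y ∈ guranN hω T0) :
    X ∩ Y ∈ guranN hω T0 := by
  obtain ⟨n, hn⟩ := Set.mem_iUnion.1 hX
  obtain ⟨m, hm⟩ := Set.mem_iUnion.1 hY
  refine guranN_mem_level (n := max n m + 1) ?_
  refine Set.mem_union_right _ (Set.mem_union_right _ ?_)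
  exact Set.mem_image2_of_mem (famT_mono (le_max_left n m) hn) (famT_mono (le_max_right n m) hm)

lemma guranN_mul (hT0 : ∀ X ∈ T0, good X) {X : Set G} (hX : X ∈ guranN hω T0) :
    ∃ Y ∈ guranN hω T0, Y * Y ⊆ X :=
  ⟨fam hω X 0, guranN_fam hX 0, ((fam_spec hω ((guranN_good hT0 X hX).nhds)).1 0).2.2.2.1⟩

lemma guranN_conj (hT0 : ∀ X ∈ T0, good X) {X : Set G} (hX : X ∈ guranN hω T0) (g : G) :
    ∃ Y ∈ guranN hω T0, (fun x => g * x * g⁻¹) '' Y ⊆ X := by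
  obtain ⟨m, hm⟩ := (fam_spec hω ((guranN_good hT0 X hX).nhds)).2 g
  exact ⟨fam hω X m, guranN_fam hX m, hm⟩

lemma guranN_sub_seed {X : Set G} (hX : X ∈ 𝓝 (1:G)) (m : ℕ) : fam hω X m ⊆ X :=
  ((fam_spec hω hX).1 m).2.2.2.2

lemma guranN_mono (hsub : T0 ⊆ T0') : guranN hω T0 ⊆ guranN hω T0' := by
  have : ∀ n, famT hω T0 n ⊆ famT hω T0' n := by
    intro n
    induction n with
    | zero => exact hsub
    | succ n ih =>
      rintro X (hX | hX | hX)
      · exact Set.mem_union_left _ (ih hX)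
      · simp only [Set.mem_iUnion] at hX
        obtain ⟨Y, hY, m, rfl⟩ := hX
        exact Set.mem_union_right _ (Set.mem_union_left _ (Set.mem_biUnion (ih hY) ⟨m, rfl⟩))
      · obtain ⟨A, hA, B, hB, rfl⟩ := hX
        exact Set.mem_union_right _
          (Set.mem_union_right _ (Set.mem_image2_of_mem (ih hA) (ih hB)))
  rintro X hX
  obtain ⟨n, hn⟩ := Set.mem_iUnion.1 hX
  exact Set.mem_iUnion.2 ⟨n, this n hn⟩

/-- The group filter basis built from a Guran family. -/
noncomputable def guranBasis (hω : OmegaPre G) (T0 : Set (Set G))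
    (hT0 : ∀ X ∈ T0, good X) (hne : T0.Nonempty) : GroupFilterBasis G where
  sets := guranN hω T0
  nonempty := hne.mono guranN_T0
  inter_sets := fun hx hy => ⟨_, guranN_inter hx hy, subset_rfl⟩
  one' := fun hU => (guranN_good hT0 _ hU).2.1
  mul' := fun hU => guranN_mul hT0 hU
  inv' := fun {U} hU => ⟨U, hU, by
    intro x hx
    have := (guranN_good hT0 _ hU).2.2
    rw [Set.mem_preimage, ← this]
    exact Set.inv_mem_inv.2 hx⟩
  conj' := fun g {U} hU => by
    obtain ⟨Y, hY, hYsub⟩ := guranN_conj hT0 hU g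
    exact ⟨Y, hY, fun x hx => hYsub ⟨x, hx, rfl⟩⟩

end Stmt5Aux3

namespace Stmt5Aux4
open Stmt5Aux Stmt5Aux2 Stmt5Aux3

variable {G : Type u} [Group G] [ts : TopologicalSpace G] [IsTopologicalGroup G]
variable (B : GroupFilterBasis G)

lemma basis_mem_nhds_iff {X : Set G} :
    X ∈ @nhds G B.topology 1 ↔ ∃ W ∈ B.sets, W ⊆ X := by
  rw [B.nhds_one_eq]
  exact B.toFilterBasis.mem_filter_iff

lemma basis_le_nhds (hgood : ∀ W ∈ B.sets, IsOpen W ∧ (1:G) ∈ W) {X : Set G}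
    (hX : X ∈ @nhds G B.topology 1) : X ∈ 𝓝 (1:G) := by
  obtain ⟨W, hW, hWX⟩ := (basis_mem_nhds_iff B).1 hX
  exact Filter.mem_of_superset ((hgood W hW).1.mem_nhds (hgood W hW).2) hWX

lemma basis_tendsto_one {K : Type*} [Group K] [tK : TopologicalSpace K] (f : K →* G)
    (hf : ∀ W ∈ B.sets, f ⁻¹' W ∈ 𝓝 (1:K)) :
    Filter.Tendsto f (𝓝 (1:K)) B.toFilterBasis.filter := by
  intro s hs
  obtain ⟨W, hW, hWs⟩ := B.toFilterBasis.mem_filter_iff.1 hs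
  exact Filter.mem_of_superset (hf W hW) (fun x hx => hWs hx)

lemma basis_continuous {K : Type*} [Group K] [tK : TopologicalSpace K] [IsTopologicalGroup K]
    (f : K →* G) (hf : ∀ W ∈ B.sets, f ⁻¹' W ∈ 𝓝 (1:K)) :
    @Continuous K G tK B.topology f := by
  rw [@continuous_iff_continuousAt K G tK B.topology f]
  intro x
  have h1 : Filter.Tendsto f (𝓝 (1:K)) B.toFilterBasis.filter := basis_tendsto_one B f hf
  have h2 : Filter.Tendsto f (𝓝 x) (B.N (f x)) := by
    rw [← map_mul_left_nhds_one x, Filter.tendsto_map'_iff]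
    have heq : (f ∘ (fun y => x * y)) = (fun z => f x * z) ∘ f := by
      funext y; simp [map_mul]
    rw [heq]
    exact (Filter.tendsto_map).comp h1
  unfold ContinuousAt
  rw [B.nhds_eq]
  exact h2

lemma basis_t2 (hsep : ∀ x : G, x ≠ 1 → ∃ W ∈ B.sets, x ∉ W) :
    @T2Space G B.topology := by
  letI t' := B.topology
  haveI : @IsTopologicalGroup G t' _ := B.isTopologicalGroup
  refine IsTopologicalGroup.t2Space_of_one_sep fun x hx => ?_
  obtain ⟨W, hW, hxW⟩ := hsep x hx
  exact ⟨W, B.mem_nhds_one hW, hxW⟩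

lemma basis_enum (hc : B.sets.Countable) :
    ∃ e : ℕ → Set G, (∀ n, e n ∈ B.sets) ∧
      ∀ X : Set G, X ∈ @nhds G B.topology 1 ↔ ∃ n, e n ⊆ X := by
  obtain ⟨e, he⟩ := Set.Countable.exists_eq_range hc B.nonempty
  refine ⟨e, fun n => by rw [he]; exact ⟨n, rfl⟩, fun X => ?_⟩
  rw [basis_mem_nhds_iff B]
  constructor
  · rintro ⟨W, hW, hWX⟩
    rw [he] at hW
    obtain ⟨n, rfl⟩ := hW
    exact ⟨n, hWX⟩
  · rintro ⟨n, hn⟩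
    exact ⟨e n, by rw [he]; exact ⟨n, rfl⟩, hn⟩

lemma basis_countably_generated (hc : B.sets.Countable) :
    (@nhds G B.topology 1).IsCountablyGenerated := by
  obtain ⟨e, he1, he2⟩ := basis_enum B hc
  have hb : (@nhds G B.topology 1).HasBasis (fun _ : ℕ => True) e := by
    rw [Filter.hasBasis_iff]
    intro t
    rw [he2 t]
    simp
  exact hb.isCountablyGenerated

end Stmt5Aux4

namespace Stmt5Aux5
open Stmt5Aux Stmt5Aux2 Stmt5Aux3 Stmt5Aux4 Filter
open scoped Uniformity

/-- local copy of SeqComplete's content -/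
def SeqCompl (H : Type u) [Group H] [TopologicalSpace H] [IsTopologicalGroup H] : Prop :=
  letI := IsTopologicalGroup.rightUniformSpace H
  ∀ u : ℕ → H, CauchySeq u → ∃ x, Filter.Tendsto u Filter.atTop (𝓝 x)

lemma baire_of_seqCompl {H : Type u} [Group H] [tH : TopologicalSpace H] [IsTopologicalGroup H]
    (hcg : (𝓝 (1:H)).IsCountablyGenerated) (hsc : SeqCompl H) : BaireSpace H := by
  letI U : UniformSpace H := IsTopologicalGroup.rightUniformSpace H
  haveI : (𝓤 H).IsCountablyGenerated := by
    show (Filter.comap (fun p : H × H => p.2 * p.1⁻¹) (𝓝 1)).IsCountablyGenerated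
    exact Filter.comap.isCountablyGenerated _ _
  haveI : CompleteSpace H := UniformSpace.complete_of_cauchySeq_tendsto hsc
  exact BaireSpace.of_completelyPseudoMetrizable

/-- Cauchy criterion w.r.t. the right group uniformity. -/
lemma cauchySeq_of_div {H : Type u} [Group H] [tH : TopologicalSpace H] [IsTopologicalGroup H]
    (q : ℕ → H)
    (h : ∀ W ∈ 𝓝 (1:H), ∃ N, ∀ m n, N ≤ m → N ≤ n → q m / q n ∈ W) :
    letI := IsTopologicalGroup.rightUniformSpace H
    CauchySeq q := by
  letI U : UniformSpace H := IsTopologicalGroup.rightUniformSpace H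
  show CauchySeq q
  constructor
  · exact Filter.map_neBot
  · show Filter.map q Filter.atTop ×ˢ Filter.map q Filter.atTop ≤ 𝓤 H
    have : 𝓤 H = Filter.comap (fun p : H × H => p.2 / p.1) (𝓝 1) := by
      simp only [div_eq_mul_inv]; rfl
    rw [this, ← Filter.map_le_iff_le_comap, Filter.prod_map_map_eq, Filter.map_map]
    intro W hW
    obtain ⟨N, hN⟩ := h W hW
    rw [Filter.mem_map]
    have hsub : (Set.Ici N ×ˢ Set.Ici N : Set (ℕ × ℕ)) ⊆
        ((fun p : H × H => p.2 / p.1) ∘ Prod.map q q) ⁻¹' W := by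
      rintro ⟨m, n⟩ ⟨hm, hn⟩
      exact hN n m hn hm
    exact Filter.mem_of_superset
      (Filter.prod_mem_prod (Filter.Ici_mem_atTop N) (Filter.Ici_mem_atTop N)) hsub
end Stmt5Aux5

namespace Stmt5Aux6
open Stmt5Aux Filter

variable {H : Type u} [Group H] [tH : TopologicalSpace H] [IsTopologicalGroup H]

lemma closure_subset_mul {A V : Set H} (hV : V ∈ 𝓝 (1:H)) (hVs : V⁻¹ = V) :
    closure A ⊆ A * V := by
  intro x hx
  have hxV : (fun v => x * v) '' V ∈ 𝓝 x := by
    rw [← map_mul_left_nhds_one x]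
    exact Filter.image_mem_map hV
  obtain ⟨a, haV, haA⟩ := mem_closure_iff_nhds.1 hx _ hxV
  obtain ⟨v, hv, hav⟩ := haV
  refine ⟨a, haA, v⁻¹, by rw [← hVs]; exact Set.inv_mem_inv.2 hv, ?_⟩
  rw [← hav]; group

lemma baire_interior_closure {A F : Set H} [BaireSpace H] (hF : F.Countable)
    (hcov : A * F = Set.univ) : (interior (closure A)).Nonempty := by
  have hFne : F.Nonempty := by
    rcases (Set.eq_univ_iff_forall.1 hcov (1:H)) with ⟨x, _, y, hy, _⟩
    exact ⟨y, hy⟩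
  haveI : Countable F := hF.to_subtype
  haveI : Nonempty F := hFne.to_subtype
  have hclosed : ∀ f : F, IsClosed ((fun x => x * (f:H)) '' closure A) :=
    fun f => ((Homeomorph.mulRight (f:H)).isClosedMap _ isClosed_closure)
  have hcover : ⋃ f : F, (fun x => x * (f:H)) '' closure A = Set.univ := by
    rw [Set.eq_univ_iff_forall]
    intro g
    rcases (Set.eq_univ_iff_forall.1 hcov g) with ⟨x, hx, y, hy, hxy⟩
    exact Set.mem_iUnion.2 ⟨⟨y, hy⟩, x, subset_closure hx, hxy⟩
  obtain ⟨f, hf⟩ := nonempty_interior_of_iUnion_of_closed hclosed hcover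
  obtain ⟨x, hx⟩ := hf
  refine ⟨x * (f:H)⁻¹, ?_⟩
  have : interior ((fun x => x * (f:H)) '' closure A)
      = (fun x => x * (f:H)) '' interior (closure A) :=
    ((Homeomorph.mulRight (f:H)).image_interior (closure A)).symm
  rw [this] at hx
  obtain ⟨z, hz, hzx⟩ := hx
  have : x * (f:H)⁻¹ = z := by rw [← hzx]; group
  rw [this]; exact hz

lemma nearly_open {A F : Set H} [BaireSpace H] (hA : A⁻¹ = A) (hF : F.Countable)
    (hcov : A * F = Set.univ) : closure (A * A) ∈ 𝓝 (1:H) := by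
  obtain ⟨x, hx⟩ := baire_interior_closure hF hcov
  have hxcl : x ∈ closure A := interior_subset hx
  have hopen : IsOpen ((fun y => x⁻¹ * y) '' interior (closure A)) :=
    (Homeomorph.mulLeft x⁻¹).isOpenMap _ isOpen_interior
  have h1 : (1:H) ∈ (fun y => x⁻¹ * y) '' interior (closure A) :=
    ⟨x, hx, by group⟩
  have hsub : (fun y => x⁻¹ * y) '' interior (closure A) ⊆ closure (A * A) := by
    rintro _ ⟨y, hy, rfl⟩
    have hycl : y ∈ closure A := interior_subset hy
    have : (fun (a : H) (b : H) => a⁻¹ * b) x y ∈ closure (A⁻¹ * A) := by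
      refine map_mem_closure₂ (f := fun a b : H => a⁻¹ * b) ?_ hxcl hycl ?_
      · show Continuous fun p : H × H => p.1⁻¹ * p.2
        exact (continuous_fst.inv.mul continuous_snd)
      · intro a ha b hb
        exact Set.mul_mem_mul (Set.inv_mem_inv.2 ha) hb
    simp only at this
    rwa [hA] at this
  exact Filter.mem_of_superset (hopen.mem_nhds h1) hsub

end Stmt5Aux6

namespace Stmt5Aux7
open Stmt5Aux Stmt5Aux5 Stmt5Aux6 Filter
open scoped Classical

variable {A : Type u} [Group A] [tA : TopologicalSpace A] [IsTopologicalGroup A]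

noncomputable def sym2 (X : Set A) : Set A :=
  if h : X ∈ 𝓝 (1:A) then (exists_sym_sq X h).choose else Set.univ

lemma sym2_spec {X : Set A} (hX : X ∈ 𝓝 (1:A)) :
    IsOpen (sym2 X) ∧ (1:A) ∈ sym2 X ∧ (sym2 X)⁻¹ = sym2 X ∧ sym2 X * sym2 X ⊆ X := by
  rw [sym2, dif_pos hX]; exact (exists_sym_sq X hX).choose_spec

noncomputable def chain (W : ℕ → Set A) (V : Set A) : ℕ → Set A
  | 0 => sym2 (V ∩ W 0)
  | n+1 => sym2 (chain W V n ∩ W (n+1))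

variable {W : ℕ → Set A} {V : Set A}

lemma chain_spec (hV : V ∈ 𝓝 (1:A)) (hW : ∀ n, W n ∈ 𝓝 (1:A)) :
    ∀ n, chain W V n ∈ 𝓝 (1:A) ∧ (chain W V n)⁻¹ = chain W V n ∧ chain W V n ⊆ W n := by
  intro n
  induction n with
  | zero =>
    have h := sym2_spec (Filter.inter_mem hV (hW 0))
    rw [show chain W V 0 = sym2 (V ∩ W 0) from by rw [chain]]
    exact ⟨h.1.mem_nhds h.2.1, h.2.2.1,
      (subset_of_sq h.2.1 h.2.2.2).trans Set.inter_subset_right⟩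
  | succ n ih =>
    have h := sym2_spec (Filter.inter_mem ih.1 (hW (n+1)))
    rw [show chain W V (n+1) = sym2 (chain W V n ∩ W (n+1)) from by rw [chain]]
    exact ⟨h.1.mem_nhds h.2.1, h.2.2.1,
      (subset_of_sq h.2.1 h.2.2.2).trans Set.inter_subset_right⟩

lemma chain_zero_sq (hV : V ∈ 𝓝 (1:A)) (hW : ∀ n, W n ∈ 𝓝 (1:A)) :
    chain W V 0 * chain W V 0 ⊆ V := by
  have h := sym2_spec (Filter.inter_mem hV (hW 0))
  rw [show chain W V 0 = sym2 (V ∩ W 0) from by rw [chain]]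
  exact h.2.2.2.trans Set.inter_subset_left

lemma chain_succ_sq (hV : V ∈ 𝓝 (1:A)) (hW : ∀ n, W n ∈ 𝓝 (1:A)) (n : ℕ) :
    chain W V (n+1) * chain W V (n+1) ⊆ chain W V n := by
  have h := sym2_spec (Filter.inter_mem (chain_spec hV hW n).1 (hW (n+1)))
  rw [show chain W V (n+1) = sym2 (chain W V n ∩ W (n+1)) from by rw [chain]]
  exact h.2.2.2.trans Set.inter_subset_left

lemma chain_one_mem (hV : V ∈ 𝓝 (1:A)) (hW : ∀ n, W n ∈ 𝓝 (1:A)) (n : ℕ) :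
    (1:A) ∈ chain W V n := mem_of_mem_nhds (chain_spec hV hW n).1

lemma chain_decreasing (hV : V ∈ 𝓝 (1:A)) (hW : ∀ n, W n ∈ 𝓝 (1:A)) {n m : ℕ} (h : n ≤ m) :
    chain W V m ⊆ chain W V n := by
  induction m with
  | zero => rw [Nat.le_zero] at h; subst h; exact subset_rfl
  | succ m ih =>
    rcases Nat.le_succ_iff.1 h with h' | h'
    · exact (subset_of_sq (chain_one_mem hV hW (m+1)) (chain_succ_sq hV hW m)).trans (ih h')
    · subst h'; exact subset_rfl

lemma chain_step_subset (hV : V ∈ 𝓝 (1:A)) (hW : ∀ n, W n ∈ 𝓝 (1:A)) (n : ℕ) :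
    chain W V (n+1) ⊆ chain W V n :=
  subset_of_sq (chain_one_mem hV hW (n+1)) (chain_succ_sq hV hW n)

lemma telescope (hV : V ∈ 𝓝 (1:A)) (hW : ∀ n, W n ∈ 𝓝 (1:A)) (q : ℕ → A)
    (hq : ∀ n, q (n+1) * (q n)⁻¹ ∈ chain W V (n+1)) :
    ∀ k n, q (n+k) * (q n)⁻¹ ∈ chain W V n := by
  intro k
  induction k with
  | zero => intro n; simpa using chain_one_mem hV hW n
  | succ k ih =>
    intro n
    have h1 : q (n+1+k) * (q (n+1))⁻¹ ∈ chain W V (n+1) := ih (n+1)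
    have h2 : q (n+1) * (q n)⁻¹ ∈ chain W V (n+1) := hq n
    have heq : q (n+(k+1)) * (q n)⁻¹ = (q (n+1+k) * (q (n+1))⁻¹) * (q (n+1) * (q n)⁻¹) := by
      rw [show n+(k+1) = n+1+k from by omega]; group
    rw [heq]
    exact chain_succ_sq hV hW n (Set.mul_mem_mul h1 h2)

end Stmt5Aux7

namespace Stmt5Aux8
open Stmt5Aux Stmt5Aux5 Stmt5Aux6 Stmt5Aux7 Filter

/-- The Banach open-mapping scheme. -/
lemma banach_open {A B : Type u} [Group A] [Group B]
    [tA : TopologicalSpace A] [IsTopologicalGroup A]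
    [tB : TopologicalSpace B] [IsTopologicalGroup B] [T2Space B]
    (f : A →* B) (hfc : Continuous f)
    (hsc : SeqCompl A)
    (eA : ℕ → Set A) (heA : ∀ n, eA n ∈ 𝓝 (1:A)) (hbA : ∀ X ∈ 𝓝 (1:A), ∃ n, eA n ⊆ X)
    (eB : ℕ → Set B) (heB : ∀ n, eB n ∈ 𝓝 (1:B)) (hbB : ∀ X ∈ 𝓝 (1:B), ∃ n, eB n ⊆ X)
    (hdense : ∀ X ∈ 𝓝 (1:A), closure (f '' X) ∈ 𝓝 (1:B)) :
    ∀ V ∈ 𝓝 (1:A), f '' V ∈ 𝓝 (1:B) := by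
  intro V hV
  -- the chains
  set C : ℕ → Set A := chain eA V with hC
  have hCnh : ∀ n, C n ∈ 𝓝 (1:A) := fun n => (chain_spec hV heA n).1
  set M : ℕ → Set B := chain eB Set.univ with hM
  have hMnh : ∀ n, M n ∈ 𝓝 (1:B) := fun n => (chain_spec Filter.univ_mem heB n).1
  -- main claim : closure (f '' C 1) ⊆ f '' V
  have main : closure (f '' C 1) ⊆ f '' V := by
    intro y hy
    -- invariant
    set Inv : ℕ → A → Prop :=
      fun n q => y * (f q)⁻¹ ∈ closure (f '' C (n+1)) ∧ (y * (f q)⁻¹ ∈ M n ∨ n = 0) with hInv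
    have base : Inv 0 1 := by
      constructor
      · simpa using hy
      · exact Or.inr rfl
    have step : ∀ n (q : A), Inv n q → ∃ q' : A, Inv (n+1) q' ∧ q' * q⁻¹ ∈ C (n+1) := by
      intro n q hq
      have hN : closure (f '' C (n+2)) ∩ M (n+1) ∈ 𝓝 (1:B) :=
        Filter.inter_mem (hdense _ (hCnh (n+2))) (hMnh (n+1))
      obtain ⟨N₀, hN₀o, hN₀1, hN₀s, hN₀sq⟩ := exists_sym_sq _ hN
      have hN₀sub : N₀ ⊆ closure (f '' C (n+2)) ∩ M (n+1) := subset_of_sq hN₀1 hN₀sq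
      -- neighborhood of z := y * (f q)⁻¹
      set z := y * (f q)⁻¹ with hz
      have hnbhd : (fun v => v * z) '' N₀ ∈ 𝓝 z := by
        rw [← map_mul_right_nhds_one z]
        exact Filter.image_mem_map (hN₀o.mem_nhds hN₀1)
      obtain ⟨w, hwnb, hwmem⟩ := mem_closure_iff_nhds.1 hq.1 _ hnbhd
      obtain ⟨x', hx', hfx⟩ := hwmem
      obtain ⟨m, hm, hmw⟩ := hwnb
      -- w = f x' with x' ∈ C (n+1), and w = m * z with m ∈ N₀
      refine ⟨x' * q, ?_, by simpa using hx'⟩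
      have hz' : y * (f (x' * q))⁻¹ = z * w⁻¹ := by
        rw [← hfx]; simp [hz, map_mul]; group
      have hzw : z * w⁻¹ = m⁻¹ := by rw [← hmw]; group
      have hmem : y * (f (x' * q))⁻¹ ∈ N₀ := by
        rw [hz', hzw, ← hN₀s]; exact Set.inv_mem_inv.2 hm
      exact ⟨(hN₀sub hmem).1, Or.inl (hN₀sub hmem).2⟩
    -- recursive construction
    choose step1 hstep1 hstep2 using step
    let Q : (n : ℕ) → {q : A // Inv n q} := fun n =>
      Nat.rec ⟨1, base⟩ (fun n p => ⟨step1 n p.1 p.2, hstep1 n p.1 p.2⟩) n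
    have hQstep : ∀ n, (Q (n+1)).1 * ((Q n).1)⁻¹ ∈ C (n+1) := fun n => hstep2 n (Q n).1 (Q n).2
    set q : ℕ → A := fun n => (Q n).1 with hq
    -- q is Cauchy
    have htel : ∀ k n, q (n+k) * (q n)⁻¹ ∈ C n := telescope hV heA q hQstep
    have hcauchy : (letI := IsTopologicalGroup.rightUniformSpace A; CauchySeq q) := by
      refine cauchySeq_of_div q ?_
      intro X hX
      obtain ⟨k, hk⟩ := hbA X hX
      have hCk : C k ⊆ X := (chain_spec hV heA k).2.2.trans hk
      have hCks : (C k)⁻¹ = C k := (chain_spec hV heA k).2.1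
      refine ⟨k, fun m n hm hn => ?_⟩
      rcases le_total n m with h | h
      · have h1 := htel (m - n) n
        rw [Nat.add_sub_cancel' h] at h1
        rw [div_eq_mul_inv]
        exact hCk (chain_decreasing hV heA hn h1)
      · have h1 := htel (n - m) m
        rw [Nat.add_sub_cancel' h] at h1
        have h2 : q n * (q m)⁻¹ ∈ C k := chain_decreasing hV heA hm h1
        have h3 : (q n * (q m)⁻¹)⁻¹ ∈ C k := by
          rw [← hCks]; exact Set.inv_mem_inv.2 h2
        rw [div_eq_mul_inv]
        have heq : q m * (q n)⁻¹ = (q n * (q m)⁻¹)⁻¹ := by group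
        rw [heq]; exact hCk h3
    obtain ⟨x, hx⟩ := hsc q hcauchy
    have hqn : ∀ n, q n ∈ C 0 := by
      intro n
      have h1 := htel n 0
      have hq0 : q 0 = 1 := rfl
      rw [Nat.zero_add, hq0] at h1
      simpa using h1
    have hxcl : x ∈ closure (C 0) :=
      mem_closure_of_tendsto hx (Filter.Eventually.of_forall hqn)
    have hxV : x ∈ V := by
      have hsub : closure (C 0) ⊆ C 0 * C 0 :=
        closure_subset_mul (hCnh 0) (chain_spec hV heA 0).2.1
      exact chain_zero_sq hV heA (hsub hxcl)
    -- f (q n) converges to y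
    have hz1 : Tendsto (fun n => y * (f (q n))⁻¹) atTop (𝓝 (1:B)) := by
      rw [Filter.tendsto_def]
      intro X hX
      obtain ⟨k, hk⟩ := hbB X hX
      have hMk : M k ⊆ X := ((chain_spec Filter.univ_mem heB k).2.2).trans hk
      rw [Filter.mem_atTop_sets]
      refine ⟨k + 1, fun n hn => ?_⟩
      have hpos : n ≠ 0 := by omega
      have hmem : y * (f (q n))⁻¹ ∈ M n := by
        rcases (Q n).2.2 with h | h
        · exact h
        · exact absurd h hpos
      exact hMk (chain_decreasing Filter.univ_mem heB (by omega : k ≤ n) hmem)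
    have hfq : Tendsto (fun n => f (q n)) atTop (𝓝 (f x)) := (hfc.tendsto x).comp hx
    have hfqy : Tendsto (fun n => f (q n)) atTop (𝓝 y) := by
      have h2 : Tendsto (fun n => (y * (f (q n))⁻¹)⁻¹ * y) atTop (𝓝 ((1:B)⁻¹ * y)) :=
        (hz1.inv).mul tendsto_const_nhds
      have heq : (fun n => (y * (f (q n))⁻¹)⁻¹ * y) = fun n => f (q n) := by
        funext n; group
      rw [heq] at h2
      simpa using h2
    have hfxy : f x = y := tendsto_nhds_unique hfq hfqy
    exact ⟨x, hxV, hfxy⟩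
  have h1 : C 1 ∈ 𝓝 (1:A) := hCnh 1
  exact Filter.mem_of_superset (hdense _ h1) main

end Stmt5Aux8

namespace Stmt5Aux9
open Stmt5Aux Stmt5Aux3 Stmt5Aux6 Filter

lemma isOpenMap_of_nhds_one {G H : Type u} [Group G] [Group H]
    [tG : TopologicalSpace G] [IsTopologicalGroup G] [tH : TopologicalSpace H]
    [IsTopologicalGroup H] (f : G →* H)
    (h : ∀ V ∈ 𝓝 (1:G), f '' V ∈ 𝓝 (1:H)) : IsOpenMap f := by
  intro U hU
  rw [isOpen_iff_mem_nhds]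
  rintro _ ⟨x, hxU, rfl⟩
  have h1 : (fun y => x⁻¹ * y) '' U ∈ 𝓝 (1:G) := by
    have h0 := Filter.image_mem_map (m := fun y => x⁻¹ * y) (hU.mem_nhds hxU)
    rwa [map_mul_left_nhds, inv_mul_cancel] at h0
  have h2 := h _ h1
  have himg : (fun z => f x * z) '' (f '' ((fun y => x⁻¹ * y) '' U)) = f '' U := by
    rw [Set.image_image, Set.image_image]
    apply Set.image_congr
    intro y _
    rw [← map_mul]
    congr 1
    group
  have h3 : (fun z => f x * z) '' (f '' ((fun y => x⁻¹ * y) '' U)) ∈ 𝓝 (f x) := by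
    have h0 := Filter.image_mem_map (m := fun z => f x * z) h2
    rwa [map_mul_left_nhds, mul_one] at h0
  rwa [himg] at h3

lemma countable_subfamily_inter {X : Type u} [TopologicalSpace X] {I : Type}
    [Nonempty I] (Bs : I → Set X)
    (hB : ∀ O : Set X, IsOpen O → ∀ x ∈ O, ∃ n, x ∈ Bs n ∧ Bs n ⊆ O)
    {ι : Type v} [Nonempty ι] (C : ι → Set X) (hC : ∀ i, IsClosed (C i)) :
    ∃ s : I → ι, (⋂ n, C (s n)) = ⋂ i, C i := by
  classical
  refine ⟨fun n => if h : ∃ i, Bs n ⊆ (C i)ᶜ then h.choose else Classical.arbitrary ι, ?_⟩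
  apply Set.Subset.antisymm
  · intro x hx
    rw [Set.mem_iInter]
    intro i
    by_contra hxi
    obtain ⟨n, hxn, hnsub⟩ := hB (C i)ᶜ (hC i).isOpen_compl x hxi
    have hex : ∃ j, Bs n ⊆ (C j)ᶜ := ⟨i, hnsub⟩
    have hxs : x ∉ C (hex.choose) := hex.choose_spec hxn
    rw [Set.mem_iInter] at hx
    have h0 := hx n
    simp only [dif_pos hex] at h0
    exact hxs h0
  · intro x hx
    rw [Set.mem_iInter] at hx ⊢
    intro n
    exact hx _

/-- A countable basis of the topology, from a countable symmetric basis at 1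
and ω-precompactness. -/
lemma exists_countable_basis {G : Type u} [Group G] [tG : TopologicalSpace G]
    [IsTopologicalGroup G] (hω : OmegaPre G) (e : ℕ → Set G)
    (he : ∀ n, e n ∈ 𝓝 (1:G) ∧ (e n)⁻¹ = e n)
    (hbase : ∀ X ∈ 𝓝 (1:G), ∃ n, e n ⊆ X) :
    ∃ Bs : ℕ × ℕ → Set G, ∀ O : Set G, IsOpen O → ∀ x ∈ O, ∃ n, x ∈ Bs n ∧ Bs n ⊆ O := by
  classical
  have hcov : ∀ m : ℕ, ∃ d : ℕ → G, ∀ g : G, ∃ j, g ∈ e m * {d j} :=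
    fun m => omega_cov hω (e m) (he m).1
  choose d hd using hcov
  refine ⟨fun p => e p.1 * {d p.1 p.2}, ?_⟩
  intro O hO x hxO
  -- O is a neighborhood of x, so e n * {x} ⊆ O for some n
  have hOx : O ∈ 𝓝 x := hO.mem_nhds hxO
  have h1 : ∃ n, e n * {x} ⊆ O := by
    have hx1 : (fun y => y * x) ⁻¹' O ∈ 𝓝 (1:G) := by
      have hcont : Continuous (fun y : G => y * x) := continuous_mul_right x
      have h0 := hcont.tendsto 1
      rw [show (1:G) * x = x from by simp] at h0
      exact h0 hOx
    obtain ⟨n, hn⟩ := hbase _ hx1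
    refine ⟨n, ?_⟩
    rintro _ ⟨w, hw, z, hz, rfl⟩
    rw [Set.mem_singleton_iff] at hz
    subst hz
    exact hn hw
  obtain ⟨n, hn⟩ := h1
  -- shrink: e m * e m ⊆ e n
  have h2 : ∃ m, e m * e m ⊆ e n := by
    obtain ⟨V, hVo, hV1, hVs, hVsq⟩ := exists_sym_sq (e n) (he n).1
    obtain ⟨m, hm⟩ := hbase V (hVo.mem_nhds hV1)
    exact ⟨m, (Set.mul_subset_mul hm hm).trans hVsq⟩
  obtain ⟨m, hm⟩ := h2
  obtain ⟨j, hj⟩ := hd m x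
  refine ⟨⟨m, j⟩, hj, ?_⟩
  obtain ⟨w, hw, z, hz, hwz⟩ := hj
  rw [Set.mem_singleton_iff] at hz
  subst hz
  rintro _ ⟨w', hw', z', hz', rfl⟩
  rw [Set.mem_singleton_iff] at hz'
  subst hz'
  -- w' * d = w' * (w⁻¹ * x) ∈ (e m * e m) * {x} ⊆ e n * {x} ⊆ O
  have hdx : d m j = w⁻¹ * x := by rw [← hwz]; group
  have hwmem : w⁻¹ ∈ e m := by
    rw [← (he m).2]; exact Set.inv_mem_inv.2 hw
  show w' * d m j ∈ O
  have heq2 : w' * d m j = (w' * w⁻¹) * x := by rw [hdx]; group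
  rw [heq2]
  refine hn ⟨w' * w⁻¹, hm (Set.mul_mem_mul hw' hwmem), x, rfl, rfl⟩

/-- The kernel of a Guran-type family is closed. -/
lemma kern_closed {G : Type u} [Group G] [tG : TopologicalSpace G] [IsTopologicalGroup G]
    (𝒩 : Set (Set G)) (hgood : ∀ W ∈ 𝒩, good W)
    (hmul : ∀ W ∈ 𝒩, ∃ W' ∈ 𝒩, W' * W' ⊆ W) : IsClosed (⋂₀ 𝒩) := by
  have heq : ⋂₀ 𝒩 = ⋂ W ∈ 𝒩, closure W := by
    apply Set.Subset.antisymm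
    · intro x hx
      rw [Set.mem_iInter₂]
      intro W hW
      exact subset_closure (hx W hW)
    · intro x hx
      rw [Set.mem_iInter₂] at hx
      intro W hW
      obtain ⟨W', hW', hWW⟩ := hmul W hW
      have h1 : closure W' ⊆ W' * W' :=
        closure_subset_mul ((hgood W' hW').nhds) (hgood W' hW').2.2
      exact hWW (h1 (hx W' hW'))
  rw [heq]
  exact isClosed_biInter fun W _ => isClosed_closure

end Stmt5Aux9

namespace Stmt5Main
open Stmt5Aux Stmt5Aux2 Stmt5Aux3 Stmt5Aux4 Stmt5Aux5 Stmt5Aux6 Stmt5Aux7 Stmt5Aux8 Stmt5Aux9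
open Filter

variable {G : Type u} [Group G] [tG : TopologicalSpace G] [IsTopologicalGroup G]

lemma omega_image {H : Type u} [Group H] [tH : TopologicalSpace H] [IsTopologicalGroup H]
    (f : G →* H) (hfc : Continuous f) (hfs : Function.Surjective f)
    (hω : OmegaPre G) : OmegaPre H := by
  intro U hU
  have h1 : f ⁻¹' U ∈ 𝓝 (1:G) := by
    have h0 := hfc.tendsto 1
    rw [map_one] at h0
    exact h0 hU
  obtain ⟨F, hFc, hcov⟩ := hω _ h1
  refine ⟨f '' F, hFc.image f, ?_⟩
  rw [Set.eq_univ_iff_forall]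
  intro y
  obtain ⟨g, rfl⟩ := hfs y
  rcases Set.eq_univ_iff_forall.1 hcov g with ⟨a, ha, b, hb, hab⟩
  refine ⟨f a, ha, f b, ⟨b, hb, rfl⟩, ?_⟩
  show f a * f b = f g
  rw [← map_mul]
  exact congrArg f hab

/-- Core metrizability result. -/
lemma core_metrizable [T2Space G] (hω : OmegaPre G)
    (hs' : ∀ (t' : TopologicalSpace G) (g' : @IsTopologicalGroup G t' _),
        @T2Space G t' → @Continuous G G tG t' (MonoidHom.id G) → @SeqCompl G _ t' g')
    (s : ℕ → Set G) (hso : ∀ n, IsOpen (s n)) (hs1 : (⋂ n, s n) = ({1} : Set G)) :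
    TopologicalSpace.MetrizableSpace G ∧
    ∃ e : ℕ → Set G, (∀ n, e n ∈ 𝓝 (1:G) ∧ (e n)⁻¹ = e n) ∧
      (∀ X ∈ 𝓝 (1:G), ∃ n, e n ⊆ X) := by
  classical
  -- seeds
  have hs1mem : ∀ n, s n ∈ 𝓝 (1:G) := by
    intro n
    refine (hso n).mem_nhds ?_
    have : (1:G) ∈ ⋂ n, s n := by rw [hs1]; rfl
    exact Set.mem_iInter.1 this n
  set T0 : Set (Set G) := ⋃ n, Set.range (fam hω (s n)) with hT0
  have hT0c : T0.Countable := Set.countable_iUnion fun n => Set.countable_range _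
  have hT0g : ∀ X ∈ T0, good X := by
    rintro X hX
    simp only [hT0, Set.mem_iUnion, Set.mem_range] at hX
    obtain ⟨n, m, rfl⟩ := hX
    exact fam_good hω (hs1mem n) m
  have hT0ne : T0.Nonempty := ⟨fam hω (s 0) 0, Set.mem_iUnion.2 ⟨0, ⟨0, rfl⟩⟩⟩
  -- the separation property (for any family containing T0)
  have hsep : ∀ (T1 : Set (Set G)), T0 ⊆ T1 →
      ∀ x : G, x ≠ 1 → ∃ W ∈ guranN hω T1, x ∉ W := by
    intro T1 hT1 x hx
    have : ¬ (x ∈ ⋂ n, s n) := by rw [hs1]; exact hx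
    rw [Set.mem_iInter] at this
    push_neg at this
    obtain ⟨n, hn⟩ := this
    refine ⟨fam hω (s n) 0, guranN_T0 (hT1 (Set.mem_iUnion.2 ⟨n, ⟨0, rfl⟩⟩)), ?_⟩
    intro hmem
    exact hn (guranN_sub_seed (hs1mem n) 0 hmem)
  -- base basis B0
  set B0 : GroupFilterBasis G := guranBasis hω T0 hT0g hT0ne with hB0
  have hB0sets : B0.sets = guranN hω T0 := rfl
  have hB0good : ∀ W ∈ B0.sets, good W := guranN_good hT0g
  have hB0t2 : @T2Space G B0.topology := by
    refine basis_t2 B0 fun x hx => ?_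
    obtain ⟨W, hW, hxW⟩ := hsep T0 subset_rfl x hx
    exact ⟨W, hW, hxW⟩
  have hB0cont : @Continuous G G tG B0.topology (MonoidHom.id G) := by
    refine basis_continuous B0 (MonoidHom.id G) fun W hW => ?_
    simpa using (hB0good W hW).nhds
  have hB0sc : @SeqCompl G _ B0.topology B0.isTopologicalGroup :=
    hs' B0.topology B0.isTopologicalGroup hB0t2 hB0cont
  have hB0cg : (@nhds G B0.topology 1).IsCountablyGenerated :=
    basis_countably_generated B0 (guranN_countable hT0c)
  have hB0baire : @BaireSpace G B0.topology :=
    @baire_of_seqCompl G _ B0.topology B0.isTopologicalGroup hB0cg hB0sc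
  -- now fix U ∈ 𝓝 1 and show U ∈ 𝓝[B0] 1
  have key : ∀ U ∈ 𝓝 (1:G), U ∈ @nhds G B0.topology 1 := by
    intro U hU
    set T0U : Set (Set G) := T0 ∪ Set.range (fam hω U) with hT0U
    have hT0Uc : T0U.Countable := hT0c.union (Set.countable_range _)
    have hT0Ug : ∀ X ∈ T0U, good X := by
      rintro X (hX | hX)
      · exact hT0g X hX
      · obtain ⟨m, rfl⟩ := hX
        exact fam_good hω hU m
    have hT0Une : T0U.Nonempty := hT0ne.mono Set.subset_union_left
    set BU : GroupFilterBasis G := guranBasis hω T0U hT0Ug hT0Une with hBU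
    have hBUsets : BU.sets = guranN hω T0U := rfl
    have hsub : B0.sets ⊆ BU.sets := guranN_mono Set.subset_union_left
    have hBUgood : ∀ W ∈ BU.sets, good W := guranN_good hT0Ug
    have hBUt2 : @T2Space G BU.topology := by
      refine basis_t2 BU fun x hx => ?_
      obtain ⟨W, hW, hxW⟩ := hsep T0U Set.subset_union_left x hx
      exact ⟨W, hW, hxW⟩
    have hBUcont : @Continuous G G tG BU.topology (MonoidHom.id G) := by
      refine basis_continuous BU (MonoidHom.id G) fun W hW => ?_
      simpa using (hBUgood W hW).nhds
    have hBUsc : @SeqCompl G _ BU.topology BU.isTopologicalGroup :=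
      hs' BU.topology BU.isTopologicalGroup hBUt2 hBUcont
    -- continuity id : (G, BU) → (G, B0)
    have hid : @Continuous G G BU.topology B0.topology (MonoidHom.id G) := by
      refine @basis_continuous G _ tG _ B0 G _ BU.topology BU.isTopologicalGroup
        (MonoidHom.id G) ?_
      intro W hW
      simpa using BU.mem_nhds_one (hsub hW)
    -- nearly open
    have hdense : ∀ X ∈ @nhds G BU.topology 1,
        @closure G B0.topology ((MonoidHom.id G) '' X) ∈ @nhds G B0.topology 1 := by
      intro X hX
      obtain ⟨A, hA, hAX⟩ := (basis_mem_nhds_iff BU).1 hX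
      obtain ⟨A', hA', hA'A⟩ := guranN_mul hT0Ug hA
      have hA'good := hBUgood A' hA'
      obtain ⟨F, hFc, hFcov⟩ := hω A' hA'good.nhds
      have hno := @nearly_open G _ B0.topology B0.isTopologicalGroup A' F hB0baire
        hA'good.2.2 hFc hFcov
      refine Filter.mem_of_superset hno ?_
      refine @closure_mono G B0.topology _ _ ?_
      refine hA'A.trans (hAX.trans ?_)
      simp
    -- bases
    obtain ⟨eU, heU, heU2⟩ := basis_enum BU (guranN_countable hT0Uc)
    obtain ⟨e0, he0, he02⟩ := basis_enum B0 (guranN_countable hT0c)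
    have hban := @banach_open G G _ _ BU.topology BU.isTopologicalGroup
      B0.topology B0.isTopologicalGroup hB0t2 (MonoidHom.id G) hid hBUsc
      eU (fun n => BU.mem_nhds_one (heU n)) (fun X hX => (heU2 X).1 hX)
      e0 (fun n => B0.mem_nhds_one (he0 n)) (fun X hX => (he02 X).1 hX)
      hdense
    have hUmem : U ∈ @nhds G BU.topology 1 := by
      rw [basis_mem_nhds_iff BU]
      exact ⟨fam hω U 0, guranN_T0 (Set.mem_union_right _ ⟨0, rfl⟩),
        guranN_sub_seed hU 0⟩
    have := hban U hUmem
    simpa using this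
  -- neighborhoods agree
  have hnhds : @nhds G tG 1 = @nhds G B0.topology 1 := by
    apply le_antisymm
    · rw [Filter.le_def]
      intro X hX
      exact basis_le_nhds B0 (fun W hW => ⟨(hB0good W hW).1, (hB0good W hW).2.1⟩) hX
    · rw [Filter.le_def]
      intro X hX
      exact key X hX
  have hteq : tG = B0.topology :=
    IsTopologicalGroup.ext ‹_› B0.isTopologicalGroup hnhds
  -- metrizability
  have hcg : (@nhds G tG 1).IsCountablyGenerated := by
    rw [hnhds]; exact hB0cg
  have hmetr : TopologicalSpace.MetrizableSpace G := by
    letI UG : UniformSpace G := IsTopologicalGroup.rightUniformSpace G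
    haveI : (@uniformity G UG).IsCountablyGenerated := by
      show (Filter.comap (fun p : G × G => p.2 * p.1⁻¹) (𝓝 1)).IsCountablyGenerated
      exact Filter.comap.isCountablyGenerated _ _
    exact UniformSpace.metrizableSpace
  -- basis at 1
  obtain ⟨e0, he0, he02⟩ := basis_enum B0 (guranN_countable hT0c)
  refine ⟨hmetr, e0, ?_, ?_⟩
  · intro n
    exact ⟨(hB0good _ (he0 n)).nhds, (hB0good _ (he0 n)).2.2⟩
  · intro X hX
    rw [hnhds] at hX
    exact (he02 X).1 hX

lemma image_inv_hom {H : Type u} [Group H] (f : G →* H) (s : Set G) :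
    (f '' s)⁻¹ = f '' s⁻¹ := by
  ext y
  simp only [Set.mem_inv, Set.mem_image]
  constructor
  · rintro ⟨v, hv, hfv⟩
    exact ⟨v⁻¹, by simpa using hv, by rw [map_inv, hfv]; group⟩
  · rintro ⟨v, hv, rfl⟩
    exact ⟨v⁻¹, by simpa using hv, by rw [map_inv]⟩

lemma core_minimal {H : Type u} [Group H] [tH : TopologicalSpace H] [IsTopologicalGroup H]
    [T2Space H]
    (hω : OmegaPre G)
    (f : G →* H) (hfc : Continuous f) (hfs : Function.Surjective f)
    (hsG : SeqCompl G)
    (hsH : ∀ (t' : TopologicalSpace H) (g' : @IsTopologicalGroup H t' _),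
        @T2Space H t' → @Continuous G H tG t' f → @SeqCompl H _ t' g')
    (eG : ℕ → Set G) (heG : ∀ n, eG n ∈ 𝓝 (1:G) ∧ (eG n)⁻¹ = eG n)
    (hbG : ∀ X ∈ 𝓝 (1:G), ∃ n, eG n ⊆ X) :
    IsOpenMap f := by
  classical
  have hpre : ∀ W ∈ 𝓝 (1:H), f ⁻¹' W ∈ 𝓝 (1:G) := by
    intro W hW
    have h0 := hfc.tendsto 1
    rw [map_one] at h0
    exact h0 hW
  have hωH : OmegaPre H := omega_image f hfc hfs hω
  -- countable basis of G
  obtain ⟨Bs, hBs⟩ := exists_countable_basis hω eG heG hbG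
  -- Guran kernels on H
  set T0W : {W : Set H // W ∈ 𝓝 (1:H)} → Set (Set H) :=
    fun W => Set.range (fam hωH W.1) with hT0W
  have hT0Wg : ∀ W, ∀ X ∈ T0W W, good X := by
    rintro W X ⟨m, rfl⟩
    exact fam_good hωH W.2 m
  set N : {W : Set H // W ∈ 𝓝 (1:H)} → Set H :=
    fun W => ⋂₀ (guranN hωH (T0W W)) with hN
  have hNone : ∀ W, (1:H) ∈ N W := by
    intro W
    intro A hA
    exact (guranN_good (hT0Wg W) A hA).2.1
  have hNsubW : ∀ W, N W ⊆ W.1 := by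
    intro W
    intro x hx
    have h1 : fam hωH W.1 0 ∈ guranN hωH (T0W W) := guranN_T0 ⟨0, rfl⟩
    exact guranN_sub_seed W.2 0 (hx _ h1)
  have hNclosed : ∀ W, IsClosed (N W) := by
    intro W
    exact kern_closed _ (guranN_good (hT0Wg W)) (fun A hA => guranN_mul (hT0Wg W) hA)
  haveI : Nonempty {W : Set H // W ∈ 𝓝 (1:H)} := ⟨⟨Set.univ, Filter.univ_mem⟩⟩
  set C : {W : Set H // W ∈ 𝓝 (1:H)} → Set G := fun W => f ⁻¹' (N W) with hC
  have hCclosed : ∀ W, IsClosed (C W) := fun W => (hNclosed W).preimage hfc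
  obtain ⟨σ, hσ⟩ := countable_subfamily_inter Bs hBs C hCclosed
  have hinterG : (⋂ i, C i) = f ⁻¹' {1} := by
    apply Set.Subset.antisymm
    · intro x hx
      rw [Set.mem_iInter] at hx
      by_contra hfx
      have hfx1 : f x ≠ 1 := by simpa using hfx
      have hopen : IsOpen ({f x}ᶜ : Set H) := isOpen_compl_singleton
      have hmem1 : (1:H) ∈ ({f x}ᶜ : Set H) := by simpa using (Ne.symm hfx1)
      have hW : ({f x}ᶜ : Set H) ∈ 𝓝 (1:H) := hopen.mem_nhds hmem1
      have := hNsubW ⟨{f x}ᶜ, hW⟩ (hx ⟨{f x}ᶜ, hW⟩)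
      simp at this
    · intro x hx
      rw [Set.mem_iInter]
      intro W
      have : f x = 1 := by simpa using hx
      show f x ∈ N W
      rw [this]
      exact hNone W
  have hinterH : (⋂ p : ℕ × ℕ, N (σ p)) = ({1} : Set H) := by
    apply Set.Subset.antisymm
    · intro y hy
      obtain ⟨x, rfl⟩ := hfs y
      have hxC : x ∈ ⋂ p : ℕ × ℕ, C (σ p) := by
        rw [Set.mem_iInter] at hy ⊢
        intro p
        exact hy p
      rw [hσ, hinterG] at hxC
      simpa using hxC
    · intro y hy
      rw [Set.mem_singleton_iff] at hy
      subst hy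
      rw [Set.mem_iInter]
      intro p
      exact hNone (σ p)
  -- the metrizable topology on H
  set T0s : Set (Set H) := ⋃ p : ℕ × ℕ, T0W (σ p) with hT0s
  have hT0sc : T0s.Countable := Set.countable_iUnion fun p => Set.countable_range _
  have hT0sg : ∀ X ∈ T0s, good X := by
    rintro X hX
    obtain ⟨p, hp⟩ := Set.mem_iUnion.1 hX
    exact hT0Wg (σ p) X hp
  have hT0sne : T0s.Nonempty := ⟨fam hωH (σ (0,0)).1 0,
    Set.mem_iUnion.2 ⟨(0,0), ⟨0, rfl⟩⟩⟩
  set Bst : GroupFilterBasis H := guranBasis hωH T0s hT0sg hT0sne with hBst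
  have hBstgood : ∀ W ∈ Bst.sets, good W := guranN_good hT0sg
  have hBstt2 : @T2Space H Bst.topology := by
    refine basis_t2 Bst fun y hy => ?_
    have : y ∉ (⋂ p : ℕ × ℕ, N (σ p)) := by rw [hinterH]; simpa using hy
    rw [Set.mem_iInter] at this
    push_neg at this
    obtain ⟨p, hp⟩ := this
    have : ∃ A ∈ guranN hωH (T0W (σ p)), y ∉ A := by
      by_contra hcon
      push_neg at hcon
      exact hp (fun A hA => hcon A hA)
    obtain ⟨A, hA, hyA⟩ := this
    exact ⟨A, guranN_mono (Set.subset_iUnion (fun p => T0W (σ p)) p) hA, hyA⟩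
  have hfμcont : @Continuous G H tG Bst.topology f :=
    basis_continuous Bst f fun W hW => hpre W (hBstgood W hW).nhds
  have hscμ : @SeqCompl H _ Bst.topology Bst.isTopologicalGroup :=
    hsH Bst.topology Bst.isTopologicalGroup hBstt2 hfμcont
  have hcgμ : (@nhds H Bst.topology 1).IsCountablyGenerated :=
    basis_countably_generated Bst (guranN_countable hT0sc)
  have hbaireμ : @BaireSpace H Bst.topology :=
    @baire_of_seqCompl H _ Bst.topology Bst.isTopologicalGroup hcgμ hscμ
  -- nearly open
  have hdense : ∀ X ∈ 𝓝 (1:G),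
      @closure H Bst.topology (f '' X) ∈ @nhds H Bst.topology 1 := by
    intro X hX
    obtain ⟨V', hV'o, hV'1, hV's, hV'sq⟩ := exists_sym_sq X hX
    obtain ⟨F, hFc, hFcov⟩ := hω V' (hV'o.mem_nhds hV'1)
    have hAsym : (f '' V')⁻¹ = f '' V' := by
      rw [image_inv_hom, hV's]
    have hcovH : (f '' V') * (f '' F) = Set.univ := by
      rw [← Set.image_mul]
      rw [hFcov]
      rw [Set.image_univ]
      exact Set.range_eq_univ.2 hfs
    have hno := @nearly_open H _ Bst.topology Bst.isTopologicalGroup (f '' V') (f '' F)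
      hbaireμ hAsym (hFc.image f) hcovH
    refine Filter.mem_of_superset hno ?_
    refine @closure_mono H Bst.topology _ _ ?_
    rw [← Set.image_mul]
    exact Set.image_mono hV'sq
  -- Banach scheme
  obtain ⟨eH, heH, heH2⟩ := basis_enum Bst (guranN_countable hT0sc)
  have hban := @banach_open G H _ _ tG _ Bst.topology Bst.isTopologicalGroup hBstt2
    f hfμcont hsG
    eG (fun n => (heG n).1) hbG
    eH (fun n => Bst.mem_nhds_one (heH n)) (fun X hX => (heH2 X).1 hX)
    hdense
  -- conclude
  refine isOpenMap_of_nhds_one f ?_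
  intro V hV
  have h1 := hban V hV
  exact basis_le_nhds Bst (fun W hW => ⟨(hBstgood W hW).1, (hBstgood W hW).2.1⟩) h1

end Stmt5Main

end AuxSection

lemma seqCompl_conv {H : Type u} [Group H] [tH : TopologicalSpace H] [IsTopologicalGroup H]
    (h : SeqComplete H) : Stmt5Aux5.SeqCompl H := h

set_option maxHeartbeats 1000000 in
/-- Every ω-precompact sequentially h-complete Hausdorff group of countable
pseudocharacter is totally minimal and metrizable. -/
theorem stmt5 (G : Type u) [Group G] [TopologicalSpace G] [IsTopologicalGroup G] [T2Space G]
    (hω : OmegaPrecompact G) (hs : SeqHComplete G) (hψ : CountablePseudocharacter G) :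
    TotallyMinimal G ∧ TopologicalSpace.MetrizableSpace G := by
  classical
  obtain ⟨s, hso, hs1⟩ := hψ
  have hω' : Stmt5Aux.OmegaPre G := hω
  obtain ⟨hmetr, e0, he0, hb0⟩ := Stmt5Main.core_metrizable hω'
    (fun t' g' ht2 hcont => by
      letI := t'
      haveI := g'
      haveI := ht2
      exact seqCompl_conv (hs G (MonoidHom.id G) hcont Function.surjective_id))
    s hso hs1
  refine ⟨?_, hmetr⟩
  intro H _ _ _ _ f hfc hfs
  have hsG : Stmt5Aux5.SeqCompl G := by
    have h1 : Continuous (⇑(MonoidHom.id G)) := continuous_id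
    exact seqCompl_conv (hs G (MonoidHom.id G) h1 Function.surjective_id)
  exact Stmt5Main.core_minimal hω' f hfc hfs hsG
    (fun t' g' ht2 hcont => by
      letI := t'
      haveI := g'
      haveI := ht2
      exact seqCompl_conv (hs H f hcont hfs)) e0 he0 hb0
end

section
/- Every ω-precompact, sequentially h-complete Hausdorff topological group G densely embeds into the projective limit of its metrizable quotient groups G/N (taken over closed normal subgroups N with G/N metrizable). -/
open Topology Pointwise

universe u

/-- The index of metrizable quotients of `G`: closed normal subgroups `N`
with `G ⧸ N` metrizable. -/
def MetQuotIdx (G : Type u) [Group G] [TopologicalSpace G] [IsTopologicalGroup G] :=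
  {N : Subgroup G // N.Normal ∧ IsClosed (N : Set G) ∧
    TopologicalSpace.MetrizableSpace (G ⧸ N)}

/-- The canonical map from `G` into the product of its metrizable quotients. -/
def canonMap (G : Type u) [Group G] [TopologicalSpace G] [IsTopologicalGroup G] :
    G → ∀ N : MetQuotIdx G, G ⧸ N.val := fun g _ => QuotientGroup.mk g

/-- The projective limit of the metrizable quotients of `G`, realized as the
set of compatible threads in the product. -/
def projLimit (G : Type u) [Group G] [TopologicalSpace G] [IsTopologicalGroup G] :
    Set (∀ N : MetQuotIdx G, G ⧸ N.val) :=
  {x | ∀ (N M : MetQuotIdx G) (h : N.val ≤ M.val),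
    haveI := N.prop.1
    haveI := M.prop.1
    QuotientGroup.map N.val M.val (MonoidHom.id G) (fun _ ha => h ha) (x N) = x M}


/-! ### Auxiliary machinery -/

section Aux

open Filter Set

variable {G : Type u} [Group G] [TopologicalSpace G] [IsTopologicalGroup G]

theorem aux_symm_open {U : Set G} (hU : U ∈ 𝓝 (1 : G)) :
    ∃ V : Set G, IsOpen V ∧ (1 : G) ∈ V ∧ V⁻¹ = V ∧ V * V ⊆ U := by
  obtain ⟨V, hVo, hV1, hVU⟩ := exists_open_nhds_one_mul_subset hU
  refine ⟨V ∩ V⁻¹, hVo.inter hVo.inv, ⟨hV1, by simpa using hV1⟩, ?_, ?_⟩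
  · simp [Set.inter_inv, Set.inter_comm]
  · exact (Set.mul_subset_mul inter_subset_left inter_subset_left).trans hVU

theorem aux_bal (hω : OmegaPrecompact G) {U : Set G} (hU : U ∈ 𝓝 (1 : G)) :
    ∃ W : ℕ → Set G, (∀ n, IsOpen (W n) ∧ (1 : G) ∈ W n ∧ (W n)⁻¹ = W n) ∧
      ∀ x : G, ∃ n, ∀ w ∈ W n, x * w * x⁻¹ ∈ U := by
  obtain ⟨S₁, hS₁o, hS₁1, hS₁s, hS₁U⟩ := aux_symm_open hU
  obtain ⟨S, hSo, hS1, hSs, hSS⟩ := aux_symm_open (hS₁o.mem_nhds hS₁1)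
  have hSsub : S ⊆ S₁ := fun a ha => by
    have : a * 1 ∈ S * S := Set.mul_mem_mul ha hS1
    simpa using hSS this
  have h3 : ∀ s ∈ S, ∀ t ∈ S, ∀ u ∈ S, s * t * u ∈ U := fun s hs t ht u hu =>
    hS₁U (Set.mul_mem_mul (hSS (Set.mul_mem_mul hs ht)) (hSsub hu))
  obtain ⟨F, hFc, hFU⟩ := hω S (hSo.mem_nhds hS1)
  have hFne : F.Nonempty := by
    by_contra h
    rw [Set.not_nonempty_iff_eq_empty] at h
    rw [h, Set.mul_empty] at hFU
    exact Set.empty_ne_univ hFU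
  obtain ⟨f, hf⟩ := Set.Countable.exists_eq_range hFc hFne
  have hcont : ∀ n, Continuous fun w : G => f n * w * (f n)⁻¹ := fun n =>
    (continuous_mul_right _).comp (continuous_mul_left _)
  have hTmem : ∀ n, (fun w : G => f n * w * (f n)⁻¹) ⁻¹' S ∈ 𝓝 (1 : G) := fun n => by
    apply (hcont n).continuousAt.preimage_mem_nhds
    simpa using hSo.mem_nhds hS1
  choose W hWo hW1 hWs hWsub using fun n => aux_symm_open (hTmem n)
  have hWT : ∀ n, W n ⊆ (fun w : G => f n * w * (f n)⁻¹) ⁻¹' S := fun n a ha => by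
    have := hWsub n (Set.mul_mem_mul ha (hW1 n))
    simpa using this
  refine ⟨W, fun n => ⟨hWo n, hW1 n, hWs n⟩, ?_⟩
  intro x
  have hx : x ∈ S * F := by rw [hFU]; trivial
  obtain ⟨s, hs, y, hy, rfl⟩ := hx
  rw [hf] at hy; obtain ⟨n, rfl⟩ := hy
  refine ⟨n, fun w hw => ?_⟩
  have hw' : f n * w * (f n)⁻¹ ∈ S := hWT n hw
  have heq : s * f n * w * (s * f n)⁻¹ = s * (f n * w * (f n)⁻¹) * s⁻¹ := by group
  rw [heq]
  exact h3 s hs _ hw' s⁻¹ (hSs ▸ Set.inv_mem_inv.2 hs)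

/-- A countable family of symmetric open neighborhoods of `1` closed under the operations
needed to generate a (coarser) metrizable group topology. -/
structure NiceFam (B : Set (Set G)) : Prop where
  countable : B.Countable
  nonempty : B.Nonempty
  nice : ∀ V ∈ B, IsOpen V ∧ (1 : G) ∈ V ∧ V⁻¹ = V
  inter : ∀ V ∈ B, ∀ W ∈ B, V ∩ W ∈ B
  sq : ∀ V ∈ B, ∃ W ∈ B, W * W ⊆ V
  conj : ∀ x : G, ∀ V ∈ B, ∃ W ∈ B, ∀ w ∈ W, x * w * x⁻¹ ∈ V

theorem NiceFam.mem_nhds {B : Set (Set G)} (h : NiceFam B) {V : Set G} (hV : V ∈ B) :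
    V ∈ 𝓝 (1 : G) :=
  (h.nice V hV).1.mem_nhds (h.nice V hV).2.1

theorem exists_niceFam (hω : OmegaPrecompact G) (seed : ℕ → Set G)
    (hseed : ∀ n, seed n ∈ 𝓝 (1 : G)) (B₀ : Set (Set G)) (hB₀c : B₀.Countable)
    (hB₀ : ∀ V ∈ B₀, IsOpen V ∧ (1 : G) ∈ V ∧ V⁻¹ = V) :
    ∃ B, B₀ ⊆ B ∧ NiceFam B ∧ ∀ n, ∃ V ∈ B, V ⊆ seed n := by
  classical
  have hsq : ∀ V : Set G, ∃ W : Set G, (IsOpen W ∧ (1 : G) ∈ W ∧ W⁻¹ = W) ∧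
      (V ∈ 𝓝 (1 : G) → W * W ⊆ V) := by
    intro V
    by_cases h : V ∈ 𝓝 (1 : G)
    · obtain ⟨W, h1, h2, h3, h4⟩ := aux_symm_open h
      exact ⟨W, ⟨h1, h2, h3⟩, fun _ => h4⟩
    · exact ⟨univ, ⟨isOpen_univ, trivial, Set.inv_univ⟩, fun h' => absurd h' h⟩
  choose sq hsqN hsqP using hsq
  have hbal : ∀ V : Set G, ∃ W : ℕ → Set G,
      (∀ n, IsOpen (W n) ∧ (1 : G) ∈ W n ∧ (W n)⁻¹ = W n) ∧
      (V ∈ 𝓝 (1 : G) → ∀ x : G, ∃ n, ∀ w ∈ W n, x * w * x⁻¹ ∈ V) := by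
    intro V
    by_cases h : V ∈ 𝓝 (1 : G)
    · obtain ⟨W, h1, h2⟩ := aux_bal hω h
      exact ⟨W, h1, fun _ => h2⟩
    · exact ⟨fun _ => univ, fun _ => ⟨isOpen_univ, trivial, Set.inv_univ⟩,
        fun h' => absurd h' h⟩
  choose bal hbalN hbalP using hbal
  set step : Set (Set G) → Set (Set G) := fun A =>
    ((A ∪ (sq '' A)) ∪ ⋃ V ∈ A, Set.range (bal V)) ∪ Set.image2 (· ∩ ·) A A with hstep
  set Fam : ℕ → Set (Set G) := fun n =>
    Nat.rec (B₀ ∪ Set.range fun n => sq (seed n)) (fun _ A => step A) n with hFam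
  have hFamS : ∀ n, Fam (n + 1) = step (Fam n) := fun n => rfl
  have hstepsub : ∀ A : Set (Set G), A ⊆ step A := fun A =>
    (subset_union_left.trans subset_union_left).trans subset_union_left
  have hmono : Monotone Fam := monotone_nat_of_le_succ fun n => hstepsub _
  have hnice : ∀ n, ∀ V ∈ Fam n, IsOpen V ∧ (1 : G) ∈ V ∧ V⁻¹ = V := by
    intro n; induction n with
    | zero =>
      rintro V (h | ⟨m, rfl⟩)
      exacts [hB₀ V h, hsqN _]
    | succ n ih =>
      rintro V (((h | ⟨W, hW, rfl⟩) | h) | h)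
      · exact ih V h
      · exact hsqN W
      · simp only [mem_iUnion] at h
        obtain ⟨W, hW, m, rfl⟩ := h
        exact hbalN W m
      · obtain ⟨V1, h1, V2, h2, rfl⟩ := h
        obtain ⟨o1, m1, s1⟩ := ih V1 h1
        obtain ⟨o2, m2, s2⟩ := ih V2 h2
        exact ⟨o1.inter o2, ⟨m1, m2⟩, by rw [Set.inter_inv, s1, s2]⟩
  have hcount : ∀ n, (Fam n).Countable := by
    intro n; induction n with
    | zero => exact hB₀c.union (countable_range _)
    | succ n ih =>
      refine (((ih.union (ih.image _)).union ?_).union (Set.Countable.image2 ih ih _))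
      exact ih.biUnion fun V _ => countable_range _
  refine ⟨⋃ n, Fam n, ?_, ?_, ?_⟩
  · exact subset_union_left.trans (subset_iUnion Fam 0)
  · refine ⟨countable_iUnion hcount, ?_, ?_, ?_, ?_, ?_⟩
    · exact ⟨sq (seed 0), mem_iUnion.2 ⟨0, Or.inr ⟨0, rfl⟩⟩⟩
    · intro V hV
      obtain ⟨n, hn⟩ := mem_iUnion.1 hV
      exact hnice n V hn
    · intro V hV W hW
      obtain ⟨a, ha⟩ := mem_iUnion.1 hV
      obtain ⟨b, hb⟩ := mem_iUnion.1 hW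
      have haV : V ∈ Fam (max a b) := hmono (le_max_left a b) ha
      have hbW : W ∈ Fam (max a b) := hmono (le_max_right a b) hb
      exact mem_iUnion.2 ⟨max a b + 1, Or.inr (Set.mem_image2_of_mem haV hbW)⟩
    · intro V hV
      obtain ⟨n, hn⟩ := mem_iUnion.1 hV
      have hVnb : V ∈ 𝓝 (1 : G) := (hnice n V hn).1.mem_nhds (hnice n V hn).2.1
      exact ⟨sq V, mem_iUnion.2 ⟨n + 1, Or.inl (Or.inl (Or.inr ⟨V, hn, rfl⟩))⟩, hsqP V hVnb⟩
    · intro x V hV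
      obtain ⟨n, hn⟩ := mem_iUnion.1 hV
      have hVnb : V ∈ 𝓝 (1 : G) := (hnice n V hn).1.mem_nhds (hnice n V hn).2.1
      obtain ⟨m, hm⟩ := hbalP V hVnb x
      refine ⟨bal V m, mem_iUnion.2 ⟨n + 1, Or.inl (Or.inr ?_)⟩, hm⟩
      simp only [mem_iUnion]
      exact ⟨V, hn, m, rfl⟩
  · intro n
    refine ⟨sq (seed n), mem_iUnion.2 ⟨0, Or.inr ⟨n, rfl⟩⟩, ?_⟩
    intro a ha
    have h1 : (1 : G) ∈ sq (seed n) := (hsqN (seed n)).2.1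
    have := hsqP (seed n) (hseed n) (Set.mul_mem_mul ha h1)
    simpa using this

end Aux


section PureBasic

open Filter Set

variable {H : Type u} [Group H]

theorem pure_t2 (t : TopologicalSpace H) (ht : @IsTopologicalGroup H t _)
    (hsep : ∀ x : H, x ≠ 1 → ∃ U ∈ @nhds H t 1, x ∉ U) : @T2Space H t := by
  letI := t; haveI := ht
  exact IsTopologicalGroup.t2Space_of_one_sep hsep

theorem pure_baire (t : TopologicalSpace H) (ht : @IsTopologicalGroup H t _)
    (hcg : (@nhds H t 1).IsCountablyGenerated) (hseq : @SeqComplete H _ t ht) :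
    @BaireSpace H t := by
  letI := t; haveI := ht; haveI := hcg
  letI u : UniformSpace H := IsTopologicalGroup.rightUniformSpace H
  haveI : (uniformity H).IsCountablyGenerated := by
    rw [uniformity_eq_comap_nhds_one']
    exact Filter.comap.isCountablyGenerated _ _
  haveI : CompleteSpace H := UniformSpace.complete_of_cauchySeq_tendsto hseq
  letI pm : PseudoMetricSpace H := UniformSpace.pseudoMetricSpace H
  exact BaireSpace.of_completelyPseudoMetrizable

theorem pure_one_mem (t : TopologicalSpace H) {V : Set H} (hV : V ∈ @nhds H t 1) :
    (1 : H) ∈ V := by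
  letI := t; exact mem_of_mem_nhds hV

theorem pure_symm_shrink (t : TopologicalSpace H) (ht : @IsTopologicalGroup H t _) {U : Set H}
    (hU : U ∈ @nhds H t 1) : ∃ V : Set H, V ∈ @nhds H t 1 ∧ V⁻¹ = V ∧ V * V ⊆ U := by
  letI := t; haveI := ht
  obtain ⟨V, h1, h2, h3, h4⟩ := aux_symm_open hU
  exact ⟨V, h1.mem_nhds h2, h3, h4⟩

theorem pure_closure_subset (t : TopologicalSpace H) (ht : @IsTopologicalGroup H t _)
    {s S : Set H} (hS : S ∈ @nhds H t 1) (hSs : S⁻¹ = S) : @closure H t s ⊆ s * S := by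
  letI := t; haveI := ht
  intro a ha
  have hnb : (fun y => a * y) '' S ∈ 𝓝 a := by
    have := (isOpenMap_mul_left a).image_mem_nhds hS
    simpa using this
  obtain ⟨x, ⟨y, hy, rfl⟩, hx2⟩ := mem_closure_iff_nhds.mp ha _ hnb
  have heq : a = a * y * y⁻¹ := by group
  rw [heq]
  exact Set.mul_mem_mul hx2 (hSs ▸ Set.inv_mem_inv.2 hy)

theorem pure_mem_closure (t : TopologicalSpace H) {q : ℕ → H} {y : H} {s : Set H}
    (hy : Filter.Tendsto q Filter.atTop (@nhds H t y)) (hq : ∀ n, q n ∈ s) :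
    y ∈ @closure H t s := by
  letI := t
  exact mem_closure_of_tendsto hy (Filter.Eventually.of_forall hq)

theorem pure_seq_limit (σ : TopologicalSpace H) (hσg : @IsTopologicalGroup H σ _)
    (hσseq : @SeqComplete H _ σ hσg) (A : ℕ → Set H)
    (hA : (@nhds H σ 1).HasAntitoneBasis A)
    (q : ℕ → H) (W : ℕ → Set H) (hWA : ∀ n, W n ⊆ A n) (hWsymm : ∀ n, (W n)⁻¹ = W n)
    (hkey : ∀ m n, n ≤ m → q m * (q n)⁻¹ ∈ W n) :
    ∃ y : H, Filter.Tendsto q Filter.atTop (@nhds H σ y) := by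
  letI := σ; haveI := hσg
  letI u : UniformSpace H := IsTopologicalGroup.rightUniformSpace H
  apply hσseq
  rw [cauchySeq_iff]
  intro S hS
  obtain ⟨T, hT, hTS⟩ := Filter.mem_comap.mp hS
  obtain ⟨k, -, hk⟩ := hA.1.mem_iff.mp hT
  refine ⟨k, fun a ha b hb => ?_⟩
  apply hTS
  show q b * (q a)⁻¹ ∈ T
  rcases le_total a b with h | h
  · exact hk (hA.antitone ha (hWA a (hkey b a h)))
  · have h1 : q a * (q b)⁻¹ ∈ W b := hkey a b h
    have h2 : q b * (q a)⁻¹ = (q a * (q b)⁻¹)⁻¹ := by group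
    rw [h2]
    exact hk (hA.antitone hb (hWA b ((hWsymm b) ▸ Set.inv_mem_inv.2 h1)))

theorem omt_core (ρ σ : TopologicalSpace H)
    (hρg : @IsTopologicalGroup H ρ _) (hσg : @IsTopologicalGroup H σ _)
    (hρT1 : @T1Space H ρ) (hρb : @BaireSpace H ρ)
    (hρcg : (@nhds H ρ 1).IsCountablyGenerated)
    (hσcg : (@nhds H σ 1).IsCountablyGenerated)
    (hfine : σ ≤ ρ)
    (hσseq : @SeqComplete H _ σ hσg)
    (hcov : ∀ W ∈ @nhds H σ 1, ∃ F : Set H, F.Countable ∧ W * F = Set.univ) :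
    @nhds H ρ 1 ≤ @nhds H σ 1 := by
  letI := ρ; haveI := hρg; haveI := hρT1; haveI := hρb
  have hρσ : ∀ x : H, @nhds H σ x ≤ 𝓝 x := fun x => nhds_mono hfine
  -- Step 1: almost-openness via Baire category
  have step1 : ∀ W : Set H, W ∈ @nhds H σ 1 → W⁻¹ = W → closure (W * W) ∈ 𝓝 (1 : H) := by
    intro W hW hWs
    obtain ⟨F, hFc, hFU⟩ := hcov W hW
    haveI : Countable F := hFc.to_subtype
    have hclosed : ∀ i : F, IsClosed ((fun y => y * (i : H)) '' closure W) := fun i =>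
      (Homeomorph.mulRight (i : H)).isClosedMap _ isClosed_closure
    have hcover : ⋃ i : F, (fun y => y * (i : H)) '' closure W = Set.univ := by
      ext x
      simp only [Set.mem_iUnion, Set.mem_univ, iff_true]
      have hx : x ∈ W * F := by rw [hFU]; trivial
      obtain ⟨w, hw, f, hf, rfl⟩ := hx
      exact ⟨⟨f, hf⟩, w, subset_closure hw, rfl⟩
    have hne : Nonempty H := ⟨1⟩
    obtain ⟨i, x, hx⟩ := nonempty_interior_of_iUnion_of_closed hclosed hcover
    have hwW : x * (i : H)⁻¹ ∈ closure W := by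
      obtain ⟨c, hc, hcx⟩ := interior_subset hx
      rw [← hcx]
      simpa using hc
    have hmem1 : (fun y => y * ((i : H)⁻¹ * (x * (i : H)⁻¹)⁻¹)) ''
        interior ((fun y => y * (i : H)) '' closure W) ∈ 𝓝 (1 : H) := by
      have h1 : interior ((fun y => y * (i : H)) '' closure W) ∈ 𝓝 x :=
        isOpen_interior.mem_nhds hx
      have h2 := (isOpenMap_mul_right ((i : H)⁻¹ * (x * (i : H)⁻¹)⁻¹)).image_mem_nhds h1
      have h3 : x * ((i : H)⁻¹ * (x * (i : H)⁻¹)⁻¹) = 1 := by group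
      rwa [h3] at h2
    refine Filter.mem_of_superset hmem1 ?_
    rintro _ ⟨y, hy, rfl⟩
    obtain ⟨c, hc, rfl⟩ := interior_subset hy
    show c * (i : H) * ((i : H)⁻¹ * (x * (i : H)⁻¹)⁻¹) ∈ closure (W * W)
    have heq : c * (i : H) * ((i : H)⁻¹ * (x * (i : H)⁻¹)⁻¹) = c * (x * (i : H)⁻¹)⁻¹ := by
      group
    rw [heq]
    have hwinv : (x * (i : H)⁻¹)⁻¹ ∈ closure W := by
      have h4 : (x * (i : H)⁻¹)⁻¹ ∈ (closure W)⁻¹ := Set.inv_mem_inv.mpr hwW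
      rwa [inv_closure, hWs] at h4
    exact map_mem_closure₂ continuous_mul hc hwinv fun a ha b hb => Set.mul_mem_mul ha hb
  -- Step 2
  intro U' hU'
  haveI := hρcg
  haveI := hσcg
  obtain ⟨A, hA⟩ := (@nhds H σ 1).exists_antitone_basis
  obtain ⟨C, hC⟩ := (𝓝 (1 : H)).exists_antitone_basis
  have hCσ : ∀ n, C n ∈ @nhds H σ 1 := fun n => hρσ 1 (hC.1.mem_of_mem trivial)
  have hrec : ∀ P : Set H, P ∈ @nhds H σ 1 → ∀ n : ℕ, ∃ V : Set H,
      V ∈ @nhds H σ 1 ∧ V⁻¹ = V ∧ V * V ⊆ P ∧ V ⊆ A n ∧ V ⊆ C n := by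
    intro P hP n
    have h1 : P ∩ (A n ∩ C n) ∈ @nhds H σ 1 :=
      Filter.inter_mem hP (Filter.inter_mem (hA.1.mem_of_mem trivial) (hCσ n))
    obtain ⟨V, hV1, hV2, hV3⟩ := pure_symm_shrink σ hσg h1
    have hVsub : V ⊆ P ∩ (A n ∩ C n) := fun a ha => by
      have h1V : (1 : H) ∈ V := pure_one_mem σ hV1
      have := hV3 (Set.mul_mem_mul ha h1V)
      simpa using this
    exact ⟨V, hV1, hV2, hV3.trans Set.inter_subset_left,
      hVsub.trans (Set.inter_subset_right.trans Set.inter_subset_left),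
      hVsub.trans (Set.inter_subset_right.trans Set.inter_subset_right)⟩
  let T := {S : Set H // S ∈ @nhds H σ 1}
  let next : T → ℕ → T := fun p n =>
    ⟨(hrec p.1 p.2 n).choose, (hrec p.1 p.2 n).choose_spec.1⟩
  let seq : ℕ → T := fun n =>
    Nat.rec (motive := fun _ => T) (next ⟨U', hU'⟩ 0) (fun n p => next p (n + 1)) n
  let V : ℕ → Set H := fun n => (seq n).1
  have hspec0 : V 0 ∈ @nhds H σ 1 ∧ (V 0)⁻¹ = V 0 ∧ V 0 * V 0 ⊆ U' ∧ V 0 ⊆ A 0 ∧ V 0 ⊆ C 0 :=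
    (hrec U' hU' 0).choose_spec
  have hspecS : ∀ n, V (n + 1) ∈ @nhds H σ 1 ∧ (V (n + 1))⁻¹ = V (n + 1) ∧
      V (n + 1) * V (n + 1) ⊆ V n ∧ V (n + 1) ⊆ A (n + 1) ∧ V (n + 1) ⊆ C (n + 1) := fun n =>
    (hrec (V n) (seq n).2 (n + 1)).choose_spec
  have hVmem : ∀ n, V n ∈ @nhds H σ 1 := fun n => (seq n).2
  have hVsymm : ∀ n, (V n)⁻¹ = V n := by rintro (_ | n); exacts [hspec0.2.1, (hspecS n).2.1]
  have hVsq : ∀ n, V (n + 1) * V (n + 1) ⊆ V n := fun n => (hspecS n).2.2.1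
  have hVA : ∀ n, V n ⊆ A n := by
    rintro (_ | n); exacts [hspec0.2.2.2.1, (hspecS n).2.2.2.1]
  have hVC : ∀ n, V n ⊆ C n := by
    rintro (_ | n); exacts [hspec0.2.2.2.2, (hspecS n).2.2.2.2]
  have hV1mem : ∀ n, (1 : H) ∈ V n := fun n => pure_one_mem σ (hVmem n)
  have hVstep : ∀ n, V (n + 1) ⊆ V n := fun n a ha => by
    have := hVsq n (Set.mul_mem_mul ha (hV1mem (n + 1)))
    simpa using this
  have hVanti : Antitone V := antitone_nat_of_succ_le hVstep
  have hD : ∀ n, closure (V (n + 1)) ∈ 𝓝 (1 : H) := fun n =>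
    Filter.mem_of_superset (step1 (V (n + 2)) (hVmem (n + 2)) (hVsymm (n + 2)))
      (closure_mono (hVsq (n + 1)))
  have pick : ∀ (r : H) (n : ℕ), r ∈ closure (V (n + 1)) →
      ∃ v : H, v ∈ V (n + 1) ∧ r * v⁻¹ ∈ closure (V (n + 2)) := by
    intro r n hr
    have h1 : (fun y => y * r) '' closure (V (n + 2)) ∈ 𝓝 r := by
      have := (isOpenMap_mul_right r).image_mem_nhds (hD (n + 1))
      simpa using this
    obtain ⟨v, ⟨d, hd, hdv⟩, hvV⟩ := mem_closure_iff_nhds.mp hr _ h1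
    refine ⟨v, hvV, ?_⟩
    have heq : r * v⁻¹ = d⁻¹ := by rw [← hdv]; group
    rw [heq]
    have h5 : d⁻¹ ∈ (closure (V (n + 2)))⁻¹ := Set.inv_mem_inv.mpr hd
    rwa [inv_closure, hVsymm (n + 2)] at h5
  have hsub : closure (V 1) ⊆ U' := by
    intro x hx
    let St : ℕ → Type u := fun n => {g : H // x * g⁻¹ ∈ closure (V (n + 1))}
    let st : ∀ n, St n := fun n => Nat.rec (motive := St)
      (⟨1, by simpa using hx⟩ : St 0)
      (fun n p => ⟨(pick (x * p.1⁻¹) n p.2).choose * p.1, by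
        have hsp := (pick (x * p.1⁻¹) n p.2).choose_spec.2
        have heq : x * ((pick (x * p.1⁻¹) n p.2).choose * p.1)⁻¹
            = (x * p.1⁻¹) * ((pick (x * p.1⁻¹) n p.2).choose)⁻¹ := by group
        rw [heq]
        exact hsp⟩) n
    let q : ℕ → H := fun n => (st n).1
    have hq0 : q 0 = 1 := rfl
    have hre : ∀ n, x * (q n)⁻¹ ∈ closure (V (n + 1)) := fun n => (st n).2
    have hv : ∀ n, q (n + 1) = (pick (x * (q n)⁻¹) n (st n).2).choose * q n := fun n => rfl
    have hvV : ∀ n, (pick (x * (q n)⁻¹) n (st n).2).choose ∈ V (n + 1) := fun n =>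
      (pick (x * (q n)⁻¹) n (st n).2).choose_spec.1
    have key : ∀ d n, q (n + d) * (q n)⁻¹ ∈ V n := by
      intro d
      induction d with
      | zero => intro n; simpa using hV1mem n
      | succ d ih =>
        intro n
        have h1 : q (n + 1 + d) * (q (n + 1))⁻¹ ∈ V (n + 1) := ih (n + 1)
        have h2 : q (n + 1) * (q n)⁻¹ ∈ V (n + 1) := by
          rw [hv n]
          have heq2 : (pick (x * (q n)⁻¹) n (st n).2).choose * q n * (q n)⁻¹
              = (pick (x * (q n)⁻¹) n (st n).2).choose := by group
          rw [heq2]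
          exact hvV n
        have h3 : q (n + (d + 1)) * (q n)⁻¹
            = q (n + 1 + d) * (q (n + 1))⁻¹ * (q (n + 1) * (q n)⁻¹) := by
          have hnn : n + (d + 1) = n + 1 + d := by omega
          rw [hnn]; group
        rw [h3]
        exact hVsq n (Set.mul_mem_mul h1 h2)
    have key' : ∀ m n, n ≤ m → q m * (q n)⁻¹ ∈ V n := by
      intro m n hnm
      obtain ⟨d, rfl⟩ := Nat.exists_eq_add_of_le hnm
      exact key d n
    obtain ⟨y, hy⟩ := pure_seq_limit σ hσg hσseq A hA q V hVA hVsymm key'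
    have hyρ : Filter.Tendsto q Filter.atTop (𝓝 y) := hy.mono_right (hρσ y)
    have hrlim : Filter.Tendsto (fun n => x * (q n)⁻¹) Filter.atTop (𝓝 (x * y⁻¹)) :=
      tendsto_const_nhds.mul hyρ.inv
    have hxyk : ∀ k : ℕ, x * y⁻¹ ∈ closure (V k) := by
      intro k
      refine isClosed_closure.mem_of_tendsto hrlim ?_
      filter_upwards [Filter.eventually_ge_atTop k] with n hn
      exact closure_mono (hVanti (by omega : k ≤ n + 1)) (hre n)
    have hxy1 : x * y⁻¹ = 1 := by
      by_contra hne2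
      have hS : {x * y⁻¹}ᶜ ∈ 𝓝 (1 : H) := compl_singleton_mem_nhds (Ne.symm hne2)
      obtain ⟨S', hS'm, hS's, hS'sub⟩ := pure_symm_shrink ρ hρg hS
      obtain ⟨k, -, hk⟩ := hC.1.mem_iff.mp hS'm
      have h1 : closure (V k) ⊆ C k * S' :=
        (closure_mono (hVC k)).trans (pure_closure_subset ρ hρg hS'm hS's)
      have h2 : x * y⁻¹ ∈ S' * S' :=
        Set.mul_subset_mul hk Set.Subset.rfl (h1 (hxyk k))
      have := hS'sub h2
      simp at this
    have hxy : x = y := mul_inv_eq_one.mp hxy1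
    have hq0mem : ∀ n, q n ∈ V 0 := fun n => by
      have := key' n 0 (Nat.zero_le n)
      simpa [hq0] using this
    have hyc : y ∈ @closure H σ (V 0) := pure_mem_closure σ hy hq0mem
    have hymem : y ∈ V 0 * V 0 := pure_closure_subset σ hσg (hVmem 0) (hVsymm 0) hyc
    rw [hxy]
    exact hspec0.2.2.1 hymem
  have hD1 : closure (V 1) ∈ 𝓝 (1 : H) :=
    Filter.mem_of_superset (step1 (V 2) (hVmem 2) (hVsymm 2)) (closure_mono (hVsq 1))
  exact Filter.mem_of_superset hD1 hsub

end PureBasic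

section FB

open Filter Set

variable {G : Type u} [Group G] [TopologicalSpace G] [IsTopologicalGroup G]

/-- The group filter basis associated with a nice family. -/
def NiceFam.fb {B : Set (Set G)} (h : NiceFam B) : GroupFilterBasis G where
  sets := B
  nonempty := h.nonempty
  inter_sets := fun {x y} hx hy => ⟨x ∩ y, h.inter x hx y hy, Set.Subset.rfl⟩
  one' := fun {U} hU => (h.nice U hU).2.1
  mul' := fun {U} hU => h.sq U hU
  inv' := fun {U} hU => ⟨U, hU, fun x hx => by
    have hsymm := (h.nice U hU).2.2
    rw [← hsymm] at hx
    exact Set.mem_inv.mp hx⟩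
  conj' := fun x₀ {U} hU => by
    obtain ⟨W, hW, hP⟩ := h.conj x₀ U hU
    exact ⟨W, hW, fun w hw => hP w hw⟩

theorem NiceFam.le_top {B : Set (Set G)} (h : NiceFam B) :
    (inferInstance : TopologicalSpace G) ≤ h.fb.topology := by
  refine le_of_nhds_le_nhds fun x => ?_
  rw [GroupFilterBasis.nhds_eq]
  show 𝓝 x ≤ Filter.map (fun y => x * y) h.fb.toFilterBasis.filter
  rw [← map_mul_left_nhds_one x]
  refine Filter.map_mono ?_
  intro s hs
  rw [FilterBasis.mem_filter_iff] at hs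
  obtain ⟨V, hV, hVs⟩ := hs
  exact mem_of_superset (h.mem_nhds hV) hVs

theorem NiceFam.topMono {B1 B2 : Set (Set G)} (h1 : NiceFam B1) (h2 : NiceFam B2)
    (hss : ∀ V ∈ B1, ∃ W ∈ B2, W ⊆ V) : h2.fb.topology ≤ h1.fb.topology := by
  refine le_of_nhds_le_nhds fun x => ?_
  rw [GroupFilterBasis.nhds_eq, GroupFilterBasis.nhds_eq]
  refine Filter.map_mono ?_
  intro s hs
  rw [FilterBasis.mem_filter_iff] at hs ⊢
  obtain ⟨V, hV, hVs⟩ := hs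
  obtain ⟨W, hW, hWV⟩ := hss V hV
  exact ⟨W, hW, hWV.trans hVs⟩

theorem NiceFam.mem_nhds_one_iff {B : Set (Set G)} (h : NiceFam B) {U : Set G} :
    U ∈ @nhds G h.fb.topology 1 ↔ ∃ V ∈ B, V ⊆ U :=
  h.fb.nhds_one_hasBasis.mem_iff

theorem NiceFam.cg {B : Set (Set G)} (h : NiceFam B) :
    (@nhds G h.fb.topology 1).IsCountablyGenerated := by
  obtain ⟨e, he⟩ := Set.Countable.exists_eq_range h.countable h.nonempty
  have hb : (@nhds G h.fb.topology 1).HasBasis (fun _ : ℕ => True) e := by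
    rw [Filter.hasBasis_iff]
    intro s
    rw [h.mem_nhds_one_iff]
    constructor
    · rintro ⟨V, hV, hVs⟩
      rw [he] at hV
      obtain ⟨n, rfl⟩ := hV
      exact ⟨n, trivial, hVs⟩
    · rintro ⟨n, -, hns⟩
      exact ⟨e n, by rw [he]; exact ⟨n, rfl⟩, hns⟩
  exact hb.isCountablyGenerated

theorem NiceFam.t2 {B : Set (Set G)} (h : NiceFam B) (hsep : ⋂₀ B ⊆ {1}) :
    @T2Space G h.fb.topology := by
  refine pure_t2 h.fb.topology (GroupFilterBasis.isTopologicalGroup h.fb) fun x hx => ?_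
  have hxm : x ∉ ⋂₀ B := fun hm => hx (hsep hm)
  rw [Set.mem_sInter] at hxm
  push_neg at hxm
  obtain ⟨V, hV, hxV⟩ := hxm
  exact ⟨V, h.fb.mem_nhds_one hV, hxV⟩

theorem NiceFam.seqComplete {B : Set (Set G)} (hs : SeqHComplete G) (h : NiceFam B)
    (hsep : ⋂₀ B ⊆ {1}) :
    @SeqComplete G _ h.fb.topology (GroupFilterBasis.isTopologicalGroup h.fb) := by
  have hcont : @Continuous G G _ h.fb.topology (MonoidHom.id G) := by
    have hco : ⇑(MonoidHom.id G) = (id : G → G) := rfl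
    rw [hco]
    exact continuous_id_of_le h.le_top
  exact @hs G _ h.fb.topology (GroupFilterBasis.isTopologicalGroup h.fb) (h.t2 hsep)
    (MonoidHom.id G) hcont fun x => ⟨x, rfl⟩

theorem NiceFam.baire {B : Set (Set G)} (hs : SeqHComplete G) (h : NiceFam B)
    (hsep : ⋂₀ B ⊆ {1}) : @BaireSpace G h.fb.topology :=
  pure_baire h.fb.topology (GroupFilterBasis.isTopologicalGroup h.fb) h.cg
    (h.seqComplete hs hsep)

end FB


section Transfer

open Filter Set

theorem pure_t2_to_t1 {H : Type u} (t : TopologicalSpace H) (h : @T2Space H t) :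
    @T1Space H t := by
  letI := t; haveI := h; infer_instance

theorem omega_of_surjective {G H : Type u} [Group G] [TopologicalSpace G] [IsTopologicalGroup G]
    [Group H] [TopologicalSpace H] [IsTopologicalGroup H] (f : G →* H) (hc : Continuous f)
    (hsurj : Function.Surjective f) (hω : OmegaPrecompact G) : OmegaPrecompact H := by
  intro U hU
  have h1 : f ⁻¹' U ∈ 𝓝 (1 : G) :=
    hc.continuousAt.preimage_mem_nhds (by simpa [map_one] using hU)
  obtain ⟨F, hFc, hFU⟩ := hω _ h1
  refine ⟨f '' F, hFc.image f, ?_⟩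
  apply Set.eq_univ_of_forall
  intro h
  obtain ⟨g, rfl⟩ := hsurj h
  have hg : g ∈ f ⁻¹' U * F := by rw [hFU]; trivial
  obtain ⟨u, hu, c, hc', rfl⟩ := hg
  exact ⟨f u, hu, f c, ⟨c, hc', rfl⟩, (map_mul f u c).symm⟩

theorem seqh_of_surjective {G H : Type u} [Group G] [TopologicalSpace G] [IsTopologicalGroup G]
    [Group H] [TopologicalSpace H] [IsTopologicalGroup H] (f : G →* H) (hc : Continuous f)
    (hsurj : Function.Surjective f) (hs : SeqHComplete G) : SeqHComplete H :=
  fun K _ _ _ _ g hgc hgs => hs K (g.comp f) (hgc.comp hc) (hgs.comp hsurj)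

/-- Key lemma: an ω-precompact sequentially h-complete Hausdorff group of countable
pseudocharacter is metrizable. -/
theorem metrizable_P {G : Type u} [Group G] [TopologicalSpace G] [IsTopologicalGroup G]
    [T2Space G] (hω : OmegaPrecompact G) (hs : SeqHComplete G)
    (hψ : CountablePseudocharacter G) : TopologicalSpace.MetrizableSpace G := by
  obtain ⟨O, hOopen, hOint⟩ := hψ
  have hO1 : ∀ n, (1 : G) ∈ O n := fun n => by
    have h1 : (1 : G) ∈ ⋂ n, O n := by rw [hOint]; rfl
    exact Set.mem_iInter.mp h1 n
  have hOn : ∀ n, O n ∈ 𝓝 (1 : G) := fun n => (hOopen n).mem_nhds (hO1 n)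
  obtain ⟨B0, -, hB0, hB0seed⟩ := exists_niceFam hω O hOn ∅ Set.countable_empty (by simp)
  have hB0sep : ⋂₀ B0 ⊆ {1} := by
    intro x hx
    rw [← hOint]
    refine Set.mem_iInter.mpr fun n => ?_
    obtain ⟨V, hV, hVO⟩ := hB0seed n
    exact hVO (hx V hV)
  have hclaim : ∀ U ∈ 𝓝 (1 : G), U ∈ @nhds G hB0.fb.topology 1 := by
    intro U hU
    obtain ⟨e, he⟩ := Set.Countable.exists_eq_range hB0.countable hB0.nonempty
    have hseed2 : ∀ n, U ∩ (O n ∩ e n) ∈ 𝓝 (1 : G) := fun n => by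
      have hen : e n ∈ B0 := by rw [he]; exact ⟨n, rfl⟩
      exact Filter.inter_mem hU (Filter.inter_mem (hOn n) (hB0.mem_nhds hen))
    obtain ⟨BU, -, hBU, hBUseed⟩ := exists_niceFam hω (fun n => U ∩ (O n ∩ e n)) hseed2
      B0 hB0.countable hB0.nice
    have hBUsep : ⋂₀ BU ⊆ {1} := by
      intro x hx
      rw [← hOint]
      refine Set.mem_iInter.mpr fun n => ?_
      obtain ⟨V, hV, hVO⟩ := hBUseed n
      exact (hVO (hx V hV)).2.1
    have hfine : hBU.fb.topology ≤ hB0.fb.topology := by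
      refine NiceFam.topMono hB0 hBU fun V hV => ?_
      rw [he] at hV; obtain ⟨n, rfl⟩ := hV
      obtain ⟨W, hW, hWs⟩ := hBUseed n
      exact ⟨W, hW, hWs.trans (Set.inter_subset_right.trans Set.inter_subset_right)⟩
    have hcov : ∀ W ∈ @nhds G hBU.fb.topology 1,
        ∃ F : Set G, F.Countable ∧ W * F = Set.univ := by
      intro W hW
      have hWτ : W ∈ 𝓝 (1 : G) := Filter.le_def.mp (nhds_mono hBU.le_top) W hW
      exact hω W hWτ
    have hcore := omt_core hB0.fb.topology hBU.fb.topology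
      (GroupFilterBasis.isTopologicalGroup _) (GroupFilterBasis.isTopologicalGroup _)
      (pure_t2_to_t1 _ (hB0.t2 hB0sep)) (hB0.baire hs hB0sep) hB0.cg hBU.cg hfine
      (hBU.seqComplete hs hBUsep) hcov
    have hUBU : U ∈ @nhds G hBU.fb.topology 1 := by
      rw [hBU.mem_nhds_one_iff]
      obtain ⟨V, hV, hVs⟩ := hBUseed 0
      exact ⟨V, hV, hVs.trans Set.inter_subset_left⟩
    exact Filter.le_def.mp hcore U hUBU
  have heq : 𝓝 (1 : G) = @nhds G hB0.fb.topology 1 :=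
    le_antisymm (nhds_mono hB0.le_top) (Filter.le_def.mpr hclaim)
  haveI : (𝓝 (1 : G)).IsCountablyGenerated := by rw [heq]; exact hB0.cg
  haveI : FirstCountableTopology G := ⟨fun x => by
    rw [← map_mul_left_nhds_one x]
    exact Filter.map.isCountablyGenerated _ _⟩
  haveI ht0 : T0Space G := inferInstance
  letI u : UniformSpace G := IsTopologicalGroup.rightUniformSpace G
  haveI : (uniformity G).IsCountablyGenerated := by
    rw [uniformity_eq_comap_nhds_one']
    exact Filter.comap.isCountablyGenerated _ _
  exact UniformSpace.metrizableSpace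

end Transfer


section QuotientLemma

open Filter Set

variable {G : Type u} [Group G] [TopologicalSpace G] [IsTopologicalGroup G]

theorem amb_closure_subset {s S : Set G} (hS : S ∈ 𝓝 (1 : G)) (hSs : S⁻¹ = S) :
    closure s ⊆ s * S :=
  pure_closure_subset (H := G) ‹_› ‹_› hS hSs

/-- Every neighborhood of `1` contains a closed normal subgroup with metrizable quotient. -/
theorem exists_metrizable_quotient (hω : OmegaPrecompact G) (hs : SeqHComplete G) {U : Set G}
    (hU : U ∈ 𝓝 (1 : G)) :
    ∃ N : Subgroup G, N.Normal ∧ IsClosed (N : Set G) ∧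
      TopologicalSpace.MetrizableSpace (G ⧸ N) ∧ (N : Set G) ⊆ U := by
  obtain ⟨B, -, hB, hBseed⟩ := exists_niceFam hω (fun _ => U) (fun _ => hU) ∅
    Set.countable_empty (by simp)
  let N : Subgroup G :=
    { carrier := ⋂₀ B
      one_mem' := Set.mem_sInter.mpr fun V hV => (hB.nice V hV).2.1
      mul_mem' := by
        intro a b ha hb
        refine Set.mem_sInter.mpr fun V hV => ?_
        obtain ⟨W, hW, hWV⟩ := hB.sq V hV
        exact hWV (Set.mul_mem_mul (Set.mem_sInter.mp ha W hW) (Set.mem_sInter.mp hb W hW))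
      inv_mem' := by
        intro a ha
        refine Set.mem_sInter.mpr fun V hV => ?_
        have h1 : a ∈ V := Set.mem_sInter.mp ha V hV
        rw [← (hB.nice V hV).2.2] at h1
        exact Set.mem_inv.mp h1 }
  have hNmem : ∀ x : G, x ∈ N ↔ x ∈ ⋂₀ B := fun x => Iff.rfl
  have hNnormal : N.Normal := by
    constructor
    intro n hn g
    refine Set.mem_sInter.mpr fun V hV => ?_
    obtain ⟨W, hW, hP⟩ := hB.conj g V hV
    exact hP n (Set.mem_sInter.mp hn W hW)
  have hNclosed : IsClosed (N : Set G) := by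
    have hNi : (N : Set G) = ⋂ V ∈ B, closure V := by
      apply Set.Subset.antisymm
      · intro x hx
        exact Set.mem_iInter₂.mpr fun V hV => subset_closure (Set.mem_sInter.mp hx V hV)
      · intro x hx
        refine Set.mem_sInter.mpr fun V hV => ?_
        obtain ⟨W, hW, hWV⟩ := hB.sq V hV
        have hcl : closure W ⊆ W * W :=
          amb_closure_subset (hB.mem_nhds hW) (hB.nice W hW).2.2
        exact hWV (hcl (Set.mem_iInter₂.mp hx W hW))
    rw [hNi]
    exact isClosed_biInter fun V hV => isClosed_closure
  have hNsub : (N : Set G) ⊆ U := by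
    obtain ⟨V, hV, hVU⟩ := hBseed 0
    exact fun x hx => hVU (Set.mem_sInter.mp hx V hV)
  haveI := hNnormal
  haveI : IsClosed ((N : Subgroup G) : Set G) := hNclosed
  haveI : T3Space (G ⧸ N) := inferInstance
  have hωQ : OmegaPrecompact (G ⧸ N) :=
    omega_of_surjective (QuotientGroup.mk' N) continuous_quot_mk
      (QuotientGroup.mk'_surjective N) hω
  have hsQ : SeqHComplete (G ⧸ N) :=
    seqh_of_surjective (QuotientGroup.mk' N) continuous_quot_mk
      (QuotientGroup.mk'_surjective N) hs
  have hψQ : CountablePseudocharacter (G ⧸ N) := by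
    obtain ⟨e, he⟩ := Set.Countable.exists_eq_range hB.countable hB.nonempty
    refine ⟨fun n => (QuotientGroup.mk : G → G ⧸ N) '' e n, fun n => ?_, ?_⟩
    · have hen : e n ∈ B := by rw [he]; exact ⟨n, rfl⟩
      exact QuotientGroup.isOpenMap_coe _ (hB.nice _ hen).1
    · apply Set.Subset.antisymm
      · intro x hx
        obtain ⟨g, rfl⟩ := QuotientGroup.mk_surjective x
        have hgN : g ∈ N := by
          refine Set.mem_sInter.mpr fun V hV => ?_
          obtain ⟨W, hW, hWV⟩ := hB.sq V hV
          have hWr := hW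
          rw [he] at hWr
          obtain ⟨n, hne⟩ := hWr
          have hxW := Set.mem_iInter.mp hx n
          rw [hne] at hxW
          obtain ⟨h', hh', hmk⟩ := hxW
          have hmem : h'⁻¹ * g ∈ N := QuotientGroup.eq.mp hmk
          have hginV : g = h' * (h'⁻¹ * g) := by group
          rw [hginV]
          exact hWV (Set.mul_mem_mul hh' (Set.mem_sInter.mp hmem W hW))
        have h1 : (QuotientGroup.mk g : G ⧸ N) = 1 := (QuotientGroup.eq_one_iff g).mpr hgN
        simp [h1]
      · intro x hx
        rw [Set.mem_singleton_iff] at hx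
        subst hx
        refine Set.mem_iInter.mpr fun n => ?_
        have hen : e n ∈ B := by rw [he]; exact ⟨n, rfl⟩
        exact ⟨1, (hB.nice _ hen).2.1, rfl⟩
  have hm := metrizable_P hωQ hsQ hψQ
  exact ⟨N, hNnormal, hNclosed, hm, hNsub⟩

end QuotientLemma


section InfLemma

open Filter Set

variable {G : Type u} [Group G] [TopologicalSpace G] [IsTopologicalGroup G]

theorem metrizable_iInf [T2Space G] (hω : OmegaPrecompact G) (hs : SeqHComplete G)
    {ι : Type u} [Countable ι] (N : ι → Subgroup G) (hnorm : ∀ i, (N i).Normal)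
    (hclosed : ∀ i, IsClosed ((N i : Subgroup G) : Set G))
    (hmet : ∀ i, TopologicalSpace.MetrizableSpace (G ⧸ N i)) :
    (⨅ i, N i).Normal ∧ IsClosed (((⨅ i, N i : Subgroup G)) : Set G) ∧
      TopologicalSpace.MetrizableSpace (G ⧸ (⨅ i, N i)) := by
  set K : Subgroup G := ⨅ i, N i with hK
  have hKnormal : K.Normal := by
    constructor
    intro n hn g
    refine Subgroup.mem_iInf.mpr fun i => ?_
    exact (hnorm i).conj_mem n (Subgroup.mem_iInf.mp hn i) g
  have hKclosed : IsClosed ((K : Subgroup G) : Set G) := by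
    rw [hK, Subgroup.coe_iInf]
    exact isClosed_iInter fun i => hclosed i
  haveI := hKnormal
  haveI : IsClosed ((K : Subgroup G) : Set G) := hKclosed
  haveI : T3Space (G ⧸ K) := inferInstance
  have hωQ : OmegaPrecompact (G ⧸ K) :=
    omega_of_surjective (QuotientGroup.mk' K) continuous_quot_mk
      (QuotientGroup.mk'_surjective K) hω
  have hsQ : SeqHComplete (G ⧸ K) :=
    seqh_of_surjective (QuotientGroup.mk' K) continuous_quot_mk
      (QuotientGroup.mk'_surjective K) hs
  have hψQ : CountablePseudocharacter (G ⧸ K) := by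
    haveI : ∀ i, (N i).Normal := hnorm
    have hle : ∀ i, K ≤ Subgroup.comap (MonoidHom.id G) (N i) := fun i x hx =>
      Subgroup.mem_iInf.mp hx i
    let φ : ∀ i, G ⧸ K →* G ⧸ N i := fun i =>
      QuotientGroup.map K (N i) (MonoidHom.id G) (hle i)
    have hφmk : ∀ i (g : G), φ i (QuotientGroup.mk g) = QuotientGroup.mk g := fun i g =>
      QuotientGroup.map_mk K (N i) (MonoidHom.id G) (hle i) g
    have hφc : ∀ i, Continuous (φ i) := fun i => by
      rw [(QuotientGroup.isQuotientMap_mk K).continuous_iff]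
      have hcomp : (φ i) ∘ (QuotientGroup.mk : G → G ⧸ K)
          = (QuotientGroup.mk : G → G ⧸ N i) := by
        funext g
        exact hφmk i g
      rw [hcomp]
      exact continuous_quot_mk
    have hGδ : ∀ i, ∃ S : Set (Set (G ⧸ N i)), S.Countable ∧ (∀ s ∈ S, IsOpen s) ∧
        ⋂₀ S = {1} := by
      intro i
      haveI := hmet i
      haveI : IsClosed (((N i : Subgroup G)) : Set G) := hclosed i
      haveI : T3Space (G ⧸ N i) := inferInstance
      obtain ⟨T, hTo, hTc, hTeq⟩ := IsGδ.singleton (1 : G ⧸ N i)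
      exact ⟨T, hTc, hTo, hTeq.symm⟩
    choose S hSc hSo hSeq using hGδ
    set 𝒮 : Set (Set (G ⧸ K)) := ⋃ i, (fun s => (φ i) ⁻¹' s) '' S i with h𝒮
    have h𝒮c : 𝒮.Countable := countable_iUnion fun i => (hSc i).image _
    have h𝒮o : ∀ s ∈ 𝒮, IsOpen s := by
      intro s hs
      rw [h𝒮, Set.mem_iUnion] at hs
      obtain ⟨i, t, ht, rfl⟩ := hs
      exact (hSo i t ht).preimage (hφc i)
    have h𝒮i : ⋂₀ 𝒮 = {1} := by
      apply Set.Subset.antisymm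
      · intro x hx
        obtain ⟨g, rfl⟩ := QuotientGroup.mk_surjective x
        have hg : ∀ i, g ∈ N i := by
          intro i
          have h1 : φ i (QuotientGroup.mk g) ∈ ⋂₀ S i := by
            refine Set.mem_sInter.mpr fun t ht => ?_
            have hmem : (φ i) ⁻¹' t ∈ 𝒮 := by
              rw [h𝒮, Set.mem_iUnion]
              exact ⟨i, t, ht, rfl⟩
            exact Set.mem_sInter.mp hx _ hmem
          rw [hSeq i] at h1
          rw [Set.mem_singleton_iff, hφmk i g] at h1
          exact (QuotientGroup.eq_one_iff g).mp h1
        have hgK : g ∈ K := Subgroup.mem_iInf.mpr hg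
        simp [(QuotientGroup.eq_one_iff g).mpr hgK]
      · intro x hx
        rw [Set.mem_singleton_iff] at hx
        subst hx
        refine Set.mem_sInter.mpr fun s hs => ?_
        rw [h𝒮, Set.mem_iUnion] at hs
        obtain ⟨i, t, ht, rfl⟩ := hs
        have h1 : (1 : G ⧸ N i) ∈ ⋂₀ S i := by rw [hSeq i]; rfl
        have hφ1 : φ i 1 = 1 := map_one _
        show φ i 1 ∈ t
        rw [hφ1]
        exact Set.mem_sInter.mp h1 t ht
    rcases Set.eq_empty_or_nonempty 𝒮 with hemp | hne
    · refine ⟨fun _ => Set.univ, fun _ => isOpen_univ, ?_⟩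
      have huniv : (Set.univ : Set (G ⧸ K)) = {1} := by
        rw [← h𝒮i, hemp, Set.sInter_empty]
      rw [Set.iInter_const, huniv]
    · obtain ⟨e, he⟩ := Set.Countable.exists_eq_range h𝒮c hne
      refine ⟨e, fun n => h𝒮o _ (by rw [he]; exact ⟨n, rfl⟩), ?_⟩
      rw [← h𝒮i, he, Set.sInter_range]
  exact ⟨hKnormal, hKclosed, metrizable_P hωQ hsQ hψQ⟩

end InfLemma

/-- Every ω-precompact sequentially h-complete group densely embeds into the
projective limit of its metrizable quotients. -/
theorem stmt7 (G : Type u) [Group G] [TopologicalSpace G] [IsTopologicalGroup G] [T2Space G]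
    (hω : OmegaPrecompact G) (hs : SeqHComplete G) :
    Topology.IsEmbedding (canonMap G) ∧ Set.range (canonMap G) ⊆ projLimit G ∧
      projLimit G ⊆ closure (Set.range (canonMap G)) := by
  classical
  have hcont : Continuous (canonMap G) := by
    apply continuous_pi
    intro N
    haveI := N.prop.1
    exact continuous_quot_mk
  refine ⟨⟨?_, ?_⟩, ?_, ?_⟩
  · -- inducing
    rw [isInducing_iff_nhds]
    intro x
    apply le_antisymm
    · exact (hcont.tendsto x).le_comap
    · intro U hU
      have hWmem : (fun y => x * y) ⁻¹' U ∈ 𝓝 (1 : G) := by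
        rw [← map_mul_left_nhds_one x] at hU
        exact Filter.mem_map.mp hU
      obtain ⟨V, hVo, hV1, hVs, hVW⟩ := aux_symm_open hWmem
      obtain ⟨N, hNn, hNc, hNm, hNU⟩ := exists_metrizable_quotient hω hs (hVo.mem_nhds hV1)
      haveI := hNn
      set Nidx : MetQuotIdx G := ⟨N, hNn, hNc, hNm⟩ with hNidx
      have hop : IsOpen ((QuotientGroup.mk : G → G ⧸ N) '' ((fun y => x * y) '' V)) :=
        QuotientGroup.isOpenMap_coe _ ((isOpenMap_mul_left x) V hVo)
      have hxm : (canonMap G x) Nidx ∈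
          (QuotientGroup.mk : G → G ⧸ N) '' ((fun y => x * y) '' V) := by
        refine ⟨x * 1, ⟨1, hV1, rfl⟩, ?_⟩
        simp [canonMap]
        rfl
      refine Filter.mem_comap.mpr ⟨(fun y : ∀ M : MetQuotIdx G, G ⧸ M.val => y Nidx) ⁻¹'
        ((QuotientGroup.mk : G → G ⧸ N) '' ((fun y => x * y) '' V)), ?_, ?_⟩
      · exact (continuous_apply Nidx).continuousAt.preimage_mem_nhds (hop.mem_nhds hxm)
      · intro g hg
        simp only [Set.mem_preimage] at hg
        obtain ⟨_, ⟨v, hv, rfl⟩, hmk⟩ := hg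
        have hmem : (x * v)⁻¹ * g ∈ N := QuotientGroup.eq.mp hmk
        have h2 : v * ((x * v)⁻¹ * g) ∈ V * V := Set.mul_mem_mul hv (hNU hmem)
        have h3 := hVW h2
        have heq : x * (v * ((x * v)⁻¹ * g)) = g := by group
        have h4 : x * (v * ((x * v)⁻¹ * g)) ∈ U := h3
        rwa [heq] at h4
  · -- injective
    intro a b hab
    by_contra hne
    have h1 : a⁻¹ * b ≠ 1 := fun h => hne (by
      have := inv_mul_eq_one.mp h
      exact this)
    have hUc : {a⁻¹ * b}ᶜ ∈ 𝓝 (1 : G) := compl_singleton_mem_nhds (Ne.symm h1)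
    obtain ⟨N, hNn, hNc, hNm, hNU⟩ := exists_metrizable_quotient hω hs hUc
    haveI := hNn
    have hcoord := congrFun hab (⟨N, hNn, hNc, hNm⟩ : MetQuotIdx G)
    have hmem : a⁻¹ * b ∈ N := QuotientGroup.eq.mp hcoord
    simpa using hNU hmem
  · -- range ⊆ projLimit
    rintro _ ⟨g, rfl⟩
    intro Nidx Midx hle
    haveI := Nidx.prop.1
    haveI := Midx.prop.1
    show QuotientGroup.map _ _ (MonoidHom.id G) _ (QuotientGroup.mk g) = QuotientGroup.mk g
    exact QuotientGroup.map_mk _ _ _ _ g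
  · -- density
    intro x hx
    rw [mem_closure_iff]
    intro o ho hxo
    obtain ⟨I, u, hu, hsub⟩ := isOpen_pi_iff.mp ho x hxo
    obtain ⟨hKn, hKc, hKm⟩ := metrizable_iInf hω hs
      (fun i : ↥I => (i : MetQuotIdx G).val)
      (fun i => (i : MetQuotIdx G).prop.1)
      (fun i => (i : MetQuotIdx G).prop.2.1)
      (fun i => (i : MetQuotIdx G).prop.2.2)
    set K : Subgroup G := ⨅ i : ↥I, (i : MetQuotIdx G).val with hKdef
    set Kidx : MetQuotIdx G := ⟨K, hKn, hKc, hKm⟩ with hKidx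
    haveI := hKn
    obtain ⟨g, hg⟩ := QuotientGroup.mk_surjective (x Kidx)
    refine ⟨canonMap G g, hsub (Set.mem_pi.mpr fun i hi => ?_), ⟨g, rfl⟩⟩
    have hlei : Kidx.val ≤ i.val := by
      intro y hy
      exact Subgroup.mem_iInf.mp hy ⟨i, hi⟩
    have hcompat := hx Kidx i hlei
    haveI := i.prop.1
    rw [← hg] at hcompat
    have hcm : canonMap G g i = x i := hcompat
    rw [hcm]
    exact (hu i hi).2
end

section
/- Let G be an ω-precompact, sequentially h-complete, h-complete Hausdorff topological group. Then G is topologically isomorphic to the projective limit of its metrizable quotients. -/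
open Topology Pointwise

universe u

set_option linter.unusedSectionVars false
set_option maxHeartbeats 1000000

open Filter Set Uniformity

section DU8Aux
variable {G : Type u} [Group G] [TopologicalSpace G] [IsTopologicalGroup G]

lemma shrink_exists {U : Set G} (hU : U ∈ 𝓝 (1:G)) :
    ∃ V ∈ 𝓝 (1:G), V⁻¹ = V ∧ V * V ⊆ U := by
  obtain ⟨V₀, h₀, hmul⟩ := exists_nhds_one_split hU
  have hinv : V₀⁻¹ ∈ 𝓝 (1:G) := by
    have h := continuous_inv.continuousAt (x := (1:G))
    have : (fun x : G => x⁻¹) ⁻¹' V₀ ∈ 𝓝 (1:G) := h.preimage_mem_nhds (by simpa using h₀)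
    simpa [Set.inv_preimage] using this
  refine ⟨V₀ ∩ V₀⁻¹, inter_mem h₀ hinv, ?_, ?_⟩
  · simp [Set.inter_inv, Set.inter_comm]
  · rintro x ⟨a, ⟨ha, -⟩, b, ⟨hb, -⟩, rfl⟩
    exact hmul a ha b hb

lemma subset_of_sq {U : Set G} (hU : (1:G) ∈ U) : U ⊆ U * U := fun x hx =>
  ⟨x, hx, 1, hU, by simp⟩

/-- closure S ⊆ S * N for N a symmetric neighborhood of 1. -/
lemma closure_subset_mul {S N : Set G} (hN : N ∈ 𝓝 (1:G)) (hsym : N⁻¹ = N) :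
    closure S ⊆ S * N := by
  intro x hx
  rw [mem_closure_iff_nhds] at hx
  obtain ⟨s, ⟨x', hx', n, hn, heq⟩, hsS⟩ :=
    hx ({x} * N) (singleton_mul_mem_nhds_of_nhds_one x hN)
  have hxx : x' = x := Set.mem_singleton_iff.mp hx'
  have hxs : s * n⁻¹ = x := by rw [← heq, hxx]; group
  have hninv : n⁻¹ ∈ N := by rw [← hsym]; simpa using hn
  exact ⟨s, hsS, n⁻¹, hninv, hxs⟩

lemma closure_subset_mul_left {S N : Set G} (hN : N ∈ 𝓝 (1:G)) (hsym : N⁻¹ = N) :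
    closure S ⊆ N * S := by
  intro x hx
  rw [mem_closure_iff_nhds] at hx
  obtain ⟨s, ⟨n, hn, x', hx', heq⟩, hsS⟩ :=
    hx (N * {x}) (mul_singleton_mem_nhds_of_nhds_one x hN)
  have hxx : x' = x := Set.mem_singleton_iff.mp hx'
  have hxs : n⁻¹ * s = x := by rw [← heq, hxx]; group
  have hninv : n⁻¹ ∈ N := by rw [← hsym]; simpa using hn
  exact ⟨n⁻¹, hninv, s, hsS, hxs⟩

/-- ω-balance: countably many neighborhoods dominating all conjugations into U. -/
lemma omega_balance (hω : OmegaPrecompact G) {U : Set G} (hU : U ∈ 𝓝 (1:G)) :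
    ∃ D : ℕ → Set G, (∀ i, D i ∈ 𝓝 (1:G)) ∧
      ∀ g : G, ∃ i, ∀ x ∈ D i, g * x * g⁻¹ ∈ U := by
  obtain ⟨A₁, hA₁, hA₁s, hA₁m⟩ := shrink_exists hU
  obtain ⟨A, hA, hAs, hAm⟩ := shrink_exists hA₁
  have hA_sub : A ⊆ A₁ := (subset_of_sq (mem_of_mem_nhds hA)).trans hAm
  have h3 : A * A * A ⊆ U := by
    calc A * A * A ⊆ A₁ * A₁ := by
          exact Set.mul_subset_mul hAm (hA_sub)
      _ ⊆ U := hA₁m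
  obtain ⟨F, hFc, hFU⟩ := hω A hA
  have h1AF : (1:G) ∈ A * F := by rw [hFU]; trivial
  obtain ⟨-, -, b, hb, -⟩ := h1AF
  have hFne : F.Nonempty := ⟨b, hb⟩
  obtain ⟨f, rfl⟩ := Set.Countable.exists_eq_range hFc hFne
  refine ⟨fun i => (fun y : G => f i * y * (f i)⁻¹) ⁻¹' A, fun i => ?_, fun g => ?_⟩
  · have hc : Continuous (fun y : G => f i * y * (f i)⁻¹) := by continuity
    have := hc.continuousAt (x := (1:G)) |>.preimage_mem_nhds (by simpa using hA)
    exact this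
  · have hg : g ∈ A * Set.range f := by rw [hFU]; trivial
    obtain ⟨a, ha, -, ⟨i, rfl⟩, rfl⟩ := hg
    refine ⟨i, fun x hx => ?_⟩
    simp only [Set.mem_preimage] at hx
    have : a * f i * x * (a * f i)⁻¹ = a * (f i * x * (f i)⁻¹) * a⁻¹ := by group
    rw [this]
    have hainv : a⁻¹ ∈ A := by rw [← hAs]; simpa using ha
    exact h3 ⟨a * (f i * x * (f i)⁻¹), ⟨a, ha, _, hx, rfl⟩, a⁻¹, hainv, rfl⟩

lemma family_exists (hω : OmegaPrecompact G) (T : ℕ → Set G) (hT : ∀ n, T n ∈ 𝓝 (1:G)) :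
    ∃ V : ℕ → Set G,
      (∀ n, V n ∈ 𝓝 (1:G)) ∧
      (∀ n, (V n)⁻¹ = V n) ∧
      (∀ n, V (n+1) * V (n+1) ⊆ V n) ∧
      (∀ n, V (n+1) ⊆ T n) ∧
      (∀ n g, ∃ m, ∀ x ∈ V m, g * x * g⁻¹ ∈ V n) := by
  classical
  -- total shrink function
  have SHex : ∀ U : Set G, ∃ V : Set G,
      (U ∈ 𝓝 (1:G) → V ∈ 𝓝 (1:G) ∧ V⁻¹ = V ∧ V * V ⊆ U) := by
    intro U
    by_cases h : U ∈ 𝓝 (1:G)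
    · obtain ⟨V, h1, h2, h3⟩ := shrink_exists h
      exact ⟨V, fun _ => ⟨h1, h2, h3⟩⟩
    · exact ⟨Set.univ, fun h' => absurd h' h⟩
  choose SH hSH using SHex
  -- total balance function
  have DWex : ∀ U : Set G, ∃ D : ℕ → Set G,
      (U ∈ 𝓝 (1:G) → (∀ i, D i ∈ 𝓝 (1:G)) ∧ ∀ g : G, ∃ i, ∀ x ∈ D i, g * x * g⁻¹ ∈ U) := by
    intro U
    by_cases h : U ∈ 𝓝 (1:G)
    · obtain ⟨D, h1, h2⟩ := omega_balance hω h
      exact ⟨D, fun _ => ⟨h1, h2⟩⟩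
    · exact ⟨fun _ => Set.univ, fun h' => absurd h' h⟩
  choose DW hDW using DWex
  -- history construction
  let step : (ℕ → Set G) → ℕ → Set G := fun f n =>
    SH (f n ∩ T n ∩ DW (f (Nat.unpair n).1) (Nat.unpair n).2)
  let hist : ℕ → (ℕ → Set G) := fun n =>
    Nat.rec (fun _ => Set.univ)
      (fun n f => fun m => if m = n + 1 then step f n else f m) n
  have hist_succ : ∀ n m, hist (n+1) m = if m = n + 1 then step (hist n) n else hist n m :=
    fun n m => rfl
  set V : ℕ → Set G := fun n => hist n n with hV
  have stab : ∀ n m, m ≤ n → hist n m = V m := by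
    intro n
    induction n with
    | zero => intro m hm; interval_cases m; rfl
    | succ n ih =>
      intro m hm
      rcases Nat.lt_or_ge m (n+1) with h | h
      · rw [hist_succ, if_neg (by omega)]
        exact ih m (by omega)
      · have : m = n + 1 := le_antisymm hm h
        subst this; rfl
  have V_succ : ∀ n, V n ∩ T n ∩ DW (V (Nat.unpair n).1) (Nat.unpair n).2 ∈ 𝓝 (1:G) →
      True := fun _ _ => trivial
  have V_succ_eq : ∀ n, V (n+1) =
      SH (V n ∩ T n ∩ DW (V (Nat.unpair n).1) (Nat.unpair n).2) := by
    intro n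
    show hist (n+1) (n+1) = _
    rw [hist_succ, if_pos rfl]
    show step (hist n) n = _
    simp only [step]
    rw [stab n n le_rfl, stab n (Nat.unpair n).1 (Nat.unpair_left_le n)]
  -- neighborhood property by strong induction
  have hVnhds : ∀ n, V n ∈ 𝓝 (1:G) := by
    intro n
    induction n using Nat.strong_induction_on with
    | _ n ih =>
      match n with
      | 0 => exact Filter.univ_mem
      | Nat.succ k =>
        rw [V_succ_eq k]
        have harg : V k ∩ T k ∩ DW (V (Nat.unpair k).1) (Nat.unpair k).2 ∈ 𝓝 (1:G) := by
          refine inter_mem (inter_mem (ih k (by omega)) (hT k)) ?_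
          exact ((hDW _ (ih (Nat.unpair k).1 (by
            have := Nat.unpair_left_le k; omega))).1 _)
        exact (hSH _ harg).1
  have hargmem : ∀ n, V n ∩ T n ∩ DW (V (Nat.unpair n).1) (Nat.unpair n).2 ∈ 𝓝 (1:G) := by
    intro n
    refine inter_mem (inter_mem (hVnhds n) (hT n)) ?_
    exact (hDW _ (hVnhds (Nat.unpair n).1)).1 _
  have hVsym : ∀ n, (V n)⁻¹ = V n := by
    intro n
    match n with
    | 0 => simp [hV]; rfl
    | Nat.succ k => rw [V_succ_eq k]; exact (hSH _ (hargmem k)).2.1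
  have hVmul : ∀ n, V (n+1) * V (n+1) ⊆ V n := by
    intro n
    rw [V_succ_eq n]
    exact (hSH _ (hargmem n)).2.2.trans (fun x hx => hx.1.1)
  have hVT : ∀ n, V (n+1) ⊆ T n := by
    intro n
    have h1 : (1:G) ∈ V (n+1) := mem_of_mem_nhds (hVnhds (n+1))
    intro x hx
    have : x ∈ V (n+1) * V (n+1) := ⟨x, hx, 1, h1, by simp⟩
    rw [V_succ_eq n] at this
    exact ((hSH _ (hargmem n)).2.2 this).1.2
  have hVconj : ∀ n g, ∃ m, ∀ x ∈ V m, g * x * g⁻¹ ∈ V n := by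
    intro n g
    obtain ⟨i, hi⟩ := (hDW (V n) (hVnhds n)).2 g
    refine ⟨Nat.pair n i + 1, fun x hx => ?_⟩
    have h1 : (1:G) ∈ V (Nat.pair n i + 1) := mem_of_mem_nhds (hVnhds (Nat.pair n i + 1))
    have hx2 : x ∈ V (Nat.pair n i + 1) * V (Nat.pair n i + 1) := ⟨x, hx, 1, h1, by simp⟩
    rw [V_succ_eq (Nat.pair n i)] at hx2
    have := (hSH _ (hargmem (Nat.pair n i))).2.2 hx2
    have hxD : x ∈ DW (V (Nat.unpair (Nat.pair n i)).1) (Nat.unpair (Nat.pair n i)).2 := this.2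
    rw [Nat.unpair_pair] at hxD
    exact hi x hxD
  exact ⟨V, hVnhds, hVsym, hVmul, hVT, hVconj⟩

lemma closure_mul_closure_subset (A B : Set G) :
    closure A * closure B ⊆ closure (A * B) := by
  rintro x ⟨a, ha, b, hb, rfl⟩
  have hab : (a, b) ∈ closure (A ×ˢ B) := by
    rw [closure_prod_eq]; exact ⟨ha, hb⟩
  have := image_closure_subset_closure_image (f := fun p : G × G => p.1 * p.2)
    (s := A ×ˢ B) (by continuity)
  have hx : (fun p : G × G => p.1 * p.2) '' (A ×ˢ B) = A * B := Set.image_mul_prod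
  rw [hx] at this
  exact this ⟨(a, b), hab, rfl⟩

variable {G : Type u} [Group G] [TopologicalSpace G] [IsTopologicalGroup G]

lemma image_mk_mul_subset (P : Subgroup G) [P.Normal] (A B : Set G) :
    (QuotientGroup.mk '' A : Set (G ⧸ P)) * QuotientGroup.mk '' B ⊆
      QuotientGroup.mk '' (A * B) := by
  rintro x ⟨a, ⟨a', ha', rfl⟩, b, ⟨b', hb', rfl⟩, rfl⟩
  exact ⟨a' * b', ⟨a', ha', b', hb', rfl⟩, by simp⟩

lemma image_mk_inv_self (P : Subgroup G) [P.Normal] {A : Set G} (hA : A⁻¹ = A) :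
    (QuotientGroup.mk '' A : Set (G ⧸ P))⁻¹ = QuotientGroup.mk '' A := by
  ext x
  simp only [Set.mem_inv]
  constructor
  · rintro ⟨a, ha, hax⟩
    have hx : x = QuotientGroup.mk a⁻¹ := by
      rw [QuotientGroup.mk_inv, hax, inv_inv]
    exact hx ▸ ⟨a⁻¹, by rw [← hA]; simpa using ha, rfl⟩
  · rintro ⟨a, ha, rfl⟩
    exact ⟨a⁻¹, by rw [← hA]; simpa using ha, by simp⟩

lemma mem_mul_normal_of_mk_mem {P : Subgroup G} [P.Normal] {W : Set G} {v : G}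
    (h : (QuotientGroup.mk v : G ⧸ P) ∈ QuotientGroup.mk '' W) : v ∈ W * (P : Set G) := by
  obtain ⟨w, hw, hweq⟩ := h
  have : w⁻¹ * v ∈ P := (QuotientGroup.eq).mp hweq
  exact ⟨w, hw, w⁻¹ * v, this, by group⟩

/-- The data produced by the gadget: a coarser metrizable-like group topology on `G ⧸ P`. -/
lemma gadget (hs : SeqHComplete G) (P : Subgroup G) [hPn : P.Normal] (A : ℕ → Set G)
    (hA : ∀ n, A n ∈ 𝓝 (1:G))
    (hsym : ∀ n, (A n)⁻¹ = A n)
    (hmul : ∀ n, A (n+1) * A (n+1) ⊆ A n)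
    (hconj : ∀ n g, ∃ m, ∀ x ∈ A m, g * x * g⁻¹ ∈ A n)
    (hsep : ∀ x : G, (∀ n, x ∈ A n * (P : Set G)) → x ∈ P) :
    ∃ t : TopologicalSpace (G ⧸ P), ∃ tg : @IsTopologicalGroup (G ⧸ P) t _,
      (@nhds _ t 1).HasBasis (fun _ : ℕ => True)
          (fun n => (QuotientGroup.mk '' A n : Set (G ⧸ P))) ∧
      @T2Space _ t ∧
      @Continuous G (G ⧸ P) _ t QuotientGroup.mk ∧
      @SeqComplete (G ⧸ P) _ t tg ∧
      @BaireSpace _ t := by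
  classical
  have hone : ∀ n, (1:G) ∈ A n := fun n => mem_of_mem_nhds (hA n)
  have hmono : ∀ n, A (n+1) ⊆ A n := fun n x hx => hmul n ⟨x, hx, 1, hone _, by simp⟩
  have hanti : ∀ {m n}, m ≤ n → A n ⊆ A m := by
    intro m n h
    induction h with
    | refl => exact subset_rfl
    | step h ih => exact (hmono _).trans ih
  set q : G → G ⧸ P := QuotientGroup.mk with hq
  set S : ℕ → Set (G ⧸ P) := fun n => q '' A n with hS
  have hSmono : ∀ {m n}, m ≤ n → S n ⊆ S m := fun h => Set.image_mono (hanti h)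
  have hSmul : ∀ n, S (n+1) * S (n+1) ⊆ S n := by
    intro n x hx
    obtain ⟨a, ⟨a', ha', rfl⟩, b, ⟨b', hb', rfl⟩, rfl⟩ := hx
    exact ⟨a' * b', hmul n ⟨a', ha', b', hb', rfl⟩, rfl⟩
  have hSone : ∀ n, (1 : G ⧸ P) ∈ S n := fun n => ⟨1, hone n, rfl⟩
  have hSinv : ∀ n, (S n)⁻¹ = S n := by
    intro n
    ext x
    constructor
    · rintro hx
      rw [Set.mem_inv] at hx
      obtain ⟨a, ha, hax⟩ := hx
      have : x = q a⁻¹ := by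
        have : q a = x⁻¹ := hax
        rw [← inv_inv x, ← this]; rfl
      exact this ▸ ⟨a⁻¹, by rw [← hsym n]; simpa using ha, rfl⟩
    · rintro ⟨a, ha, rfl⟩
      rw [Set.mem_inv]
      exact ⟨a⁻¹, by rw [← hsym n]; simpa using ha, by simp [hq]⟩
  -- the group filter basis
  have hqsurj : Function.Surjective q := QuotientGroup.mk_surjective
  let B : GroupFilterBasis (G ⧸ P) :=
    { sets := Set.range S
      nonempty := ⟨S 0, 0, rfl⟩
      inter_sets := by
        rintro U V ⟨m, rfl⟩ ⟨n, rfl⟩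
        exact ⟨S (max m n), ⟨max m n, rfl⟩,
          Set.subset_inter (hSmono (le_max_left m n)) (hSmono (le_max_right m n))⟩
      one' := by rintro U ⟨n, rfl⟩; exact hSone n
      mul' := by
        rintro U ⟨n, rfl⟩
        exact ⟨S (n+1), ⟨n+1, rfl⟩, hSmul n⟩
      inv' := by
        rintro U ⟨n, rfl⟩
        refine ⟨S n, ⟨n, rfl⟩, fun x hx => ?_⟩
        show x⁻¹ ∈ S n
        rw [← hSinv n, Set.mem_inv]; simpa using hx
      conj' := by
        intro x₀ U hU
        obtain ⟨n, rfl⟩ := hU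
        obtain ⟨g, rfl⟩ := hqsurj x₀
        obtain ⟨m, hm⟩ := hconj n g
        refine ⟨S m, ⟨m, rfl⟩, ?_⟩
        rintro x ⟨a, ha, rfl⟩
        show q g * q a * (q g)⁻¹ ∈ S n
        refine ⟨g * a * g⁻¹, hm a ha, by simp [hq]⟩
      }
  have hbasis : (@nhds _ B.topology 1).HasBasis (fun _ : ℕ => True) S := by
    refine (B.nhds_one_hasBasis).to_hasBasis ?_ ?_
    · rintro V ⟨n, rfl⟩
      exact ⟨n, trivial, subset_rfl⟩
    · intro n _
      exact ⟨S n, ⟨n, rfl⟩, subset_rfl⟩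
  have hT2 : @T2Space _ B.topology := by
    refine @IsTopologicalGroup.t2Space_of_one_sep _ B.topology _ B.isTopologicalGroup ?_
    intro x hx
    obtain ⟨g, rfl⟩ := hqsurj x
    have : ¬ (∀ n, q g ∈ S n) := by
      intro hall
      apply hx
      have hgP : g ∈ P := by
        apply hsep
        intro n
        obtain ⟨a, ha, haq⟩ := hall n
        have : a⁻¹ * g ∈ P := (QuotientGroup.eq).mp haq
        exact ⟨a, ha, a⁻¹ * g, this, by group⟩
      exact (QuotientGroup.eq_one_iff g).mpr hgP
    push_neg at this
    obtain ⟨n, hn⟩ := this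
    exact ⟨S n, B.mem_nhds_one ⟨n, rfl⟩, hn⟩
  have hcont : @Continuous G (G ⧸ P) _ B.topology q := by
    letI := B.topology
    haveI := B.isTopologicalGroup
    refine continuous_of_continuousAt_one (QuotientGroup.mk' P) ?_
    unfold ContinuousAt
    have h1 : (QuotientGroup.mk' P) (1:G) = 1 := map_one _
    rw [h1, hbasis.tendsto_right_iff]
    intro n _
    filter_upwards [hA n] with a ha
    exact ⟨a, ha, rfl⟩
  have hcs : @SeqComplete (G ⧸ P) _ B.topology B.isTopologicalGroup :=
    @hs (G ⧸ P) _ B.topology B.isTopologicalGroup hT2 (QuotientGroup.mk' P) hcont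
      QuotientGroup.mk_surjective
  have hBaire : @BaireSpace _ B.topology := by
    letI := B.topology
    haveI := B.isTopologicalGroup
    haveI := hT2
    letI : UniformSpace (G ⧸ P) := IsTopologicalGroup.rightUniformSpace (G ⧸ P)
    haveI cg1 : (𝓝 (1 : G ⧸ P)).IsCountablyGenerated := hbasis.isCountablyGenerated
    haveI : (𝓤 (G ⧸ P)).IsCountablyGenerated := by
      rw [uniformity_eq_comap_nhds_one']
      exact Filter.comap.isCountablyGenerated _ _
    haveI : CompleteSpace (G ⧸ P) := UniformSpace.complete_of_cauchySeq_tendsto hcs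
    letI pm : PseudoMetricSpace (G ⧸ P) := UniformSpace.pseudoMetricSpace (G ⧸ P)
    infer_instance
  exact ⟨B.topology, B.isTopologicalGroup, hbasis, hT2, hcont, hcs, hBaire⟩

/-- The core construction: a closed normal subgroup inside all targets with metrizable
(quotient-topology) quotient. -/
theorem core (hω : OmegaPrecompact G) (hs : SeqHComplete G)
    (T : ℕ → Set G) (hT : ∀ n, T n ∈ 𝓝 (1:G)) :
    ∃ N : Subgroup G, N.Normal ∧ IsClosed (N : Set G) ∧ (∀ n, (N : Set G) ⊆ T n) ∧
      TopologicalSpace.MetrizableSpace (G ⧸ N) := by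
  classical
  obtain ⟨V, hVn, hVs, hVm, hVT, hVc⟩ := family_exists hω T hT
  have hVone : ∀ n, (1:G) ∈ V n := fun n => mem_of_mem_nhds (hVn n)
  have hVmono : ∀ n, V (n+1) ⊆ V n := fun n x hx => hVm n ⟨x, hx, 1, hVone _, by simp⟩
  have hVanti : ∀ {m n}, m ≤ n → V n ⊆ V m := by
    intro m n h; induction h with
    | refl => exact subset_rfl
    | step h ih => exact (hVmono _).trans ih
  -- the subgroup P
  let P : Subgroup G :=
    { carrier := ⋂ n, V n
      one_mem' := by simp only [Set.mem_iInter]; exact hVone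
      mul_mem' := by
        intro a b ha hb
        simp only [Set.mem_iInter] at ha hb ⊢
        intro n
        exact hVm n ⟨a, ha (n+1), b, hb (n+1), rfl⟩
      inv_mem' := by
        intro a ha
        simp only [Set.mem_iInter] at ha ⊢
        intro n
        rw [← hVs n]; simpa using ha n }
  have hmemP : ∀ x : G, x ∈ P ↔ ∀ n, x ∈ V n := fun x => Set.mem_iInter
  haveI hPnormal : P.Normal := by
    constructor
    intro a ha g
    rw [hmemP] at ha ⊢
    intro n
    obtain ⟨m, hm⟩ := hVc n g
    exact hm a (ha m)
  have hPV : ∀ n, (P : Set G) ⊆ V n := fun n x hx => by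
    rw [SetLike.mem_coe, hmemP] at hx
    exact hx n
  have hPT : ∀ n, (P : Set G) ⊆ T n := fun n => (hPV (n+1)).trans (hVT n)
  have hPclosed : IsClosed (P : Set G) := by
    have : (P : Set G) = ⋂ n, closure (V (n+1)) := by
      apply Set.Subset.antisymm
      · exact Set.subset_iInter fun n => (hPV (n+1)).trans subset_closure
      · intro x hx
        simp only [Set.mem_iInter] at hx
        rw [SetLike.mem_coe, hmemP]
        intro n
        exact hVm n (closure_subset_mul (hVn (n+1)) (hVs (n+1)) (hx n))
    rw [this]
    exact isClosed_iInter fun n => isClosed_closure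
  have hsepV : ∀ x : G, (∀ n, x ∈ V n * (P : Set G)) → x ∈ P := by
    intro x hx
    rw [hmemP]
    intro n
    obtain ⟨a, ha, b, hb, rfl⟩ := hx (n+1)
    exact hVm n ⟨a, ha, b, hPV (n+1) hb, rfl⟩
  -- sigma gadget
  obtain ⟨tσ, tgσ, hbσ, ht2σ, hcσ, hcsσ, hBσ⟩ := gadget hs P V hVn hVs hVm hVc hsepV
  set q : G → G ⧸ P := QuotientGroup.mk with hqdef
  -- KEY LEMMA A : every neighborhood of 1 swallows some V k modulo P
  have lemA : ∀ W ∈ 𝓝 (1:G), ∃ k, V k ⊆ W * (P : Set G) := by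
    intro W hW
    obtain ⟨W', hW'n, hW's, hW'm⟩ := shrink_exists hW
    set T' : ℕ → Set G := fun n => Nat.casesOn n W' (fun k => V (k+1)) with hT'def
    have hT'n : ∀ n, T' n ∈ 𝓝 (1:G) := by
      intro n; cases n with
      | zero => exact hW'n
      | succ k => exact hVn (k+1)
    obtain ⟨Bf, hBn, hBs, hBm, hBT, hBc⟩ := family_exists hω T' hT'n
    set U : ℕ → Set G := fun n => Bf (n+1) with hUdef
    have hUn : ∀ n, U n ∈ 𝓝 (1:G) := fun n => hBn (n+1)
    have hUs : ∀ n, (U n)⁻¹ = U n := fun n => hBs (n+1)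
    have hUm : ∀ n, U (n+1) * U (n+1) ⊆ U n := fun n => hBm (n+1)
    have hU0 : U 0 ⊆ W' := hBT 0
    have hUV : ∀ n, U (n+1) ⊆ V (n+1) := fun n => hBT (n+1)
    have hBone : ∀ n, (1:G) ∈ Bf n := fun n => mem_of_mem_nhds (hBn n)
    have hBmono : ∀ n, Bf (n+1) ⊆ Bf n := fun n x hx => hBm n ⟨x, hx, 1, hBone _, by simp⟩
    have hUc : ∀ n g, ∃ m, ∀ x ∈ U m, g * x * g⁻¹ ∈ U n := by
      intro n g
      obtain ⟨m, hm⟩ := hBc (n+1) g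
      exact ⟨m, fun x hx => hm x (hBmono m hx)⟩
    have hUone : ∀ n, (1:G) ∈ U n := fun n => hBone (n+1)
    have hUmono : ∀ n, U (n+1) ⊆ U n := fun n x hx => hUm n ⟨x, hx, 1, hUone _, by simp⟩
    have hUanti : ∀ {m n}, m ≤ n → U n ⊆ U m := by
      intro m n h; induction h with
      | refl => exact subset_rfl
      | step h ih => exact (hUmono _).trans ih
    have hsepU : ∀ x : G, (∀ n, x ∈ U n * (P : Set G)) → x ∈ P := by
      intro x hx
      rw [hmemP]
      intro n
      obtain ⟨a, ha, b, hb, rfl⟩ := hx (n+1)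
      exact hVm n ⟨a, hUV n ha, b, hPV (n+1) hb, rfl⟩
    obtain ⟨tρ, tgρ, hbρ, ht2ρ, hcρ, hcsρ, hBρ⟩ := gadget hs P U hUn hUs hUm hUc hsepU
    set SU : ℕ → Set (G ⧸ P) := fun n => q '' U n with hSUdef
    set SV : ℕ → Set (G ⧸ P) := fun n => q '' V n with hSVdef
    have hSUinv : ∀ n, (SU n)⁻¹ = SU n := fun n => image_mk_inv_self P (hUs n)
    have hSVinv : ∀ n, (SV n)⁻¹ = SV n := fun n => image_mk_inv_self P (hVs n)
    have hSUmul : ∀ n, SU (n+1) * SU (n+1) ⊆ SU n := fun n =>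
      (image_mk_mul_subset P _ _).trans (Set.image_mono (hUm n))
    have hSVmul : ∀ n, SV (n+1) * SV (n+1) ⊆ SV n := fun n =>
      (image_mk_mul_subset P _ _).trans (Set.image_mono (hVm n))
    have hSUV : ∀ n, SU (n+1) ⊆ SV (n+1) := fun n => Set.image_mono (hUV n)
    have hSVmem : ∀ n, SV n ∈ @nhds _ tσ (1 : G ⧸ P) := fun n => hbσ.mem_of_mem trivial
    have hSUmem : ∀ n, SU n ∈ @nhds _ tρ (1 : G ⧸ P) := fun n => hbρ.mem_of_mem trivial
    -- almost openness of the sigma topology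
    have hao : ∀ n, @closure _ tσ (SU n) ∈ @nhds _ tσ (1 : G ⧸ P) := by
      intro n
      letI := tσ; haveI := tgσ; haveI := hBσ
      obtain ⟨F, hFc, hFU⟩ := hω (U (n+1)) (hUn (n+1))
      have h1AF : (1:G) ∈ U (n+1) * F := by rw [hFU]; trivial
      obtain ⟨-, -, b0, hb0, -⟩ := h1AF
      obtain ⟨f, rfl⟩ := Set.Countable.exists_eq_range hFc ⟨b0, hb0⟩
      have hcover : (⋃ i : ℕ, closure (SU (n+1) * {q (f i)})) = Set.univ := by
        rw [Set.eq_univ_iff_forall]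
        intro x
        obtain ⟨g, rfl⟩ := QuotientGroup.mk_surjective x
        have hg : g ∈ U (n+1) * Set.range f := by rw [hFU]; trivial
        obtain ⟨u, hu, -, ⟨i, rfl⟩, rfl⟩ := hg
        refine Set.mem_iUnion.mpr ⟨i, subset_closure ?_⟩
        exact ⟨q u, ⟨u, hu, rfl⟩, q (f i), rfl, rfl⟩
      obtain ⟨i, b, hb⟩ := nonempty_interior_of_iUnion_of_closed
        (fun i => isClosed_closure) hcover
      set a : G ⧸ P := (q (f i))⁻¹ with hadef
      have himg : (Homeomorph.mulRight a) '' (SU (n+1) * {q (f i)}) = SU (n+1) := by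
        ext w
        constructor
        · rintro ⟨x, ⟨u, hu, c, hc, rfl⟩, rfl⟩
          rw [Set.mem_singleton_iff] at hc
          subst hc
          have : (Homeomorph.mulRight a) (u * q (f i)) = u := by
            simp [hadef, Homeomorph.mulRight, mul_assoc]
          rw [this]; exact hu
        · intro hw
          refine ⟨w * q (f i), ⟨w, hw, q (f i), rfl, rfl⟩, ?_⟩
          simp [hadef, Homeomorph.mulRight, mul_assoc]
      have hbmem : (Homeomorph.mulRight a) b ∈ interior (closure (SU (n+1))) := by
        have h1 : (Homeomorph.mulRight a) b ∈
            (Homeomorph.mulRight a) '' interior (closure (SU (n+1) * {q (f i)})) :=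
          ⟨b, hb, rfl⟩
        rw [(Homeomorph.mulRight a).image_interior, (Homeomorph.mulRight a).image_closure,
          himg] at h1
        exact h1
      set c : G ⧸ P := (Homeomorph.mulRight a) b with hcdef
      have hcmem : c ∈ closure (SU (n+1)) := interior_subset hbmem
      have hΩopen : IsOpen ((fun y => c⁻¹ * y) '' interior (closure (SU (n+1)))) :=
        (Homeomorph.mulLeft c⁻¹).isOpenMap _ isOpen_interior
      have hΩone : (1 : G ⧸ P) ∈ (fun y => c⁻¹ * y) '' interior (closure (SU (n+1))) :=
        ⟨c, hbmem, by group⟩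
      have hΩsub : ((fun y => c⁻¹ * y) '' interior (closure (SU (n+1)))) ⊆ closure (SU n) := by
        rintro w ⟨y, hy, rfl⟩
        have hcinv : c⁻¹ ∈ closure (SU (n+1)) := by
          have : c⁻¹ ∈ (closure (SU (n+1)))⁻¹ := by
            rw [Set.mem_inv]; simpa using hcmem
          rwa [inv_closure, hSUinv (n+1)] at this
        have : c⁻¹ * y ∈ closure (SU (n+1)) * closure (SU (n+1)) :=
          ⟨c⁻¹, hcinv, y, interior_subset hy, rfl⟩
        have h2 := closure_mul_closure_subset (SU (n+1)) (SU (n+1)) this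
        exact closure_mono (hSUmul n) h2
      exact Filter.mem_of_superset (hΩopen.mem_nhds hΩone) hΩsub
    -- the main inclusion
    have hmain : ∀ y, y ∈ @closure _ tσ (SU 1) → y ∈ q '' W := by
      intro y hy
      -- recursion step
      have step : ∀ n (p : G), y * (q p)⁻¹ ∈ @closure _ tσ (SU (n+1)) →
          ∃ x : G, x ∈ U (n+1) ∧ y * (q (x * p))⁻¹ ∈ @closure _ tσ (SU (n+2)) := by
        letI := tσ; haveI := tgσ
        intro n p hz
        have hnb : closure (SU (n+2)) * {y * (q p)⁻¹} ∈ 𝓝 (y * (q p)⁻¹) :=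
          mul_singleton_mem_nhds_of_nhds_one _ (hao (n+2))
        rw [mem_closure_iff_nhds] at hz
        obtain ⟨w, hw1, hw2⟩ := hz _ hnb
        obtain ⟨x, hx, hxw⟩ := hw2
        obtain ⟨cc, hcc, zz, hzz, hceq⟩ := hw1
        rw [Set.mem_singleton_iff] at hzz
        subst hzz
        refine ⟨x, hx, ?_⟩
        have heq1 : y * (q (x * p))⁻¹ = (y * (q p)⁻¹) * (q x)⁻¹ := by
          rw [show q (x * p) = q x * q p from rfl]; group
        have heq2 : (y * (q p)⁻¹) * (q x)⁻¹ = cc⁻¹ := by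
          rw [hxw, ← hceq]; group
        rw [heq1, heq2]
        have : cc⁻¹ ∈ (closure (SU (n+2)))⁻¹ := by
          rw [Set.mem_inv]; simpa using hcc
        rwa [inv_closure, hSUinv (n+2)] at this
      choose xf hxfU hxfI using step
      let seq : (n : ℕ) → {p : G // y * (q p)⁻¹ ∈ @closure _ tσ (SU (n+1))} := fun n =>
        Nat.rec ⟨1, by simpa [show q (1:G) = (1 : G ⧸ P) from rfl] using hy⟩
          (fun k ih => ⟨xf k ih.1 ih.2 * ih.1, hxfI k ih.1 ih.2⟩) n
      set s : ℕ → G := fun n => (seq n).1 with hsdef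
      have hs0 : s 0 = 1 := rfl
      have hsstepU : ∀ n, s (n+1) * (s n)⁻¹ ∈ U (n+1) := by
        intro n
        have : s (n+1) = xf n (s n) (seq n).2 * (s n) := rfl
        rw [this]
        simpa using hxfU n (s n) (seq n).2
      have hInv : ∀ n, y * (q (s n))⁻¹ ∈ @closure _ tσ (SU (n+1)) := fun n => (seq n).2
      have hdiff : ∀ k n, s (n + k) * (s n)⁻¹ ∈ U (n+1) * U (n+1) := by
        intro k
        induction k with
        | zero => exact fun n => ⟨1, hUone _, 1, hUone _, by simp⟩
        | succ k ih =>
          intro n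
          have h1 : s (n + (k+1)) * (s (n+1))⁻¹ ∈ U (n+2) * U (n+2) := by
            have := ih (n+1)
            rwa [show n+1+k = n+(k+1) by omega] at this
          have h2 : s (n+1) * (s n)⁻¹ ∈ U (n+1) := hsstepU n
          have heq : s (n+(k+1)) * (s n)⁻¹ =
              (s (n+(k+1)) * (s (n+1))⁻¹) * (s (n+1) * (s n)⁻¹) := by group
          rw [heq]
          exact ⟨_, hUm (n+1) h1, _, h2, rfl⟩
      have hdiff' : ∀ m n, n ≤ m → s m * (s n)⁻¹ ∈ U n := by
        intro m n h
        obtain ⟨k, rfl⟩ := Nat.exists_eq_add_of_le h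
        exact hUm n (hdiff k n)
      -- rho-limit via sequential completeness
      have hzex : ∃ z : G ⧸ P, Filter.Tendsto (fun n => q (s n)) Filter.atTop (@nhds _ tρ z) := by
        letI := tρ; haveI := tgρ; haveI := ht2ρ
        letI : UniformSpace (G ⧸ P) := IsTopologicalGroup.rightUniformSpace (G ⧸ P)
        refine hcsρ (fun n => q (s n)) ?_
        have hU𝓤 : (uniformity (G ⧸ P)).HasBasis (fun _ : ℕ => True)
            (fun n => (fun p : (G ⧸ P) × (G ⧸ P) => p.2 / p.1) ⁻¹' (SU n)) := by
          rw [uniformity_eq_comap_nhds_one']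
          simpa only [div_eq_mul_inv] using hbρ.comap (fun p : (G ⧸ P) × (G ⧸ P) => p.2 * p.1⁻¹)
        rw [hU𝓤.cauchySeq_iff]
        intro k _
        refine ⟨k, fun m hm n hn => ?_⟩
        show q (s n) / q (s m) ∈ SU k
        have hqd : q (s n) / q (s m) = q (s n * (s m)⁻¹) := by rw [div_eq_mul_inv]; rfl
        rw [hqd]
        rcases le_total m n with h | h
        · exact Set.image_mono (hUanti hm) ⟨_, hdiff' n m h, rfl⟩
        · have h1 := hdiff' m n h
          have hinv : s n * (s m)⁻¹ ∈ U n := by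
            rw [← hUs n, Set.mem_inv]; simpa using h1
          exact Set.image_mono (hUanti hn) ⟨_, hinv, rfl⟩
      obtain ⟨z, hzρ⟩ := hzex
      -- both are sigma-limits
      have hyz : y = z := by
        letI := tσ; haveI := tgσ; haveI := ht2σ
        have hqsyV : ∀ n, q (s n) * y⁻¹ ∈ SV n := by
          intro n
          have h1 : y * (q (s n))⁻¹ ∈ closure (SV (n+1)) :=
            closure_mono (hSUV n) (hInv n)
          have h2 : closure (SV (n+1)) ⊆ SV n :=
            (closure_subset_mul (hSVmem (n+1)) (hSVinv (n+1))).trans (hSVmul n)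
          have h3 : y * (q (s n))⁻¹ ∈ SV n := h2 h1
          have : q (s n) * y⁻¹ ∈ (SV n)⁻¹ := by
            rw [Set.mem_inv]; simpa using h3
          rwa [hSVinv n] at this
        have htyσ : Filter.Tendsto (fun n => q (s n)) Filter.atTop (𝓝 y) := by
          have hred : Filter.Tendsto (fun n => y⁻¹ * q (s n)) Filter.atTop (𝓝 (1 : G ⧸ P)) := by
            rw [hbσ.tendsto_right_iff]
            intro j _
            obtain ⟨gy, hgy⟩ := QuotientGroup.mk_surjective y
            obtain ⟨m, hm⟩ := hVc j gy⁻¹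
            filter_upwards [Filter.eventually_ge_atTop m] with n hn
            have h4 : q (s n) * y⁻¹ ∈ SV m := Set.image_mono (hVanti hn) (hqsyV n)
            obtain ⟨v, hv, hveq⟩ := h4
            have h5 : y⁻¹ * q (s n) = y⁻¹ * (q (s n) * y⁻¹) * y := by group
            rw [h5, ← hveq, ← hgy]
            have h6 : (q gy)⁻¹ * q v * q gy = q (gy⁻¹ * v * gy) := rfl
            rw [h6]
            refine ⟨gy⁻¹ * v * gy, ?_, rfl⟩
            have := hm v hv
            simpa using this
          have := hred.const_mul y
          simpa using this
        have htzσ : Filter.Tendsto (fun n => q (s n)) Filter.atTop (𝓝 z) := by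
          have hredρ : Filter.Tendsto (fun n => z⁻¹ * q (s n)) Filter.atTop
              (@nhds _ tρ (1 : G ⧸ P)) := by
            have h7 : Filter.Tendsto (fun n => z⁻¹ * q (s n)) Filter.atTop
                (@nhds _ tρ (z⁻¹ * z)) := by
              letI := tρ; haveI := tgρ
              exact hzρ.const_mul z⁻¹
            simpa using h7
          have hred : Filter.Tendsto (fun n => z⁻¹ * q (s n)) Filter.atTop (𝓝 (1 : G ⧸ P)) := by
            rw [hbσ.tendsto_right_iff]
            intro j _
            have h8 := (hbρ.tendsto_right_iff).mp hredρ (j+1) trivial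
            filter_upwards [h8] with n hn
            exact Set.image_mono ((hUV j).trans (hVmono j)) hn
          have := hred.const_mul z
          simpa using this
        exact tendsto_nhds_unique htyσ htzσ
      -- final assembly in the rho topology
      letI := tρ; haveI := tgρ
      have ht1 : Filter.Tendsto (fun n => q (s n) * (q (s 1))⁻¹) Filter.atTop
          (𝓝 (z * (q (s 1))⁻¹)) := hzρ.mul_const _
      have hev : ∀ᶠ n in Filter.atTop, q (s n) * (q (s 1))⁻¹ ∈ SU 1 := by
        filter_upwards [Filter.eventually_ge_atTop 1] with n hn
        exact ⟨s n * (s 1)⁻¹, hdiff' n 1 hn, rfl⟩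
      have hcl : z * (q (s 1))⁻¹ ∈ closure (SU 1) := mem_closure_of_tendsto ht1 hev
      have hclsub : closure (SU 1) ⊆ SU 0 :=
        (closure_subset_mul (hSUmem 1) (hSUinv 1)).trans (hSUmul 0)
      have hy1 : y * (q (s 1))⁻¹ ∈ SU 0 := by
        rw [hyz]; exact hclsub hcl
      obtain ⟨u0, hu0, hequ⟩ := hy1
      have hs1U : s 1 ∈ U 1 := by
        have := hsstepU 0
        rw [hs0] at this
        simpa using this
      have hyeq : y = q (u0 * s 1) := by
        rw [show q (u0 * s 1) = q u0 * q (s 1) from rfl, hequ]; group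
      refine ⟨u0 * s 1, ?_, hyeq.symm⟩
      exact hW'm ⟨u0, hU0 hu0, s 1, hU0 (hUmono 0 hs1U), rfl⟩
    -- conclude lemma A
    obtain ⟨k, -, hk⟩ := (hbσ.mem_iff).mp (hao 1)
    refine ⟨k, fun v hv => ?_⟩
    have h9 : (q v : G ⧸ P) ∈ q '' W := by
      apply hmain
      apply hk
      exact ⟨v, hv, rfl⟩
    exact mem_mul_normal_of_mk_mem h9
  clear hbσ hcσ ht2σ hcsσ hBσ tgσ
  clear tσ
  -- metrizability of the quotient (standard topology)
  have hb1 : (𝓝 (1 : G ⧸ P)).HasBasis (fun _ : ℕ => True) (fun n => q '' V n) := by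
    have hmap : 𝓝 (1 : G ⧸ P) = Filter.map q (𝓝 (1:G)) := by
      rw [hqdef]
      simpa using QuotientGroup.nhds_eq P (1:G)
    refine ⟨fun t => ⟨?_, ?_⟩⟩
    · intro ht
      rw [hmap, Filter.mem_map] at ht
      obtain ⟨k, hk⟩ := lemA (q ⁻¹' t) ht
      refine ⟨k, trivial, ?_⟩
      rintro x ⟨v, hv, rfl⟩
      obtain ⟨w, hw, p, hp, rfl⟩ := hk hv
      have hp1 : q p = 1 := (QuotientGroup.eq_one_iff p).mpr hp
      have : q (w * p) = q w := by
        rw [show q (w * p) = q w * q p from rfl, hp1, mul_one]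
      rw [this]
      exact hw
    · rintro ⟨k, -, hk⟩
      rw [hmap, Filter.mem_map]
      refine Filter.mem_of_superset (hVn k) ?_
      intro v hv
      exact hk ⟨v, hv, rfl⟩
  haveI : FirstCountableTopology (G ⧸ P) := by
    constructor
    intro x
    obtain ⟨g, rfl⟩ := QuotientGroup.mk_surjective x
    have heqn : 𝓝 ((g : G ⧸ P)) = Filter.map (fun w => ((g : G ⧸ P)) * w) (𝓝 1) :=
      (map_mul_left_nhds_one _).symm
    rw [heqn]
    exact (hb1.map _).isCountablyGenerated
  haveI hT3 : T3Space (G ⧸ P) := @QuotientGroup.instT3Space G _ _ _ P hPnormal hPclosed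
  have hmetr : TopologicalSpace.MetrizableSpace (G ⧸ P) := by
    letI : UniformSpace (G ⧸ P) := IsTopologicalGroup.rightUniformSpace (G ⧸ P)
    haveI : (uniformity (G ⧸ P)).IsCountablyGenerated := by
      rw [uniformity_eq_comap_nhds_one']
      infer_instance
    exact UniformSpace.metrizableSpace
  exact ⟨P, hPnormal, hPclosed, hPT, hmetr⟩

lemma metquot_sep (N : Subgroup G) (hn : N.Normal)
    (hm : TopologicalSpace.MetrizableSpace (G ⧸ N)) :
    ∃ A : ℕ → Set G, (∀ k, A k ∈ 𝓝 (1:G)) ∧ ∀ x : G, (∀ k, x ∈ A k) → x ∈ N := by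
  haveI := hn
  haveI := hm
  obtain ⟨O, hO⟩ := (𝓝 (1 : G ⧸ N)).exists_antitone_basis
  have hcont : Continuous (QuotientGroup.mk : G → G ⧸ N) :=
    (QuotientGroup.isQuotientMap_mk N).continuous
  refine ⟨fun k => QuotientGroup.mk ⁻¹' (O k), fun k => ?_, fun x hx => ?_⟩
  · have h1 : O k ∈ 𝓝 (1 : G ⧸ N) := hO.toHasBasis.mem_of_mem trivial
    have h2 := hcont.continuousAt (x := (1:G))
    exact h2.preimage_mem_nhds (by simpa using h1)
  · by_contra hxN
    have hne : (QuotientGroup.mk x : G ⧸ N) ≠ 1 := by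
      intro h; exact hxN ((QuotientGroup.eq_one_iff x).mp h)
    have hopen : ({(QuotientGroup.mk x : G ⧸ N)}ᶜ : Set (G ⧸ N)) ∈ 𝓝 (1 : G ⧸ N) :=
      isOpen_compl_singleton.mem_nhds (by simpa using hne.symm)
    obtain ⟨k, -, hk⟩ := hO.toHasBasis.mem_iff.mp hopen
    exact hk (hx k) rfl


end DU8Aux

/-- An ω-precompact sequentially h-complete h-complete group is topologically
isomorphic to the projective limit of its metrizable quotients: the canonical
map is an embedding with range exactly the projective limit. -/
theorem stmt8 (G : Type u) [Group G] [TopologicalSpace G] [IsTopologicalGroup G] [T2Space G]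
    (hω : OmegaPrecompact G) (hs : SeqHComplete G) (hh : HComplete G) :
    Topology.IsEmbedding (canonMap G) ∧ Set.range (canonMap G) = projLimit G := by
  classical
  have hcompl : (letI := IsTopologicalGroup.rightUniformSpace G; CompleteSpace G) :=
    hh G (MonoidHom.id G) continuous_id (fun x => ⟨x, rfl⟩)
  have hmq : ∀ U ∈ 𝓝 (1:G), ∃ N : MetQuotIdx G, (N.val : Set G) ⊆ U := by
    intro U hU
    obtain ⟨N, h1, h2, h3, h4⟩ := core hω hs (fun _ => U) (fun _ => hU)
    exact ⟨⟨N, h1, h2, h4⟩, h3 0⟩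
  have hdir : ∀ N M : MetQuotIdx G, ∃ K : MetQuotIdx G, K.val ≤ N.val ∧ K.val ≤ M.val := by
    intro N M
    obtain ⟨A, hA1, hA2⟩ := metquot_sep N.val N.prop.1 N.prop.2.2
    obtain ⟨B, hB1, hB2⟩ := metquot_sep M.val M.prop.1 M.prop.2.2
    obtain ⟨K, h1, h2, h3, h4⟩ := core hω hs (fun n => A n ∩ B n)
      (fun n => inter_mem (hA1 n) (hB1 n))
    refine ⟨⟨K, h1, h2, h4⟩, ?_, ?_⟩
    · intro x hx; exact hA2 x (fun k => ((h3 k) hx).1)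
    · intro x hx; exact hB2 x (fun k => ((h3 k) hx).2)
  -- injectivity
  have hinj : Function.Injective (canonMap G) := by
    intro a b hab
    have hall : ∀ U ∈ 𝓝 (1:G), a⁻¹ * b ∈ U := by
      intro U hU
      obtain ⟨N, hN⟩ := hmq U hU
      have h5 : (QuotientGroup.mk a : G ⧸ N.val) = QuotientGroup.mk b := congrFun hab N
      exact hN ((QuotientGroup.eq).mp h5)
    have h1 : a⁻¹ * b = 1 := by
      by_contra hne
      have h2 : ({a⁻¹ * b}ᶜ : Set G) ∈ 𝓝 (1:G) :=
        isOpen_compl_singleton.mem_nhds (by simpa using (Ne.symm hne))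
      exact (hall _ h2) rfl
    exact inv_mul_eq_one.mp h1
  -- continuity
  have hcont : Continuous (canonMap G) :=
    continuous_pi (fun N => (QuotientGroup.isQuotientMap_mk N.val).continuous)
  have hind : Topology.IsInducing (canonMap G) := by
    rw [Topology.isInducing_iff_nhds]
    intro g
    apply le_antisymm
    · exact (hcont.tendsto g).le_comap
    · intro Wset hW
      have hW1 : (fun h : G => g * h) ⁻¹' Wset ∈ 𝓝 (1:G) := by
        rw [← map_mul_left_nhds_one g] at hW
        exact hW
      obtain ⟨W₁, hW₁n, hW₁s, hW₁m⟩ := shrink_exists hW1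
      obtain ⟨N, hNsub⟩ := hmq W₁ hW₁n
      have hsetnb : (QuotientGroup.mk '' ((fun h : G => g * h) '' W₁) : Set (G ⧸ N.val)) ∈
          𝓝 (QuotientGroup.mk g : G ⧸ N.val) := by
        have h6 : ((fun h : G => g * h) '' W₁) ∈ 𝓝 g := by
          rw [← map_mul_left_nhds_one g]
          exact Filter.image_mem_map hW₁n
        exact (QuotientGroup.isOpenMap_coe).image_mem_nhds h6
      refine Filter.mem_comap.mpr
        ⟨(fun p : (∀ M : MetQuotIdx G, G ⧸ M.val) => p N) ⁻¹'
            (QuotientGroup.mk '' ((fun h : G => g * h) '' W₁)), ?_, ?_⟩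
      · exact (continuous_apply N).continuousAt.preimage_mem_nhds hsetnb
      · intro h hmem
        simp only [Set.mem_preimage] at hmem
        obtain ⟨w', ⟨w, hw, rfl⟩, heq⟩ := hmem
        have h7 : (g * w)⁻¹ * h ∈ N.val := (QuotientGroup.eq).mp heq
        have h8 : h = g * (w * ((g * w)⁻¹ * h)) := by group
        rw [h8]
        exact hW₁m ⟨w, hw, _, hNsub h7, rfl⟩
  -- range ⊆ projLimit
  have hr1 : Set.range (canonMap G) ⊆ projLimit G := by
    rintro _ ⟨g, rfl⟩
    intro N M hNM
    haveI := N.prop.1; haveI := M.prop.1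
    show QuotientGroup.map _ _ (MonoidHom.id G) _ (QuotientGroup.mk g) = QuotientGroup.mk g
    exact QuotientGroup.map_mk _ _ _ _ g
  -- projLimit ⊆ range
  have hr2 : projLimit G ⊆ Set.range (canonMap G) := by
    intro x hx
    letI : UniformSpace G := IsTopologicalGroup.rightUniformSpace G
    haveI : CompleteSpace G := hcompl
    haveI hne : Nonempty (MetQuotIdx G) := ⟨(hmq Set.univ Filter.univ_mem).choose⟩
    set S : MetQuotIdx G → Set G := fun N => QuotientGroup.mk ⁻¹' {x N} with hSdef
    have hSne : ∀ N, (S N).Nonempty := by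
      intro N; obtain ⟨g, hg⟩ := QuotientGroup.mk_surjective (x N); exact ⟨g, hg⟩
    have hdirS : ∀ N M : MetQuotIdx G, ∃ K, S K ⊆ S N ∩ S M := by
      intro N M
      obtain ⟨K, hKN, hKM⟩ := hdir N M
      refine ⟨K, fun g hg => ⟨?_, ?_⟩⟩
      · have hcomp := hx K N hKN
        haveI := K.prop.1; haveI := N.prop.1
        simp only [hSdef, Set.mem_preimage, Set.mem_singleton_iff] at hg ⊢
        rw [← hcomp, ← hg]; exact (QuotientGroup.map_mk K.val N.val (MonoidHom.id G) _ g).symm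
      · have hcomp := hx K M hKM
        haveI := K.prop.1; haveI := M.prop.1
        simp only [hSdef, Set.mem_preimage, Set.mem_singleton_iff] at hg ⊢
        rw [← hcomp, ← hg]; exact (QuotientGroup.map_mk K.val M.val (MonoidHom.id G) _ g).symm
    set F : Filter G := ⨅ (N : MetQuotIdx G), 𝓟 (S N) with hFdef
    have hdirF : Directed (· ≥ ·) (fun N : MetQuotIdx G => 𝓟 (S N)) := by
      intro N M
      obtain ⟨K, hK⟩ := hdirS N M
      exact ⟨K, Filter.principal_mono.mpr (hK.trans Set.inter_subset_left),
        Filter.principal_mono.mpr (hK.trans Set.inter_subset_right)⟩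
    haveI hFne : F.NeBot :=
      Filter.iInf_neBot_of_directed hdirF
        (fun N => Filter.principal_neBot_iff.mpr (hSne N))
    have hSF : ∀ N, S N ∈ F := fun N => Filter.mem_iInf_of_mem N (Filter.mem_principal_self _)
    have hFc : Cauchy F := by
      refine ⟨hFne, ?_⟩
      rw [uniformity_eq_comap_nhds_one']
      intro s hs
      obtain ⟨U, hU, hsub⟩ := Filter.mem_comap.mp hs
      obtain ⟨N, hN⟩ := hmq U hU
      have hprod : S N ×ˢ S N ∈ F ×ˢ F := Filter.prod_mem_prod (hSF N) (hSF N)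
      refine Filter.mem_of_superset hprod ?_
      rintro ⟨a, b⟩ ⟨ha, hb⟩
      haveI := N.prop.1
      apply hsub
      simp only [Set.mem_preimage]
      simp only [hSdef, Set.mem_preimage, Set.mem_singleton_iff] at ha hb
      have h9 : (QuotientGroup.mk (b / a) : G ⧸ N.val) = 1 := by
        rw [div_eq_mul_inv]
        rw [show (QuotientGroup.mk (b * a⁻¹) : G ⧸ N.val) =
          QuotientGroup.mk b * (QuotientGroup.mk a)⁻¹ from rfl, ha, hb]
        simp
      exact hN ((QuotientGroup.eq_one_iff _).mp (by rwa [div_eq_mul_inv] at h9))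
    obtain ⟨g, hg⟩ := CompleteSpace.complete hFc
    have hgx : ∀ N : MetQuotIdx G, (QuotientGroup.mk g : G ⧸ N.val) = x N := by
      intro N
      haveI := N.prop.1
      haveI : TopologicalSpace.MetrizableSpace (G ⧸ N.val) := N.prop.2.2
      have hclosed : IsClosed (S N) :=
        isClosed_singleton.preimage (QuotientGroup.isQuotientMap_mk N.val).continuous
      have hmem : g ∈ closure (S N) := by
        rw [mem_closure_iff_nhds]
        intro t ht
        exact hFne.nonempty_of_mem (Filter.inter_mem (hg ht) (hSF N))
      rw [hclosed.closure_eq] at hmem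
      exact hmem
    exact ⟨g, funext fun N => hgx N⟩
  exact ⟨⟨hind, hinj⟩, Set.Subset.antisymm hr1 hr2⟩
end

section
/- A complete Hausdorff topological group G is precompact if and only if every closed separable subgroup of G is precompact; in particular, G is compact if and only if every closed separable subgroup of G is precompact. -/
open Topology Pointwise

universe u

section MyAux

variable {G : Type u} [Group G] [TopologicalSpace G] [IsTopologicalGroup G]

/-- A countable set generates a countable subgroup. -/
lemma my_countable_subgroup_closure {s : Set G} (hs : s.Countable) :
    (Subgroup.closure s : Set G).Countable := by
  classical
  have ht : (s ∪ s⁻¹).Countable := hs.union (hs.preimage inv_injective)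
  haveI := ht.to_subtype
  have key : (Subgroup.closure s : Set G) ⊆
      Set.range (fun l : List (s ∪ s⁻¹ : Set G) => (l.map (Subtype.val)).prod) := by
    intro x hx
    have hx' : x ∈ Submonoid.closure (s ∪ s⁻¹) := by
      rw [← Subgroup.closure_toSubmonoid s] at *
      exact hx
    obtain ⟨l, hl, hprod⟩ := Submonoid.exists_list_of_mem_closure hx'
    refine ⟨l.pmap Subtype.mk hl, ?_⟩
    simp [List.map_pmap, List.pmap_eq_map, hprod]
  exact (Set.countable_range _).mono key

/-- Precompactness is equivalent to total boundedness of `univ`. -/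
lemma my_precompact_iff_totallyBounded :
    GroupPrecompact G ↔ @TotallyBounded G (IsTopologicalGroup.rightUniformSpace G) Set.univ := by
  letI := IsTopologicalGroup.rightUniformSpace G
  have huni : uniformity G = Filter.comap (fun p : G × G => p.2 / p.1) (𝓝 1) := by simp only [div_eq_mul_inv]; rfl
  constructor
  · intro h d hd
    rw [huni, Filter.mem_comap] at hd
    obtain ⟨U, hU, hUd⟩ := hd
    obtain ⟨F, hF, hUF⟩ := h U⁻¹ (inv_mem_nhds_one G hU)
    refine ⟨F, hF, fun x _ => ?_⟩
    have hx : x ∈ U⁻¹ * F := hUF ▸ Set.mem_univ _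
    obtain ⟨u, hu, f, hf, he⟩ := hx
    refine Set.mem_iUnion₂.mpr ⟨f, hf, hUd ?_⟩
    show f / x ∈ U
    rw [← he, div_eq_mul_inv]
    simpa using Set.mem_inv.mp hu
  · intro h U hU
    obtain ⟨t, ht, hsub⟩ := h ((fun p : G × G => p.2 / p.1) ⁻¹' U⁻¹)
      (by rw [huni]; exact Filter.preimage_mem_comap (inv_mem_nhds_one G hU))
    refine ⟨t, ht, Set.eq_univ_of_forall fun x => ?_⟩
    obtain ⟨y, hy, hxy⟩ := Set.mem_iUnion₂.mp (hsub (Set.mem_univ x))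
    have hxy' : y / x ∈ U⁻¹ := hxy
    refine ⟨(y / x)⁻¹, by simpa using Set.mem_inv.mp hxy', y, hy, by simp [div_eq_mul_inv, mul_inv_rev, mul_assoc]⟩

/-- Subgroups of precompact groups are precompact. -/
lemma my_subgroup_precompact (hG : GroupPrecompact G) (H : Subgroup G) :
    GroupPrecompact H := by
  classical
  intro U hU
  -- pull back to a neighborhood of 1 in G
  rw [nhds_induced] at hU
  obtain ⟨V, hV, hVU⟩ := hU
  rw [Subgroup.coe_one] at hV
  obtain ⟨S₀, hS₀, hS₀V⟩ := exists_nhds_one_split hV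
  set S : Set G := S₀ ∩ S₀⁻¹ with hSdef
  have hS : S ∈ 𝓝 (1 : G) := Filter.inter_mem hS₀ (inv_mem_nhds_one G hS₀)
  obtain ⟨F₀, hF₀, hcov⟩ := hG S hS
  -- for each f, choose a member of H in S * {f} if it exists
  let g : G → H := fun f =>
    if hfe : ∃ h : H, ∃ s ∈ S, s * f = (h : G) then hfe.choose else 1
  refine ⟨g '' F₀, hF₀.image g, Set.eq_univ_of_forall fun h => ?_⟩
  have hh : (h : G) ∈ S * F₀ := hcov ▸ Set.mem_univ _
  obtain ⟨s, hs, f, hf, hsf⟩ := hh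
  have hfe : ∃ h' : H, ∃ s ∈ S, s * f = (h' : G) := ⟨h, s, hs, hsf⟩
  have hg : g f = hfe.choose := dif_pos hfe
  obtain ⟨s', hs', hs'f⟩ := hfe.choose_spec
  rw [← hg] at hs'f
  refine ⟨h * (g f)⁻¹, ?_, g f, Set.mem_image_of_mem g hf, by group⟩
  apply hVU
  show ((h * (g f)⁻¹ : H) : G) ∈ V
  have : ((h * (g f)⁻¹ : H) : G) = s * s'⁻¹ := by
    push_cast
    rw [← hsf, ← hs'f]
    group
  rw [this]
  exact hS₀V s hs.1 s'⁻¹ (Set.mem_inv.mp hs'.2)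

/-- If every closed separable subgroup is precompact, so is the group. -/
lemma my_precompact_of_subgroups
    (hyp : ∀ H : Subgroup G, IsClosed (H : Set G) →
      TopologicalSpace.IsSeparable (H : Set G) → GroupPrecompact H) :
    GroupPrecompact G := by
  classical
  by_contra hnc
  rw [GroupPrecompact] at hnc
  push_neg at hnc
  obtain ⟨U, hU, hbad⟩ := hnc
  obtain ⟨S₀, hS₀, hS₀U⟩ := exists_nhds_one_split hU
  set S : Set G := S₀ ∩ S₀⁻¹ with hSdef
  have hS : S ∈ 𝓝 (1 : G) := Filter.inter_mem hS₀ (inv_mem_nhds_one G hS₀)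
  have hSsymm : S⁻¹ = S := by
    ext y
    simp only [hSdef, Set.mem_inv, Set.mem_inter_iff, inv_inv]
    exact and_comm
  have hSSU : S * S ⊆ U := fun z ⟨a, ha, b, hb, hab⟩ => hab ▸ hS₀U a ha.1 b hb.1
  -- For any finite set F, there is a point outside (S*S)*F
  have key : ∀ F : Finset G, ∃ x, x ∉ S * S * (F : Set G) := by
    intro F
    have hne := hbad (F : Set G) F.finite_toSet
    have hsub : S * S * (F : Set G) ⊆ U * (F : Set G) :=
      Set.mul_subset_mul_right hSSU
    obtain ⟨x, hx⟩ := (Set.ne_univ_iff_exists_notMem _).mp hne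
    exact ⟨x, fun h => hx (hsub h)⟩
  choose pick hpick using key
  -- recursively construct an (S*S)-separated sequence
  let A : ℕ → Finset G := fun n => Nat.rec ∅ (fun _ Aprev => insert (pick Aprev) Aprev) n
  set x : ℕ → G := fun n => pick (A n) with hxdef
  have hA_succ : ∀ n, A (n + 1) = insert (x n) (A n) := fun n => rfl
  have hA_mono : Monotone A := monotone_nat_of_le_succ fun n => by
    rw [hA_succ]; exact Finset.subset_insert _ _
  have hx_mem : ∀ m n, m < n → x m ∈ A n := fun m n hmn => by
    have : x m ∈ A (m + 1) := by rw [hA_succ]; exact Finset.mem_insert_self _ _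
    exact hA_mono hmn this
  have sep : ∀ m n, m ≠ n → x n * (x m)⁻¹ ∉ S * S := by
    have half : ∀ m n, m < n → x n * (x m)⁻¹ ∉ S * S := by
      intro m n hmn hin
      apply hpick (A n)
      exact ⟨x n * (x m)⁻¹, hin, x m, hx_mem m n hmn, by group; rfl⟩
    intro m n hmn hin
    rcases hmn.lt_or_gt with h | h
    · -- n < m (since m ≠ n and ¬(m < n) case handled); here m < n
      exact half m n h hin
    · apply half n m h
      have hSinv : ∀ a ∈ S, a⁻¹ ∈ S := fun a ha =>
        hSsymm ▸ Set.mem_inv.mpr (by simpa using ha)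
      obtain ⟨a, ha, b, hb, hab⟩ := hin
      have hx : x m * (x n)⁻¹ = b⁻¹ * a⁻¹ := by
        have h2 := congrArg Inv.inv hab
        rw [mul_inv_rev, mul_inv_rev, inv_inv] at h2
        exact h2.symm
      rw [hx]
      exact ⟨b⁻¹, hSinv b hb, a⁻¹, hSinv a ha, rfl⟩
  -- the closed separable subgroup generated by the sequence
  set H : Subgroup G := (Subgroup.closure (Set.range x)).topologicalClosure with hHdef
  have hclosed : IsClosed (H : Set G) := Subgroup.isClosed_topologicalClosure _
  have hsep : TopologicalSpace.IsSeparable (H : Set G) := by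
    refine ⟨(Subgroup.closure (Set.range x) : Set G),
      my_countable_subgroup_closure (Set.countable_range x), ?_⟩
    rw [hHdef, Subgroup.topologicalClosure_coe]
  have hpre := hyp H hclosed hsep
  -- pull S back to H
  have hW : (Subtype.val ⁻¹' S : Set H) ∈ 𝓝 (1 : H) := by
    rw [nhds_induced, Subgroup.coe_one]
    exact Filter.preimage_mem_comap hS
  obtain ⟨F, hF, hcov⟩ := hpre _ hW
  have hxH : ∀ n, x n ∈ H :=
    fun n => Subgroup.le_topologicalClosure _ (Subgroup.subset_closure (Set.mem_range_self n))
  set ξ : ℕ → H := fun n => ⟨x n, hxH n⟩ with hξdef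
  have hmem : ∀ n, ξ n ∈ (Subtype.val ⁻¹' S : Set H) * F := fun n => hcov ▸ Set.mem_univ _
  choose w hw f hf hEq using fun n => Set.mem_mul.mp (hmem n)
  haveI := hF.to_subtype
  obtain ⟨m, n, hmn, hfe⟩ :=
    Finite.exists_ne_map_eq_of_infinite (fun k => (⟨f k, hf k⟩ : F))
  have hfe' : f m = f n := congrArg Subtype.val hfe
  apply sep n m (Ne.symm hmn)
  have hcalc : x m * (x n)⁻¹ = (w m : G) * ((w n : G))⁻¹ := by
    have h1 : x m = (w m : G) * (f m : G) := by
      have := congrArg (Subtype.val : H → G) (hEq m)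
      push_cast at this
      exact this.symm
    have h2 : x n = (w n : G) * (f n : G) := by
      have := congrArg (Subtype.val : H → G) (hEq n)
      push_cast at this
      exact this.symm
    rw [h1, h2, hfe']
    group
  rw [hcalc]
  refine ⟨(w m : G), hw m, ((w n : G))⁻¹, ?_, rfl⟩
  rw [← hSsymm]
  exact Set.inv_mem_inv.mpr (hw n)

/-- Precompact + complete implies compact, and the converse holds too. -/
lemma my_compact_iff_precompact [T2Space G]
    (hc : @CompleteSpace G (IsTopologicalGroup.rightUniformSpace G)) :
    CompactSpace G ↔ GroupPrecompact G := by
  letI := IsTopologicalGroup.rightUniformSpace G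
  rw [my_precompact_iff_totallyBounded]
  constructor
  · intro h
    exact (isCompact_univ (X := G)).totallyBounded
  · intro h
    exact ⟨h.isCompact_of_isClosed isClosed_univ⟩

end MyAux

/-- A complete group is precompact iff every closed separable subgroup is
precompact; in particular it is compact iff every closed separable subgroup is
precompact. -/
theorem stmt10 (G : Type u) [Group G] [TopologicalSpace G] [IsTopologicalGroup G] [T2Space G]
    (hc : @CompleteSpace G (IsTopologicalGroup.rightUniformSpace G)) :
    (GroupPrecompact G ↔
      ∀ H : Subgroup G, IsClosed (H : Set G) → TopologicalSpace.IsSeparable (H : Set G) →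
        GroupPrecompact H) ∧
    (CompactSpace G ↔
      ∀ H : Subgroup G, IsClosed (H : Set G) → TopologicalSpace.IsSeparable (H : Set G) →
        GroupPrecompact H) := by
  have main : GroupPrecompact G ↔
      ∀ H : Subgroup G, IsClosed (H : Set G) → TopologicalSpace.IsSeparable (H : Set G) →
        GroupPrecompact H :=
    ⟨fun h H _ _ => my_subgroup_precompact h H, my_precompact_of_subgroups⟩
  exact ⟨main, (my_compact_iff_precompact hc).trans main⟩
end

section
/- Let H be an h-complete Hausdorff topological group that is MAP, and let N be a closed normal subgroup of H that is h-complete. Then the quotient H/N is MAP. -/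
open Topology Pointwise

universe u

section Aux

/-- The group uniformity of a subgroup agrees with the induced uniformity. -/
lemma subgroup_comap_toUniformSpace {K : Type*} [Group K] [TopologicalSpace K]
    [IsTopologicalGroup K] (S : Subgroup K) :
    (IsTopologicalGroup.rightUniformSpace K).comap (Subtype.val : S → K) =
      IsTopologicalGroup.rightUniformSpace S := by
  apply UniformSpace.ext
  rw [uniformity_comap]
  show Filter.comap _ (Filter.comap (fun p : K × K => p.2 * p.1⁻¹) (𝓝 1)) =
    Filter.comap (fun p : S × S => p.2 * p.1⁻¹) (𝓝 1)
  rw [Filter.comap_comap, nhds_induced, Filter.comap_comap]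
  rfl

/-- A subgroup which is complete for its group uniformity is closed. -/
lemma isClosed_of_group_completeSpace {K : Type*} [Group K] [TopologicalSpace K]
    [IsTopologicalGroup K] [T2Space K] (S : Subgroup K)
    (h : @CompleteSpace S (IsTopologicalGroup.rightUniformSpace S)) :
    IsClosed (S : Set K) := by
  letI : UniformSpace K := IsTopologicalGroup.rightUniformSpace K
  have h2 : CompleteSpace (S : Set K) := by
    have e : (instUniformSpaceSubtype : UniformSpace S) =
        IsTopologicalGroup.rightUniformSpace S := subgroup_comap_toUniformSpace S
    show @CompleteSpace S instUniformSpaceSubtype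
    rw [e]; exact h
  exact (completeSpace_coe_iff_isComplete.mp h2).isClosed

end Aux

/-- If `H` is h-complete and MAP and `N` is a closed normal h-complete
subgroup, then `H ⧸ N` is MAP. -/
theorem stmt13 (H : Type u) [Group H] [TopologicalSpace H] [IsTopologicalGroup H] [T2Space H]
    (hh : HComplete H) (hmap : MAP H)
    (N : Subgroup H) [N.Normal] (hcl : IsClosed (N : Set H)) (hN : HComplete N) :
    MAP (H ⧸ N) := by
  obtain ⟨K, _, _, _, _, _, f, hfc, hfi⟩ := hmap
  -- The range of `f` is a complete, hence closed, hence compact subgroup of `K`.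
  set g : H →* f.range := f.rangeRestrict with hg
  have hgc : Continuous g := hfc.subtype_mk _
  have hgs : Function.Surjective g := f.rangeRestrict_surjective
  have hgi : Function.Injective g := fun a b hab => hfi congr(Subtype.val $hab)
  have hRcomplete := hh f.range g hgc hgs
  have hRclosed : IsClosed (f.range : Set K) :=
    isClosed_of_group_completeSpace _ hRcomplete
  haveI : CompactSpace f.range := isCompact_iff_compactSpace.mp hRclosed.isCompact
  -- The image of `N` is a closed normal subgroup of the compact group `f.range`.
  set φ : N →* f.range := g.comp N.subtype with hφ
  have hφc : Continuous φ := hgc.comp continuous_subtype_val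
  have hrange : φ.range = N.map g := by
    rw [hφ, MonoidHom.range_comp, Subgroup.range_subtype]
  haveI hMn : φ.range.Normal := by
    rw [hrange]; exact Subgroup.Normal.map inferInstance g hgs
  have hMcomplete := hN φ.range φ.rangeRestrict (hφc.subtype_mk _)
    φ.rangeRestrict_surjective
  haveI hMclosed : IsClosed (φ.range : Set f.range) :=
    isClosed_of_group_completeSpace _ hMcomplete
  -- The quotient is a compact Hausdorff group.
  refine ⟨f.range ⧸ φ.range, inferInstance, inferInstance, inferInstance,
    inferInstance, inferInstance, ?_⟩
  have hker : ∀ x ∈ N, (QuotientGroup.mk' φ.range).comp g x = 1 := by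
    intro x hx
    refine (QuotientGroup.eq_one_iff _).mpr ⟨⟨x, hx⟩, rfl⟩
  refine ⟨QuotientGroup.lift N ((QuotientGroup.mk' φ.range).comp g) hker, ?_, ?_⟩
  · rw [isQuotientMap_quotient_mk'.continuous_iff]
    exact continuous_quot_mk.comp hgc
  · rw [injective_iff_map_eq_one]
    intro a ha
    obtain ⟨x, rfl⟩ := QuotientGroup.mk_surjective a
    change (QuotientGroup.mk' φ.range).comp g x = 1 at ha
    have hx : g x ∈ φ.range := (QuotientGroup.eq_one_iff _).mp ha
    obtain ⟨⟨n, hn⟩, hnx⟩ := hx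
    have : n = x := hgi hnx
    exact (QuotientGroup.eq_one_iff _).mpr (this ▸ hn)
end
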